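/- arXiv:1912.03757 — 9 statements merged into one kernel-verified Lean document; each statement's English description precedes it below -/
import Mathlib

section
/- Let A be a Young function and let ξ be a nonzero real number such that ∫_0^c A(s) s^{1/ξ−1} ds < ∞ for some c>0. Define E_ξ(t) := |ξ|^{−1} t^{−1/ξ} ∫_0^t A(s) s^{1/ξ−1} ds for t∈(0,∞). Then E_ξ is a strictly increasing map of (0,∞) onto (0,∞); in particular E_ξ(t) = |ξ|^{−1} ∫_0^1 A(ts) s^{1/ξ−1} ds, E_ξ(t)→0 as t→0+ and E_ξ(t)→∞ as t→∞. -/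
open MeasureTheory Filter Set Real Topology
open scoped ENNReal

noncomputable section

/-- `A` is a Young function with density `a`: `a` is nonnegative (forced by `a 0 = 0` and
monotonicity), vanishes at `0`, is positive on `(0,∞)`, nondecreasing on `[0,∞)`,
right-continuous, tends to infinity, and `A t = ∫₀ᵗ a`. -/
def IsYoungWith (A a : ℝ → ℝ) : Prop :=
  a 0 = 0 ∧ (∀ s, 0 < s → 0 < a s) ∧
  MonotoneOn a (Set.Ici 0) ∧
  (∀ s, 0 ≤ s → ContinuousWithinAt a (Set.Ici s) s) ∧
  Filter.Tendsto a Filter.atTop Filter.atTop ∧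
  (∀ t, 0 ≤ t → A t = ∫ s in (0:ℝ)..t, a s)

/-- `A` is a Young function. -/
def IsYoung (A : ℝ → ℝ) : Prop := ∃ a, IsYoungWith A a

/-- `E_ξ(t) = |ξ|⁻¹ t^{-1/ξ} ∫₀ᵗ A(s) s^{1/ξ-1} ds`. -/
def Efun (A : ℝ → ℝ) (ξ : ℝ) (t : ℝ) : ℝ :=
  |ξ|⁻¹ * t ^ (-(1/ξ)) * ∫ s in Set.Ioo (0:ℝ) t, A s * s ^ (1/ξ - 1)

theorem statement0 (A : ℝ → ℝ) (hA : IsYoung A) (ξ : ℝ) (hξ : ξ ≠ 0)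
    (c : ℝ) (hc : 0 < c)
    (hconv : MeasureTheory.IntegrableOn (fun s => A s * s ^ (1/ξ - 1)) (Set.Ioo 0 c)) :
    StrictMonoOn (Efun A ξ) (Set.Ioi 0) ∧
    Efun A ξ '' Set.Ioi 0 = Set.Ioi 0 ∧
    (∀ t, 0 < t → Efun A ξ t = |ξ|⁻¹ * ∫ s in Set.Ioo (0:ℝ) 1, A (t * s) * s ^ (1/ξ - 1)) ∧
    Filter.Tendsto (Efun A ξ) (nhdsWithin 0 (Set.Ioi 0)) (nhds 0) ∧
    Filter.Tendsto (Efun A ξ) Filter.atTop Filter.atTop := by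
  obtain ⟨a, ha0, hapos, hamono, hacont, hatop, hAeq⟩ := hA
  -- ### Basic facts about `a` and `A`
  have hanonneg : ∀ s, 0 ≤ s → 0 ≤ a s := fun s hs => ha0 ▸ hamono (le_refl (0:ℝ)) hs hs
  have haint : ∀ x y : ℝ, 0 ≤ x → 0 ≤ y → IntervalIntegrable a volume x y := by
    intro x y hx hy
    refine (hamono.mono ?_).intervalIntegrable
    intro z hz
    exact le_trans (le_min hx hy) (by simpa [Set.uIcc] using hz.1)
  have hAadd : ∀ u v : ℝ, 0 ≤ u → u ≤ v → A v = A u + ∫ s in u..v, a s := by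
    intro u v hu huv
    rw [hAeq u hu, hAeq v (hu.trans huv)]
    exact (intervalIntegral.integral_add_adjacent_intervals (haint 0 u le_rfl hu)
      (haint u v hu (hu.trans huv))).symm
  have hIlow : ∀ u v : ℝ, 0 ≤ u → u ≤ v → (v - u) * a u ≤ ∫ s in u..v, a s := by
    intro u v hu huv
    have := intervalIntegral.integral_mono_on (μ := volume) (f := fun _ => a u) (g := a) huv
      (intervalIntegrable_const) (haint u v hu (hu.trans huv))
      (fun x hx => hamono hu (hu.trans hx.1) hx.1)
    simpa using this
  have hInonneg : ∀ u v : ℝ, 0 ≤ u → u ≤ v → (0:ℝ) ≤ ∫ s in u..v, a s := by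
    intro u v hu huv
    exact intervalIntegral.integral_nonneg huv (fun x hx => hanonneg x (hu.trans hx.1))
  have hA0 : A 0 = 0 := by simpa using hAeq 0 le_rfl
  have hAmono : ∀ u v : ℝ, 0 ≤ u → u ≤ v → A u ≤ A v := by
    intro u v hu huv
    rw [hAadd u v hu huv]
    linarith [hInonneg u v hu huv]
  have hAnonneg : ∀ t, 0 ≤ t → 0 ≤ A t := fun t ht => hA0 ▸ hAmono 0 t le_rfl ht
  have hApos : ∀ t, 0 < t → 0 < A t := by
    intro t ht
    have h2 : (0:ℝ) ≤ t/2 := by linarith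
    rw [hAadd (t/2) t h2 (by linarith)]
    have := hIlow (t/2) t h2 (by linarith)
    have h3 : 0 < a (t/2) := hapos _ (by linarith)
    nlinarith [hAnonneg (t/2) h2]
  have hAstrict : ∀ u v : ℝ, 0 < u → u < v → A u < A v := by
    intro u v hu huv
    rw [hAadd u v hu.le huv.le]
    have := hIlow u v hu.le huv.le
    nlinarith [hapos u hu]
  have hAlow : ∀ u : ℝ, 0 ≤ u → (u - u/2) * a (u/2) ≤ A u := by
    intro u hu
    have h2 : (0:ℝ) ≤ u/2 := by linarith
    rw [hAadd (u/2) u h2 (by linarith)]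
    have := hIlow (u/2) u h2 (by linarith)
    have := hAnonneg (u/2) h2
    linarith
  have hAscale : ∀ l u : ℝ, 0 < l → l ≤ 1 → 0 ≤ u → A (l*u) ≤ l * A u := by
    intro l u hl hl1 hu
    have hlu : 0 ≤ l * u := mul_nonneg hl.le hu
    have e1 : (∫ x in (0:ℝ)..u, a (l*x)) = l⁻¹ • ∫ x in (l*0)..(l*u), a x :=
      intervalIntegral.integral_comp_mul_left a hl.ne'
    have e2 : A (l*u) = l * ∫ x in (0:ℝ)..u, a (l*x) := by
      rw [hAeq _ hlu, e1, mul_zero, smul_eq_mul, ← mul_assoc, mul_inv_cancel₀ hl.ne', one_mul]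
    have hcomp : IntervalIntegrable (fun x => a (l*x)) volume 0 u := by
      have h := (haint 0 (l*u) le_rfl hlu).comp_mul_left (c := l)
      have e : l * u / l = u := by field_simp
      simpa [zero_div, e] using h
    have e3 : (∫ x in (0:ℝ)..u, a (l*x)) ≤ ∫ x in (0:ℝ)..u, a x := by
      refine intervalIntegral.integral_mono_on hu hcomp (haint 0 u le_rfl hu) ?_
      intro x hx
      exact hamono (mul_nonneg hl.le hx.1) hx.1
        (by nlinarith [hx.1])
    rw [e2, hAeq u hu]
    exact mul_le_mul_of_nonneg_left e3 hl.le
  have hAcont : ∀ v : ℝ, 0 ≤ v → ContinuousOn A (Icc 0 v) := by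
    intro v hv
    have h1 : ContinuousOn (fun x => ∫ t in (0:ℝ)..x, a t) (uIcc 0 v) :=
      intervalIntegral.continuousOn_primitive_interval' (haint 0 v le_rfl hv) left_mem_uIcc
    rw [uIcc_of_le hv] at h1
    exact ContinuousOn.congr h1 (fun x hx => hAeq x hx.1)
  -- ### Integrability of the integrand
  set f : ℝ → ℝ := fun s => A s * s ^ (1/ξ - 1) with hf
  have hfcont : ∀ u v : ℝ, 0 < u → ContinuousOn f (Icc u v) := by
    intro u v hu
    rcases le_or_gt u v with h | h
    · have hA' : ContinuousOn A (Icc u v) :=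
        (hAcont v (hu.le.trans h)).mono (Icc_subset_Icc hu.le le_rfl)
      refine hA'.mul (fun s hs => ?_)
      exact (Real.continuousAt_rpow_const s _
        (Or.inl (ne_of_gt (lt_of_lt_of_le hu hs.1)))).continuousWithinAt
    · rw [Icc_eq_empty h.not_ge]; exact continuousOn_empty _
  have hInt : ∀ t : ℝ, 0 < t → IntegrableOn f (Ioo 0 t) := by
    intro t ht
    rcases le_total t c with h | h
    · exact hconv.mono_set (Ioo_subset_Ioo le_rfl h)
    · have h2 : IntegrableOn f (Icc c t) := (hfcont c t hc).integrableOn_Icc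
      refine (hconv.union h2).mono_set ?_
      intro x hx
      rcases lt_or_ge x c with h3 | h3
      · exact Or.inl ⟨hx.1, h3⟩
      · exact Or.inr ⟨h3, hx.2.le⟩
  have hIntI : ∀ t : ℝ, 0 < t → IntervalIntegrable f volume 0 t := by
    intro t ht
    rw [intervalIntegrable_iff_integrableOn_Ioc_of_le ht.le]
    exact (hInt t ht).congr_set_ae Ioo_ae_eq_Ioc.symm
  have hFI : ∀ t : ℝ, 0 < t → (∫ s in Ioo (0:ℝ) t, f s) = ∫ s in (0:ℝ)..t, f s := by
    intro t ht
    rw [intervalIntegral.integral_of_le ht.le, integral_Ioc_eq_integral_Ioo]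
  -- ### Change of variables
  have hchg : ∀ t : ℝ, 0 < t →
      (∫ s in Ioo (0:ℝ) t, f s)
        = t ^ (1/ξ) * ∫ s in Ioo (0:ℝ) 1, A (t*s) * s ^ (1/ξ - 1) := by
    intro t ht
    have e1 : (∫ x in (0:ℝ)..1, f (t*x)) = t⁻¹ • ∫ x in (t*0)..(t*1), f x :=
      intervalIntegral.integral_comp_mul_left f ht.ne'
    have e2 : (∫ s in (0:ℝ)..t, f s) = t * ∫ x in (0:ℝ)..1, f (t*x) := by
      rw [e1, mul_zero, mul_one, smul_eq_mul, ← mul_assoc, mul_inv_cancel₀ ht.ne', one_mul]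
    have e3 : (∫ x in (0:ℝ)..1, f (t*x)) = ∫ x in Ioo (0:ℝ) 1, f (t*x) := by
      rw [intervalIntegral.integral_of_le zero_le_one, integral_Ioc_eq_integral_Ioo]
    have e4 : (∫ x in Ioo (0:ℝ) 1, f (t*x))
        = ∫ x in Ioo (0:ℝ) 1, t ^ (1/ξ - 1) * (A (t*x) * x ^ (1/ξ - 1)) := by
      refine setIntegral_congr_fun measurableSet_Ioo (fun x hx => ?_)
      simp only [hf]
      rw [Real.mul_rpow ht.le hx.1.le]
      ring
    have e5 : (∫ x in Ioo (0:ℝ) 1, t ^ (1/ξ - 1) * (A (t*x) * x ^ (1/ξ - 1)))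
        = t ^ (1/ξ - 1) * ∫ x in Ioo (0:ℝ) 1, A (t*x) * x ^ (1/ξ - 1) :=
      integral_const_mul _ _
    have e6 : t ^ (1/ξ) = t * t ^ (1/ξ - 1) := by
      have h := Real.rpow_one_add' (x := t) (y := 1/ξ - 1) ht.le
        (by rw [show (1:ℝ)+(1/ξ-1) = 1/ξ by ring]; exact one_div_ne_zero hξ)
      rw [show (1:ℝ)+(1/ξ-1) = 1/ξ by ring] at h
      exact h
    rw [hFI t ht, e2, e3, e4, e5, e6, mul_assoc]
  -- ### `Efun` in terms of `G t = ∫ s in Ioo 0 1, A (t*s) * s ^ (1/ξ - 1)`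
  have habs : (0:ℝ) < |ξ|⁻¹ := inv_pos.2 (abs_pos.2 hξ)
  have hEG : ∀ t : ℝ, 0 < t →
      Efun A ξ t = |ξ|⁻¹ * ∫ s in Ioo (0:ℝ) 1, A (t*s) * s ^ (1/ξ - 1) := by
    intro t ht
    have h0 : t ^ (-(1/ξ)) * t ^ (1/ξ) = 1 := by
      rw [← Real.rpow_add ht]; simp
    rw [Efun, hchg t ht, mul_assoc, ← mul_assoc (t ^ (-(1/ξ))), h0, one_mul]
  have hGint : ∀ t : ℝ, 0 < t →
      IntegrableOn (fun s => A (t*s) * s ^ (1/ξ - 1)) (Ioo (0:ℝ) 1) := by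
    intro t ht
    have h1 := (hIntI t ht).comp_mul_left (c := t)
    have e : t / t = 1 := div_self ht.ne'
    rw [zero_div, e, intervalIntegrable_iff_integrableOn_Ioc_of_le zero_le_one] at h1
    have h2 : IntegrableOn (fun x => t ^ (-(1/ξ - 1)) * (A (t*x) * (t*x) ^ (1/ξ - 1)))
        (Ioo (0:ℝ) 1) := (h1.congr_set_ae Ioo_ae_eq_Ioc).const_mul _
    refine h2.congr_fun (fun x hx => ?_) measurableSet_Ioo
    beta_reduce
    rw [Real.mul_rpow ht.le hx.1.le, Real.rpow_neg ht.le]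
    field_simp
  have hGposgen : ∀ g h : ℝ → ℝ, IntegrableOn g (Ioo (0:ℝ) 1) → IntegrableOn h (Ioo (0:ℝ) 1) →
      (∀ x ∈ Ioo (0:ℝ) 1, g x < h x) →
      (∫ s in Ioo (0:ℝ) 1, g s) < ∫ s in Ioo (0:ℝ) 1, h s := by
    intro g h hg hh hlt
    have key : 0 < ∫ s in Ioo (0:ℝ) 1, (h s - g s) := by
      refine (setIntegral_pos_iff_support_of_nonneg_ae ?_ ?_).2 ?_
      · filter_upwards [ae_restrict_mem measurableSet_Ioo] with x hx
        simpa using sub_nonneg.2 (hlt x hx).le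
      · exact hh.sub hg
      have hsub : Ioo (0:ℝ) 1 ⊆ Function.support (fun s => h s - g s) ∩ Ioo 0 1 :=
        fun x hx => ⟨sub_ne_zero.2 (hlt x hx).gt.ne', hx⟩
      have h0 : (0:ENNReal) < volume (Ioo (0:ℝ) 1) := by simp [Real.volume_Ioo]
      exact lt_of_lt_of_le h0 (measure_mono hsub)
    have := integral_sub hh hg
    rw [this] at key
    linarith
  have hEpos : ∀ t : ℝ, 0 < t → 0 < Efun A ξ t := by
    intro t ht
    rw [hEG t ht]
    refine mul_pos habs ?_
    have h0 : (∫ s in Ioo (0:ℝ) 1, (0:ℝ)) < ∫ s in Ioo (0:ℝ) 1, A (t*s) * s ^ (1/ξ - 1) := by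
      refine hGposgen _ _ (integrableOn_const (by simp [Real.volume_Ioo]))
        (hGint t ht) ?_
      intro x hx
      exact mul_pos (hApos _ (mul_pos ht hx.1)) (Real.rpow_pos_of_pos hx.1 _)
    simpa using h0
  -- ### Strict monotonicity
  have hmono : StrictMonoOn (Efun A ξ) (Set.Ioi 0) := by
    intro t1 ht1 t2 ht2 h12
    rw [mem_Ioi] at ht1 ht2
    rw [hEG t1 ht1, hEG t2 ht2]
    refine mul_lt_mul_of_pos_left ?_ habs
    refine hGposgen _ _ (hGint t1 ht1) (hGint t2 ht2) ?_
    intro x hx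
    have : A (t1 * x) < A (t2 * x) :=
      hAstrict _ _ (mul_pos ht1 hx.1) (by nlinarith [hx.1])
    exact mul_lt_mul_of_pos_right this (Real.rpow_pos_of_pos hx.1 _)
  -- ### Limit at 0⁺
  have h4 : Filter.Tendsto (Efun A ξ) (nhdsWithin 0 (Set.Ioi 0)) (nhds 0) := by
    set K := ∫ s in Ioo (0:ℝ) 1, A (c*s) * s ^ (1/ξ - 1) with hK
    have hbound : ∀ t : ℝ, 0 < t → t ≤ c → Efun A ξ t ≤ |ξ|⁻¹ * ((t/c) * K) := by
      intro t ht htc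
      rw [hEG t ht]
      refine mul_le_mul_of_nonneg_left ?_ habs.le
      have e1 : (∫ s in Ioo (0:ℝ) 1, A (t*s) * s ^ (1/ξ - 1))
          ≤ ∫ s in Ioo (0:ℝ) 1, (t/c) * (A (c*s) * s ^ (1/ξ - 1)) := by
        refine setIntegral_mono_on (hGint t ht) ((hGint c hc).const_mul _) measurableSet_Ioo ?_
        intro x hx
        have h1 : A (t*x) ≤ (t/c) * A (c*x) := by
          have := hAscale (t/c) (c*x) (div_pos ht hc) (div_le_one_of_le₀ htc hc.le)
            (mul_nonneg hc.le hx.1.le)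
          rwa [show t/c*(c*x) = t*x by field_simp] at this
        calc A (t*x) * x ^ (1/ξ - 1) ≤ ((t/c) * A (c*x)) * x ^ (1/ξ - 1) :=
              mul_le_mul_of_nonneg_right h1 (Real.rpow_pos_of_pos hx.1 _).le
          _ = (t/c) * (A (c*x) * x ^ (1/ξ - 1)) := by ring
      rw [integral_const_mul] at e1
      exact e1
    have hupper : Tendsto (fun t => |ξ|⁻¹ * ((t/c) * K)) (nhdsWithin 0 (Set.Ioi 0)) (nhds 0) := by
      have h1 : Tendsto (fun t : ℝ => |ξ|⁻¹ * ((t/c) * K)) (nhds 0)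
          (nhds (|ξ|⁻¹ * ((0/c) * K))) :=
        (continuous_const.mul ((continuous_id.div_const c).mul continuous_const)).tendsto 0
      rw [zero_div, zero_mul, mul_zero] at h1
      exact h1.mono_left nhdsWithin_le_nhds
    refine tendsto_of_tendsto_of_tendsto_of_le_of_le' tendsto_const_nhds hupper ?_ ?_
    · filter_upwards [self_mem_nhdsWithin] with t ht
      exact (hEpos t ht).le
    · filter_upwards [Ioc_mem_nhdsGT_of_mem ⟨le_rfl, hc⟩] with t ht
      exact hbound t ht.1 ht.2
  -- ### Limit at ∞
  have h5 : Filter.Tendsto (Efun A ξ) Filter.atTop Filter.atTop := by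
    have hAtop : Tendsto A atTop atTop := by
      have h1 : Tendsto (fun u : ℝ => a (u/2)) atTop atTop :=
        hatop.comp (tendsto_id.atTop_div_const two_pos)
      refine tendsto_atTop_mono' _ ?_ h1
      filter_upwards [eventually_ge_atTop (2:ℝ)] with u hu
      have := hAlow u (by linarith)
      have h2 : a (u/2) ≤ (u - u/2) * a (u/2) := by
        nlinarith [hanonneg (u/2) (by linarith : (0:ℝ) ≤ u/2)]
      linarith
    obtain ⟨m, hm, hms⟩ : ∃ m : ℝ, 0 < m ∧ ∀ s : ℝ, s ∈ Icc (1/2:ℝ) 1 → m ≤ s ^ (1/ξ - 1) := by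
      rcases le_or_gt 0 (1/ξ - 1) with h | h
      · refine ⟨(1/2:ℝ) ^ (1/ξ - 1), Real.rpow_pos_of_pos one_half_pos _, fun s hs => ?_⟩
        exact Real.rpow_le_rpow one_half_pos.le hs.1 h
      · refine ⟨1, one_pos, fun s hs => ?_⟩
        have := Real.rpow_le_rpow_of_nonpos (lt_of_lt_of_le one_half_pos hs.1) hs.2 h.le
        simpa using this
    have hElow : ∀ t : ℝ, 0 < t → |ξ|⁻¹ * ((1/2) * (A (t/2) * m)) ≤ Efun A ξ t := by
      intro t ht
      rw [hEG t ht]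
      refine mul_le_mul_of_nonneg_left ?_ habs.le
      have hsub : Ioo (1/2:ℝ) 1 ⊆ Ioo (0:ℝ) 1 := Ioo_subset_Ioo (by norm_num) le_rfl
      have e1 : (∫ s in Ioo (1/2:ℝ) 1, A (t*s) * s ^ (1/ξ - 1))
          ≤ ∫ s in Ioo (0:ℝ) 1, A (t*s) * s ^ (1/ξ - 1) := by
        refine setIntegral_mono_set (hGint t ht) ?_ (HasSubset.Subset.eventuallyLE hsub)
        filter_upwards [ae_restrict_mem measurableSet_Ioo] with x hx
        exact mul_nonneg (hAnonneg _ (mul_nonneg ht.le hx.1.le))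
          (Real.rpow_pos_of_pos hx.1 _).le
      have e2 : (∫ s in Ioo (1/2:ℝ) 1, A (t/2) * m)
          ≤ ∫ s in Ioo (1/2:ℝ) 1, A (t*s) * s ^ (1/ξ - 1) := by
        refine setIntegral_mono_on (integrableOn_const (by simp [Real.volume_Ioo]))
          ((hGint t ht).mono_set hsub) measurableSet_Ioo ?_
        intro x hx
        have h1 : A (t/2) ≤ A (t*x) := by
          refine hAmono _ _ (by linarith) (by nlinarith [hx.1, hx.2])
        refine mul_le_mul h1 (hms x ⟨hx.1.le, hx.2.le⟩) hm.le
          (hAnonneg _ (mul_nonneg ht.le (by linarith [hx.1] : (0:ℝ) ≤ x)))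
      have e3 : (∫ _s in Ioo (1/2:ℝ) 1, A (t/2) * m) = (1/2) * (A (t/2) * m) := by
        rw [setIntegral_const]
        simp [Real.volume_Ioo]
        norm_num
      linarith
    have h1 : Tendsto (fun t : ℝ => |ξ|⁻¹ * ((1/2) * (A (t/2) * m))) atTop atTop := by
      refine Tendsto.const_mul_atTop habs ?_
      refine Tendsto.const_mul_atTop one_half_pos ?_
      exact (hAtop.comp (tendsto_id.atTop_div_const two_pos)).atTop_mul_const hm
    refine tendsto_atTop_mono' _ ?_ h1
    filter_upwards [eventually_gt_atTop (0:ℝ)] with t ht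
    exact hElow t ht
  -- ### Image
  have himage : Efun A ξ '' Set.Ioi 0 = Set.Ioi 0 := by
    apply Subset.antisymm
    · rintro y ⟨t, ht, rfl⟩
      exact hEpos t ht
    intro y hy
    rw [mem_Ioi] at hy
    obtain ⟨t1, ht1y, ht1⟩ := ((h4.eventually (gt_mem_nhds hy)).and self_mem_nhdsWithin).exists
    obtain ⟨t2, hyt2, ht12⟩ := ((h5.eventually_gt_atTop y).and (eventually_ge_atTop (t1+1))).exists
    have ht1' : (0:ℝ) < t1 := ht1
    have ht1t2 : t1 < t2 := by linarith
    have ht2 : (0:ℝ) < t2 := by linarith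
    have hcont : ContinuousOn (Efun A ξ) (Icc t1 t2) := by
      have hprim : ContinuousOn (fun t => ∫ x in t1..t, f x) (Icc t1 t2) := by
        have h := intervalIntegral.continuousOn_primitive_interval'
          (μ := volume) (b₁ := t1) (b₂ := t2) (a := t1)
          (((hIntI t2 ht2).mono_set (by
            rw [uIcc_of_le ht2.le, uIcc_of_le ht1t2.le]
            exact Icc_subset_Icc ht1'.le le_rfl))) left_mem_uIcc
        rwa [uIcc_of_le ht1t2.le] at h
      have hFcont : ContinuousOn (fun t => ∫ s in Ioo (0:ℝ) t, f s) (Icc t1 t2) := by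
        have heq : ∀ t ∈ Icc t1 t2, (∫ s in Ioo (0:ℝ) t, f s)
            = (∫ s in Ioo (0:ℝ) t1, f s) + ∫ x in t1..t, f x := by
          intro t htm
          have h0t : 0 < t := lt_of_lt_of_le ht1' htm.1
          have hadj : IntervalIntegrable f volume t1 t :=
            (hIntI t h0t).mono_set (by
              rw [uIcc_of_le h0t.le, uIcc_of_le htm.1]
              exact Icc_subset_Icc ht1'.le le_rfl)
          rw [hFI t h0t, hFI t1 ht1',
            ← intervalIntegral.integral_add_adjacent_intervals (hIntI t1 ht1') hadj]
        exact ContinuousOn.congr (continuousOn_const.add hprim) heq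
      have hrpow : ContinuousOn (fun t : ℝ => |ξ|⁻¹ * t ^ (-(1/ξ))) (Icc t1 t2) := by
        refine continuousOn_const.mul (fun t htm => ?_)
        exact (Real.continuousAt_rpow_const t _
          (Or.inl (ne_of_gt (lt_of_lt_of_le ht1' htm.1)))).continuousWithinAt
      exact hrpow.mul hFcont
    have hsub := intermediate_value_Icc ht1t2.le hcont
    have hymem : y ∈ Icc (Efun A ξ t1) (Efun A ξ t2) := ⟨ht1y.le, hyt2.le⟩
    obtain ⟨t, htm, hEt⟩ := hsub hymem
    exact ⟨t, lt_of_lt_of_le ht1' htm.1, hEt⟩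
  exact ⟨hmono, himage, fun t ht => hEG t ht, h4, h5⟩
end
end

section
/- Let A be a Young function, ξ<0, R∈(0,∞) and ε∈(0,R), and assume ∫_0^c A(s) s^{1/ξ−1} ds < ∞ for some c>0. Then there exists a constant C≥1 such that for every a∈(0,R−ε): ‖t^ξ χ_{(a,R)}(t)‖_{L^A(0,R)} ≤ ‖t^ξ χ_{(a,∞)}(t)‖_{L^A(0,∞)} ≤ C·‖t^ξ χ_{(a,R)}(t)‖_{L^A(0,R)}. -/
open MeasureTheory Filter Set Real Topology
open scoped ENNReal

noncomputable section

section Baux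
variable {a : ℝ → ℝ}

lemma a_nn (ha0 : a 0 = 0) (hapos : ∀ s, 0 < s → 0 < a s) (s : ℝ) (hs : 0 ≤ s) : 0 ≤ a s := by
  rcases eq_or_lt_of_le hs with h | h
  · simp [← h, ha0]
  · exact (hapos s h).le

lemma a_ii (hamono : MonotoneOn a (Set.Ici 0)) (x : ℝ) (hx : 0 ≤ x) :
    IntervalIntegrable a volume 0 x := by
  apply MonotoneOn.intervalIntegrable
  apply hamono.mono
  rw [Set.uIcc_of_le hx]
  exact Set.Icc_subset_Ici_self

lemma B_nonneg (ha0 : a 0 = 0) (hapos : ∀ s, 0 < s → 0 < a s) (x : ℝ) (hx : 0 ≤ x) :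
    0 ≤ ∫ s in (0:ℝ)..x, a s :=
  intervalIntegral.integral_nonneg hx (fun u hu => a_nn ha0 hapos u hu.1)

lemma B_mono (ha0 : a 0 = 0) (hapos : ∀ s, 0 < s → 0 < a s)
    (hamono : MonotoneOn a (Set.Ici 0)) {x y : ℝ} (hx : 0 ≤ x) (hxy : x ≤ y) :
    (∫ s in (0:ℝ)..x, a s) ≤ ∫ s in (0:ℝ)..y, a s := by
  have h1 : IntervalIntegrable a volume 0 x := a_ii hamono x hx
  have h2 : IntervalIntegrable a volume x y := by
    apply MonotoneOn.intervalIntegrable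
    apply hamono.mono
    rw [Set.uIcc_of_le hxy]
    exact fun u hu => hx.trans hu.1
  have hadd := intervalIntegral.integral_add_adjacent_intervals h1 h2
  have h3 : 0 ≤ ∫ s in x..y, a s :=
    intervalIntegral.integral_nonneg hxy (fun u hu => a_nn ha0 hapos u (hx.trans hu.1))
  linarith

/-- "convexity": scaling inequality -/
lemma B_scale (ha0 : a 0 = 0) (hapos : ∀ s, 0 < s → 0 < a s)
    (hamono : MonotoneOn a (Set.Ici 0)) {C x : ℝ} (hC : 1 ≤ C) (hx : 0 ≤ x) :
    (∫ s in (0:ℝ)..(x / C), a s) ≤ (∫ s in (0:ℝ)..x, a s) / C := by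
  have hC0 : 0 < C := lt_of_lt_of_le one_pos hC
  rw [le_div_iff₀ hC0, mul_comm]
  have hsub : (∫ s in (0:ℝ)..x, a (s / C)) = C * ∫ s in (0:ℝ)..(x / C), a s := by
    rw [intervalIntegral.integral_comp_div (fun s => a s) hC0.ne']
    simp [smul_eq_mul]
  rw [← hsub]
  apply intervalIntegral.integral_mono_on hx
  · apply MonotoneOn.intervalIntegrable
    intro u hu v hv huv
    rw [Set.uIcc_of_le hx, Set.mem_Icc] at hu hv
    exact hamono (Set.mem_Ici.2 (div_nonneg hu.1 hC0.le))
      (Set.mem_Ici.2 (div_nonneg hv.1 hC0.le)) (by gcongr)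
  · exact a_ii hamono x hx
  · intro u hu
    exact hamono (Set.mem_Ici.2 (div_nonneg hu.1 hC0.le)) (Set.mem_Ici.2 hu.1)
      (div_le_self hu.1 hC)

lemma B_le_lin (hamono : MonotoneOn a (Set.Ici 0)) {x : ℝ} (hx : 0 ≤ x) (hx1 : x ≤ 1) :
    (∫ s in (0:ℝ)..x, a s) ≤ x * a 1 := by
  have hcst : (∫ _ in (0:ℝ)..x, a 1) = x * a 1 := by simp [mul_comm]
  rw [← hcst]
  apply intervalIntegral.integral_mono_on hx (a_ii hamono x hx) intervalIntegrable_const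
  intro u hu
  exact hamono (Set.mem_Ici.2 hu.1) (Set.mem_Ici.2 zero_le_one) (hu.2.trans hx1)

lemma B_big (ha0 : a 0 = 0) (hapos : ∀ s, 0 < s → 0 < a s)
    (hamono : MonotoneOn a (Set.Ici 0))
    (hatop : Filter.Tendsto a Filter.atTop Filter.atTop) (K : ℝ) :
    ∃ M : ℝ, 0 < M ∧ ∀ s, M ≤ s → K ≤ ∫ u in (0:ℝ)..s, a u := by
  obtain ⟨t₀, hat₀, ht₀1⟩ :=
    ((hatop.eventually_ge_atTop (max K 1)).and (eventually_ge_atTop (1:ℝ))).exists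
  have ht₀0 : 0 < t₀ := lt_of_lt_of_le one_pos ht₀1
  refine ⟨2 * t₀, by positivity, fun s hs => ?_⟩
  have hs0 : (0:ℝ) ≤ 2 * t₀ := by positivity
  have h1 : (∫ u in (0:ℝ)..(2*t₀), a u) ≤ ∫ u in (0:ℝ)..s, a u :=
    B_mono ha0 hapos hamono hs0 hs
  have hii : IntervalIntegrable a volume t₀ (2*t₀) := by
    apply MonotoneOn.intervalIntegrable
    apply hamono.mono
    rw [Set.uIcc_of_le (by linarith)]
    exact fun u hu => ht₀0.le.trans hu.1
  have hadd := intervalIntegral.integral_add_adjacent_intervals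
    (a_ii hamono t₀ ht₀0.le) hii
  have h2 : t₀ * a t₀ ≤ ∫ u in t₀..(2*t₀), a u := by
    have hcst : (∫ _ in t₀..(2*t₀), a t₀) = t₀ * a t₀ := by
      rw [intervalIntegral.integral_const, smul_eq_mul]; ring
    rw [← hcst]
    apply intervalIntegral.integral_mono_on (by linarith) intervalIntegrable_const hii
    intro u hu
    exact hamono (Set.mem_Ici.2 ht₀0.le) (Set.mem_Ici.2 (ht₀0.le.trans hu.1)) hu.1
  have h3 : K ≤ t₀ * a t₀ := by
    calc K ≤ max K 1 := le_max_left _ _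
    _ = 1 * max K 1 := (one_mul _).symm
    _ ≤ t₀ * a t₀ := by
        apply mul_le_mul ht₀1 hat₀ (by positivity) ht₀0.le
  have h0 : 0 ≤ ∫ u in (0:ℝ)..t₀, a u := B_nonneg ha0 hapos t₀ ht₀0.le
  linarith

lemma B_contAt (hamono : MonotoneOn a (Set.Ici 0)) {y : ℝ} (hy : 0 < y) :
    ContinuousAt (fun x => ∫ s in (0:ℝ)..x, a s) y := by
  have hint : IntegrableOn a (Set.uIcc 0 (y + 1)) volume := by
    apply MonotoneOn.integrableOn_isCompact isCompact_uIcc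
    apply hamono.mono
    rw [Set.uIcc_of_le (by linarith)]
    exact fun u hu => hu.1
  have hco := intervalIntegral.continuousOn_primitive_interval hint
  have hmem : Set.uIcc 0 (y + 1) ∈ nhds y := by
    rw [Set.uIcc_of_le (by linarith)]
    exact Icc_mem_nhds hy (by linarith)
  exact (hco y (by rw [Set.uIcc_of_le (by linarith)]; constructor <;> linarith)).continuousAt hmem

lemma tail_integrable (hamono : MonotoneOn a (Set.Ici 0)) {ξ c R : ℝ}
    (hξ : ξ < 0) (hc : 0 < c) (hR : 0 < R)
    (hconv : IntegrableOn (fun x => (∫ s in (0:ℝ)..x, a s) * x ^ (1/ξ - 1)) (Set.Ioo 0 c)) :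
    IntegrableOn (fun t => ∫ s in (0:ℝ)..(t ^ ξ), a s) (Set.Ioi R) := by
  set B : ℝ → ℝ := fun y => ∫ s in (0:ℝ)..y, a s with hB
  set d : ℝ := R ^ ξ with hd
  have hd0 : 0 < d := Real.rpow_pos_of_pos hR ξ
  have hξ0 : ξ ≠ 0 := hξ.ne
  have hιξ : 1/ξ < 0 := by
    exact one_div_neg.mpr hξ
  -- integrability of B x * x^(1/ξ-1) on Ioo 0 d
  have h2 : IntegrableOn (fun x => B x * x ^ (1/ξ - 1)) (Set.Ioo 0 d) := by
    rcases le_or_gt d c with h | h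
    · exact hconv.mono_set (Set.Ioo_subset_Ioo_right h)
    · have hcompact : IntegrableOn (fun x => B x * x ^ (1/ξ - 1)) (Set.Icc c d) := by
        apply ContinuousOn.integrableOn_compact isCompact_Icc
        apply ContinuousOn.mul
        · intro x hx
          exact ((B_contAt hamono (hc.trans_le hx.1)).continuousWithinAt)
        · intro x hx
          exact (Real.continuousAt_rpow_const x _
            (Or.inl (hc.trans_le hx.1).ne')).continuousWithinAt
      apply IntegrableOn.mono_set (hconv.union hcompact)
      intro x hx
      rcases lt_or_ge x c with h' | h'
      · exact Or.inl ⟨hx.1, h'⟩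
      · exact Or.inr ⟨h', hx.2.le⟩
  set f : ℝ → ℝ := (Set.Ioi R).indicator (fun t => B (t ^ ξ)) with hf
  have hιξ0 : (1:ℝ)/ξ ≠ 0 := hιξ.ne
  have key : ∀ x ∈ Set.Ioi (0:ℝ),
      (Set.Ioo 0 d).indicator (fun x => |1/ξ| * (B x * x ^ (1/ξ - 1))) x
        = (|1/ξ| * x ^ (1/ξ - 1)) • f (x ^ (1/ξ)) := by
    intro x hx
    rw [Set.mem_Ioi] at hx
    have hxpow : (x ^ (1/ξ)) ^ ξ = x := by
      rw [one_div, Real.rpow_inv_rpow hx.le hξ0]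
    have hdpow : d ^ (1/ξ) = R := by
      rw [hd, one_div, Real.rpow_rpow_inv hR.le hξ0]
    rcases lt_or_ge x d with h | h
    · have hmem : x ^ (1/ξ) ∈ Set.Ioi R := by
        rw [Set.mem_Ioi, ← hdpow]
        exact (Real.rpow_lt_rpow_iff_of_neg hd0 hx hιξ).mpr h
      rw [Set.indicator_of_mem (Set.mem_Ioo.mpr ⟨hx, h⟩), hf, Set.indicator_of_mem hmem, hxpow,
        smul_eq_mul]
      ring
    · have hmem : x ^ (1/ξ) ∉ Set.Ioi R := by
        rw [Set.mem_Ioi, not_lt, ← hdpow]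
        rcases eq_or_lt_of_le h with h' | h'
        · rw [← h']
        · exact ((Real.rpow_lt_rpow_iff_of_neg hx hd0 hιξ).mpr h').le
      rw [Set.indicator_of_notMem (fun hmem' => absurd hmem'.2 (not_lt.mpr h)), hf,
        Set.indicator_of_notMem hmem, smul_zero]
  -- the transformed function is integrable on Ioi 0
  have h3 : IntegrableOn (fun x => (|1/ξ| * x ^ (1/ξ - 1)) • f (x ^ (1/ξ))) (Set.Ioi 0) := by
    have h4 : Integrable ((Set.Ioo 0 d).indicator
        (fun x => |1/ξ| * (B x * x ^ (1/ξ - 1)))) volume :=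
      (MeasureTheory.integrable_indicator_iff measurableSet_Ioo).mpr (h2.const_mul _)
    exact MeasureTheory.IntegrableOn.congr_fun (h4.integrableOn) key measurableSet_Ioi
  have h5 : IntegrableOn f (Set.Ioi 0) :=
    (MeasureTheory.integrableOn_Ioi_comp_rpow_iff f hιξ0).mp h3
  have h6 : IntegrableOn f (Set.Ioi R) := h5.mono_set (Set.Ioi_subset_Ioi hR.le)
  apply h6.congr_fun _ measurableSet_Ioi
  intro t ht
  rw [hf, Set.indicator_of_mem ht]

end Baux

/-- The Luxemburg norm of `f` in the Orlicz space `L^A(S)`. -/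
def luxNorm (A : ℝ → ℝ) (S : Set ℝ) (f : ℝ → ℝ) : ℝ :=
  sInf {lam : ℝ | 0 < lam ∧ (∫⁻ t in S, ENNReal.ofReal (A (|f t| / lam))) ≤ 1}

theorem statement3 (A : ℝ → ℝ) (hA : IsYoung A) (ξ : ℝ) (hξ : ξ < 0)
    (c : ℝ) (hc : 0 < c)
    (hconv : MeasureTheory.IntegrableOn (fun s => A s * s ^ (1/ξ - 1)) (Set.Ioo 0 c))
    (R ε : ℝ) (hR : 0 < R) (hε : ε ∈ Set.Ioo 0 R) :
    ∃ C : ℝ, 1 ≤ C ∧ ∀ a ∈ Set.Ioo (0:ℝ) (R - ε),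
      luxNorm A (Set.Ioo 0 R) ((Set.Ioo a R).indicator fun t => t ^ ξ)
          ≤ luxNorm A (Set.Ioi 0) ((Set.Ioi a).indicator fun t => t ^ ξ) ∧
      luxNorm A (Set.Ioi 0) ((Set.Ioi a).indicator fun t => t ^ ξ)
          ≤ C * luxNorm A (Set.Ioo 0 R) ((Set.Ioo a R).indicator fun t => t ^ ξ) := by
  obtain ⟨g, hg0, hgpos, hgmono, hgcont, hgtop, hAg⟩ := hA
  obtain ⟨hε0, hεR⟩ := hε
  set B : ℝ → ℝ := fun y => ∫ s in (0:ℝ)..y, g s with hBdef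
  have hBnn : ∀ x : ℝ, 0 ≤ x → 0 ≤ B x := B_nonneg hg0 hgpos
  have hBmono : ∀ {x y : ℝ}, 0 ≤ x → x ≤ y → B x ≤ B y :=
    fun hx hxy => B_mono hg0 hgpos hgmono hx hxy
  have hBscale : ∀ {C x : ℝ}, 1 ≤ C → 0 ≤ x → B (x / C) ≤ B x / C :=
    fun hC hx => B_scale hg0 hgpos hgmono hC hx
  -- hconv in terms of B
  have hconvB : IntegrableOn (fun x => B x * x ^ (1/ξ - 1)) (Set.Ioo 0 c) := by
    apply hconv.congr_fun _ measurableSet_Ioo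
    intro x hx
    dsimp only
    rw [hAg x hx.1.le]
  have hJint : IntegrableOn (fun t => B (t ^ ξ)) (Set.Ioi R) :=
    tail_integrable hgmono hξ hc hR hconvB
  set J : ℝ≥0∞ := ∫⁻ t in Set.Ici R, ENNReal.ofReal (B (t ^ ξ)) with hJdef
  have hJlt : J < ⊤ := by
    rw [hJdef, Measure.restrict_congr_set Ioi_ae_eq_Ici.symm]
    exact hJint.setLIntegral_lt_top
  have hJofReal : ENNReal.ofReal J.toReal = J := ENNReal.ofReal_toReal hJlt.ne
  have hJt0 : 0 ≤ J.toReal := ENNReal.toReal_nonneg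
  -- tail smallness
  have tail_small : ∀ μp : ℝ, 2 * J.toReal + 1 ≤ μp →
      (∫⁻ t in Set.Ici R, ENNReal.ofReal (B (t ^ ξ / μp))) ≤ ENNReal.ofReal (1/2) := by
    intro μp hμp
    have hμp1 : 1 ≤ μp := by linarith
    have hμp0 : 0 < μp := by linarith
    have step1 : (∫⁻ t in Set.Ici R, ENNReal.ofReal (B (t ^ ξ / μp)))
        ≤ ∫⁻ t in Set.Ici R, ENNReal.ofReal (B (t ^ ξ)) * ENNReal.ofReal (1/μp) := by
      apply setLIntegral_mono' measurableSet_Ici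
      intro t ht
      have ht0 : 0 < t := hR.trans_le ht
      have htξ : 0 ≤ t ^ ξ := (Real.rpow_pos_of_pos ht0 ξ).le
      calc ENNReal.ofReal (B (t ^ ξ / μp)) ≤ ENNReal.ofReal (B (t ^ ξ) / μp) :=
            ENNReal.ofReal_le_ofReal (hBscale hμp1 htξ)
        _ = ENNReal.ofReal (B (t ^ ξ)) * ENNReal.ofReal (1/μp) := by
            rw [← ENNReal.ofReal_mul (hBnn _ htξ), mul_one_div]
    rw [lintegral_mul_const' _ _ (by simp)] at step1
    refine step1.trans ?_
    calc J * ENNReal.ofReal (1/μp) = ENNReal.ofReal J.toReal * ENNReal.ofReal (1/μp) := by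
          rw [hJofReal]
      _ = ENNReal.ofReal (J.toReal * (1/μp)) := (ENNReal.ofReal_mul hJt0).symm
      _ ≤ ENNReal.ofReal (1/2) := by
          apply ENNReal.ofReal_le_ofReal
          rw [mul_one_div, div_le_div_iff₀ hμp0 two_pos]
          linarith
  -- lambda_min
  obtain ⟨M, hM0, hMB⟩ := B_big hg0 hgpos hgmono hgtop (2/ε)
  set lmin : ℝ := R ^ ξ / M with hlmindef
  have hRξ : 0 < R ^ ξ := Real.rpow_pos_of_pos hR ξ
  have hlmin0 : 0 < lmin := div_pos hRξ hM0
  set C : ℝ := max 2 ((2 * J.toReal + 1) / lmin) with hCdef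
  have hC2 : (2:ℝ) ≤ C := le_max_left _ _
  have hC1 : (1:ℝ) ≤ C := by linarith
  have hC0 : (0:ℝ) < C := by linarith
  have hClmin : 2 * J.toReal + 1 ≤ C * lmin := by
    rw [← div_le_iff₀ hlmin0] at *
    exact le_max_right _ _
  refine ⟨C, hC1, fun v hv => ?_⟩
  obtain ⟨hv0, hvRε⟩ := hv
  have hvR : v < R := by linarith
  set fI : ℝ → ℝ := (Set.Ioi v).indicator fun t => t ^ ξ with hfIdef
  set fR : ℝ → ℝ := (Set.Ioo v R).indicator fun t => t ^ ξ with hfRdef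
  set SR : Set ℝ :=
    {lam : ℝ | 0 < lam ∧ (∫⁻ t in Set.Ioo 0 R, ENNReal.ofReal (A (|fR t| / lam))) ≤ 1}
    with hSRdef
  set SI : Set ℝ :=
    {lam : ℝ | 0 < lam ∧ (∫⁻ t in Set.Ioi 0, ENNReal.ofReal (A (|fI t| / lam))) ≤ 1}
    with hSIdef
  have hvξ : 0 < v ^ ξ := Real.rpow_pos_of_pos hv0 ξ
  -- pointwise facts
  have hfeq : ∀ t ∈ Set.Ioo (0:ℝ) R, fR t = fI t := by
    intro t ht
    by_cases h : v < t
    · rw [hfRdef, hfIdef, Set.indicator_of_mem (Set.mem_Ioo.mpr ⟨h, ht.2⟩),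
        Set.indicator_of_mem (Set.mem_Ioi.mpr h)]
    · rw [hfRdef, hfIdef, Set.indicator_of_notMem (by simp [Set.mem_Ioo, h]),
        Set.indicator_of_notMem (by simpa using h)]
  have hfInn : ∀ t, 0 ≤ fI t := by
    intro t
    rw [hfIdef]
    apply Set.indicator_nonneg
    intro t ht
    exact (Real.rpow_pos_of_pos (hv0.trans ht) ξ).le
  have hfIle : ∀ t, fI t ≤ v ^ ξ := by
    intro t
    rw [hfIdef]
    by_cases h : v < t
    · rw [Set.indicator_of_mem (Set.mem_Ioi.mpr h)]
      exact (Real.rpow_le_rpow_iff_of_neg (hv0.trans h) hv0 hξ).mpr h.le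
    · rw [Set.indicator_of_notMem (by simpa using h)]
      exact hvξ.le
  have habsI : ∀ t ∈ Set.Ici R, |fI t| = t ^ ξ := by
    intro t ht
    rw [hfIdef, Set.indicator_of_mem (Set.mem_Ioi.mpr (hvR.trans_le ht)),
      abs_of_pos (Real.rpow_pos_of_pos (hv0.trans (hvR.trans_le ht)) ξ)]
  have hAB : ∀ x : ℝ, 0 ≤ x → A x = B x := hAg
  -- subset claim
  have hsub : SI ⊆ SR := by
    rintro lam ⟨hl0, hl⟩
    refine ⟨hl0, ?_⟩
    calc (∫⁻ t in Set.Ioo 0 R, ENNReal.ofReal (A (|fR t| / lam)))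
        = ∫⁻ t in Set.Ioo 0 R, ENNReal.ofReal (A (|fI t| / lam)) := by
          apply setLIntegral_congr_fun measurableSet_Ioo
          intro t ht
          simp only [hfeq t ht]
      _ ≤ ∫⁻ t in Set.Ioi 0, ENNReal.ofReal (A (|fI t| / lam)) :=
          lintegral_mono_set (fun t ht => ht.1)
      _ ≤ 1 := hl
  -- splitting of the integral over Ioi 0
  have hsplit : ∀ lam : ℝ, (∫⁻ t in Set.Ioi 0, ENNReal.ofReal (A (|fI t| / lam)))
      = (∫⁻ t in Set.Ioo 0 R, ENNReal.ofReal (A (|fI t| / lam)))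
        + ∫⁻ t in Set.Ici R, ENNReal.ofReal (A (|fI t| / lam)) := by
    intro lam
    rw [← Set.Ioo_union_Ici_eq_Ioi hR]
    apply lintegral_union measurableSet_Ici
    exact Set.disjoint_left.mpr fun t ht ht' => absurd ht.2 (not_lt.mpr ht')
  -- tail rewrite
  have htail : ∀ lam : ℝ, 0 < lam →
      (∫⁻ t in Set.Ici R, ENNReal.ofReal (A (|fI t| / lam)))
        = ∫⁻ t in Set.Ici R, ENNReal.ofReal (B (t ^ ξ / lam)) := by
    intro lam hlam
    apply setLIntegral_congr_fun measurableSet_Ici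
    intro t ht
    simp only [habsI t ht, hAB _ (div_nonneg (Real.rpow_pos_of_pos (hR.trans_le ht) ξ).le hlam.le)]
  -- lower bound for elements of SR
  have hRε0 : 0 < R - ε := by linarith
  have hlow : ∀ lam ∈ SR, lmin ≤ lam := by
    rintro lam ⟨hl0, hl⟩
    by_contra hlt
    push_neg at hlt
    have hkey : ∀ t ∈ Set.Ioo (R - ε) R,
        ENNReal.ofReal (2/ε) ≤ ENNReal.ofReal (A (|fR t| / lam)) := by
      intro t ht
      have ht0 : 0 < t := hRε0.trans ht.1
      have htmem : t ∈ Set.Ioo v R := ⟨by linarith [ht.1], ht.2⟩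
      have habs : |fR t| = t ^ ξ := by
        rw [hfRdef, Set.indicator_of_mem htmem, abs_of_pos (Real.rpow_pos_of_pos ht0 ξ)]
      have h1 : R ^ ξ ≤ t ^ ξ := (Real.rpow_le_rpow_iff_of_neg hR ht0 hξ).mpr ht.2.le
      have h2 : M ≤ t ^ ξ / lam := by
        have hM : R ^ ξ / lmin = M := by
          rw [hlmindef]
          field_simp
        calc M = R ^ ξ / lmin := hM.symm
          _ ≤ R ^ ξ / lam := by
              apply div_le_div_of_nonneg_left hRξ.le hl0 hlt.le
          _ ≤ t ^ ξ / lam := by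
              exact div_le_div_of_nonneg_right h1 hl0.le
      rw [habs, hAB _ (div_nonneg (Real.rpow_pos_of_pos ht0 ξ).le hl0.le)]
      exact ENNReal.ofReal_le_ofReal (hMB _ h2)
    have hbig : (2:ℝ≥0∞) ≤ 1 := by
      have hmul2 : (2/ε) * ε = 2 := by field_simp
      calc (2:ℝ≥0∞) = ENNReal.ofReal (2/ε) * ENNReal.ofReal ε := by
            rw [← ENNReal.ofReal_mul (by positivity), hmul2]
            norm_num
        _ = ENNReal.ofReal (2/ε) * volume (Set.Ioo (R-ε) R) := by
            rw [Real.volume_Ioo]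
            norm_num
        _ = ∫⁻ _ in Set.Ioo (R-ε) R, ENNReal.ofReal (2/ε) := (setLIntegral_const _ _).symm
        _ ≤ ∫⁻ t in Set.Ioo (R-ε) R, ENNReal.ofReal (A (|fR t| / lam)) :=
            setLIntegral_mono' measurableSet_Ioo hkey
        _ ≤ ∫⁻ t in Set.Ioo 0 R, ENNReal.ofReal (A (|fR t| / lam)) :=
            lintegral_mono_set (fun t ht => ⟨hRε0.trans ht.1, ht.2⟩)
        _ ≤ 1 := hl
    norm_num at hbig
  -- nonemptiness of SI
  have hg1 : 0 ≤ g 1 := a_nn hg0 hgpos 1 zero_le_one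
  set lam0 : ℝ := max (2 * J.toReal + 1) (v ^ ξ * (1 + 2 * R * g 1)) with hlam0def
  have hlam0pos : 0 < lam0 := lt_of_lt_of_le (by positivity) (le_max_right _ _)
  have hmemSI : lam0 ∈ SI := by
    refine ⟨hlam0pos, ?_⟩
    rw [hsplit lam0]
    have hB12 : B (v ^ ξ / lam0) ≤ 1 / (2 * R) := by
      have hden : (0:ℝ) < 1 + 2 * R * g 1 := by positivity
      have hy1 : v ^ ξ / lam0 ≤ 1 / (1 + 2 * R * g 1) := by
        rw [div_le_div_iff₀ hlam0pos hden, one_mul, mul_comm (v ^ ξ)]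
        calc (1 + 2 * R * g 1) * v ^ ξ = v ^ ξ * (1 + 2 * R * g 1) := mul_comm _ _
          _ ≤ lam0 := le_max_right _ _
      have hynn : 0 ≤ v ^ ξ / lam0 := div_nonneg hvξ.le hlam0pos.le
      calc B (v ^ ξ / lam0) ≤ (v ^ ξ / lam0) * g 1 :=
            B_le_lin hgmono hynn (hy1.trans (by
              rw [div_le_one hden]
              nlinarith [mul_nonneg hR.le hg1]))
        _ ≤ (1 / (1 + 2 * R * g 1)) * g 1 := by
            apply mul_le_mul_of_nonneg_right hy1 hg1
        _ ≤ 1 / (2 * R) := by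
            rw [div_mul_eq_mul_div, one_mul, div_le_div_iff₀ hden (by positivity)]
            nlinarith
    have hmain : (∫⁻ t in Set.Ioo 0 R, ENNReal.ofReal (A (|fI t| / lam0)))
        ≤ ENNReal.ofReal (1/2) := by
      calc (∫⁻ t in Set.Ioo 0 R, ENNReal.ofReal (A (|fI t| / lam0)))
          ≤ ∫⁻ _ in Set.Ioo 0 R, ENNReal.ofReal (B (v ^ ξ / lam0)) := by
            apply setLIntegral_mono' measurableSet_Ioo
            intro t ht
            apply ENNReal.ofReal_le_ofReal
            rw [abs_of_nonneg (hfInn t),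
              hAB _ (div_nonneg (hfInn t) hlam0pos.le)]
            apply hBmono (div_nonneg (hfInn t) hlam0pos.le)
            exact div_le_div_of_nonneg_right (hfIle t) hlam0pos.le
        _ = ENNReal.ofReal (B (v ^ ξ / lam0)) * volume (Set.Ioo 0 R) :=
            setLIntegral_const _ _
        _ ≤ ENNReal.ofReal (1/(2*R)) * ENNReal.ofReal R := by
            rw [Real.volume_Ioo, sub_zero]
            exact mul_le_mul' (ENNReal.ofReal_le_ofReal hB12) le_rfl
        _ = ENNReal.ofReal (1/2) := by
            rw [← ENNReal.ofReal_mul (by positivity)]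
            congr 1
            field_simp
    have htail' : (∫⁻ t in Set.Ici R, ENNReal.ofReal (A (|fI t| / lam0)))
        ≤ ENNReal.ofReal (1/2) := by
      rw [htail lam0 hlam0pos]
      exact tail_small lam0 (le_max_left _ _)
    calc _ ≤ ENNReal.ofReal (1/2) + ENNReal.ofReal (1/2) := add_le_add hmain htail'
      _ = 1 := by
          rw [← ENNReal.ofReal_add (by norm_num) (by norm_num)]
          norm_num
  -- the key multiplication claim
  have hmul : ∀ lam ∈ SR, C * lam ∈ SI := by
    rintro lam ⟨hl0, hl⟩
    have hCl0 : 0 < C * lam := mul_pos hC0 hl0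
    refine ⟨hCl0, ?_⟩
    rw [hsplit (C * lam)]
    have hmain : (∫⁻ t in Set.Ioo 0 R, ENNReal.ofReal (A (|fI t| / (C * lam))))
        ≤ ENNReal.ofReal (1/2) := by
      have step : (∫⁻ t in Set.Ioo 0 R, ENNReal.ofReal (A (|fI t| / (C * lam))))
          ≤ ∫⁻ t in Set.Ioo 0 R,
              ENNReal.ofReal (A (|fR t| / lam)) * ENNReal.ofReal (1/C) := by
        apply setLIntegral_mono' measurableSet_Ioo
        intro t ht
        have hxl : 0 ≤ |fR t| / lam := div_nonneg (abs_nonneg _) hl0.le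
        have h1 : |fI t| / (C * lam) = (|fR t| / lam) / C := by
          rw [hfeq t ht, div_div, mul_comm]
        rw [h1, hAB (|fR t| / lam / C) (div_nonneg hxl hC0.le), hAB (|fR t| / lam) hxl]
        calc ENNReal.ofReal (B (|fR t| / lam / C))
            ≤ ENNReal.ofReal (B (|fR t| / lam) / C) :=
              ENNReal.ofReal_le_ofReal (hBscale hC1 hxl)
          _ = ENNReal.ofReal (B (|fR t| / lam)) * ENNReal.ofReal (1/C) := by
              rw [← ENNReal.ofReal_mul (hBnn _ hxl), mul_one_div]
      rw [lintegral_mul_const' _ _ (by simp)] at step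
      refine step.trans ?_
      calc (∫⁻ t in Set.Ioo 0 R, ENNReal.ofReal (A (|fR t| / lam))) * ENNReal.ofReal (1/C)
          ≤ 1 * ENNReal.ofReal (1/C) := mul_le_mul' hl le_rfl
        _ = ENNReal.ofReal (1/C) := one_mul _
        _ ≤ ENNReal.ofReal (1/2) := ENNReal.ofReal_le_ofReal (by
            rw [div_le_div_iff₀ hC0 two_pos]
            linarith)
    have htail' : (∫⁻ t in Set.Ici R, ENNReal.ofReal (A (|fI t| / (C * lam))))
        ≤ ENNReal.ofReal (1/2) := by
      rw [htail _ hCl0]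
      have hmono : (∫⁻ t in Set.Ici R, ENNReal.ofReal (B (t ^ ξ / (C * lam))))
          ≤ ∫⁻ t in Set.Ici R, ENNReal.ofReal (B (t ^ ξ / (C * lmin))) := by
        apply setLIntegral_mono' measurableSet_Ici
        intro t ht
        apply ENNReal.ofReal_le_ofReal
        apply hBmono (div_nonneg (Real.rpow_pos_of_pos (hR.trans_le ht) ξ).le hCl0.le)
        apply div_le_div_of_nonneg_left (Real.rpow_pos_of_pos (hR.trans_le ht) ξ).le
          (mul_pos hC0 hlmin0)
        exact mul_le_mul_of_nonneg_left (hlow lam ⟨hl0, hl⟩) hC0.le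
      exact hmono.trans (tail_small _ hClmin)
    calc _ ≤ ENNReal.ofReal (1/2) + ENNReal.ofReal (1/2) := add_le_add hmain htail'
      _ = 1 := by
          rw [← ENNReal.ofReal_add (by norm_num) (by norm_num)]
          norm_num
  -- conclusion
  have hSIne : SI.Nonempty := ⟨lam0, hmemSI⟩
  have hSRne : SR.Nonempty := ⟨lam0, hsub hmemSI⟩
  have hbddR : BddBelow SR := ⟨0, fun x hx => hx.1.le⟩
  have hbddI : BddBelow SI := ⟨0, fun x hx => hx.1.le⟩
  have e1 : luxNorm A (Set.Ioo 0 R) fR = sInf SR := rfl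
  have e2 : luxNorm A (Set.Ioi 0) fI = sInf SI := rfl
  rw [e1, e2]
  constructor
  · exact csInf_le_csInf hbddR hSIne hsub
  · have h1 : ∀ lam ∈ SR, sInf SI ≤ C * lam := fun lam hlam => csInf_le hbddI (hmul lam hlam)
    have h2 : sInf SI / C ≤ sInf SR :=
      le_csInf hSRne fun lam hlam =>
        (div_le_iff₀ hC0).mpr (by rw [mul_comm]; exact h1 lam hlam)
    calc sInf SI = sInf SI / C * C := (div_mul_cancel₀ _ hC0.ne').symm
      _ ≤ sInf SR * C := mul_le_mul_of_nonneg_right h2 hC0.le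
      _ = C * sInf SR := mul_comm _ _
end
end

section
/- Let 0<α<1, β>0 with α+1/β≥1, and let φ be a quasiconcave function on [0,1). Define φ̄(t) := t^{β(1−α)} · sup_{t<s<1} φ(s) s^{β(α−1)} for t∈(0,1) and φ̄(0)=0. Then φ̄ is quasiconcave on [0,1), and the function t ↦ φ̄(t^{1/β}) t^{α} is quasiconcave on [0,1) and strictly increasing on (0,1). -/
open MeasureTheory Filter Set Real Topology
open scoped ENNReal

noncomputable section

/-- A quasiconcave function on `[0,1)`: it vanishes exactly at `0`, is nonnegative and
nondecreasing, and `t ↦ φ(t)/t` is nonincreasing on `(0,1)`. -/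
def QuasiconcaveOn01 (φ : ℝ → ℝ) : Prop :=
  φ 0 = 0 ∧ (∀ t ∈ Set.Ioo (0:ℝ) 1, 0 < φ t) ∧
  (∀ t ∈ Set.Ico (0:ℝ) 1, 0 ≤ φ t) ∧
  MonotoneOn φ (Set.Ioo 0 1) ∧
  AntitoneOn (fun t => φ t / t) (Set.Ioo 0 1)

/-- `φ̄(t) = t^{β(1-α)} ⬝ sup_{t<s<1} φ(s) s^{β(α-1)}` (with `φ̄(0)=0`). -/
def phibar (α β : ℝ) (φ : ℝ → ℝ) (t : ℝ) : ℝ :=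
  t ^ (β * (1 - α)) * sSup ((fun s => φ s * s ^ (β * (α - 1))) '' Set.Ioo t 1)

namespace Statement4Aux

/-- The sup appearing in `phibar`. -/
def M (α β : ℝ) (φ : ℝ → ℝ) (t : ℝ) : ℝ :=
  sSup ((fun s => φ s * s ^ (β * (α - 1))) '' Set.Ioo t 1)

variable {α β : ℝ} {φ : ℝ → ℝ}

lemma phibar_eq (t : ℝ) : phibar α β φ t = t ^ (β * (1 - α)) * M α β φ t := rfl

lemma g_nonneg (hφ : QuasiconcaveOn01 φ) {s : ℝ} (hs : s ∈ Ioo (0:ℝ) 1) :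
    0 ≤ φ s * s ^ (β * (α - 1)) :=
  mul_nonneg (hφ.2.2.1 s ⟨hs.1.le, hs.2⟩) (Real.rpow_nonneg hs.1.le _)

lemma bddAbove_S (hα1 : α < 1) (hβ : 0 < β) (hφ : QuasiconcaveOn01 φ)
    {t : ℝ} (ht : t ∈ Ioo (0:ℝ) 1) :
    BddAbove ((fun s => φ s * s ^ (β * (α - 1))) '' Ioo t 1) := by
  obtain ⟨h0, hpos, hnn, hmono, hanti⟩ := hφ
  refine ⟨(φ t / t) * t ^ (β * (α - 1)), ?_⟩
  rintro x ⟨s, hs, rfl⟩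
  have hs0 : 0 < s := ht.1.trans hs.1
  have hq : 0 ≤ φ t / t := div_nonneg (hnn t ⟨ht.1.le, ht.2⟩) ht.1.le
  have h1 : φ s ≤ φ t / t := by
    have h2 : φ s / s ≤ φ t / t := hanti ht ⟨hs0, hs.2⟩ hs.1.le
    calc φ s = (φ s / s) * s := (div_mul_cancel₀ _ hs0.ne').symm
    _ ≤ (φ t / t) * 1 := mul_le_mul h2 hs.2.le hs0.le hq
    _ = φ t / t := mul_one _
  have h4 : s ^ (β * (α - 1)) ≤ t ^ (β * (α - 1)) :=
    Real.rpow_le_rpow_of_nonpos ht.1 hs.1.le (by nlinarith)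
  exact mul_le_mul h1 h4 (Real.rpow_nonneg hs0.le _) hq

lemma ne_S {t : ℝ} (ht : t < 1) :
    ((fun s => φ s * s ^ (β * (α - 1))) '' Ioo t 1).Nonempty :=
  (Set.nonempty_Ioo.mpr ht).image _

lemma le_M (hα1 : α < 1) (hβ : 0 < β) (hφ : QuasiconcaveOn01 φ)
    {t s : ℝ} (ht : t ∈ Ioo (0:ℝ) 1) (hs : s ∈ Ioo t 1) :
    φ s * s ^ (β * (α - 1)) ≤ M α β φ t :=
  le_csSup (bddAbove_S hα1 hβ hφ ht) (mem_image_of_mem _ hs)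

lemma M_pos (hα1 : α < 1) (hβ : 0 < β) (hφ : QuasiconcaveOn01 φ)
    {t : ℝ} (ht : t ∈ Ioo (0:ℝ) 1) : 0 < M α β φ t := by
  have hm : (t + 1) / 2 ∈ Ioo t 1 := ⟨by linarith [ht.2], by linarith [ht.2]⟩
  have hm0 : (0:ℝ) < (t + 1) / 2 := by linarith [ht.1]
  have hg : 0 < φ ((t + 1) / 2) * ((t + 1) / 2) ^ (β * (α - 1)) :=
    mul_pos (hφ.2.1 _ ⟨hm0, hm.2⟩) (Real.rpow_pos_of_pos hm0 _)
  exact hg.trans_le (le_M hα1 hβ hφ ht hm)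

lemma M_anti (hα1 : α < 1) (hβ : 0 < β) (hφ : QuasiconcaveOn01 φ)
    {t1 t2 : ℝ} (h1 : t1 ∈ Ioo (0:ℝ) 1) (h2 : t2 ∈ Ioo (0:ℝ) 1) (h : t1 ≤ t2) :
    M α β φ t2 ≤ M α β φ t1 :=
  csSup_le_csSup (bddAbove_S hα1 hβ hφ h1) (ne_S h2.2)
    (Set.image_mono (Set.Ioo_subset_Ioo h le_rfl))

/-- `F t := φ t · t^{βα} ≤ t^β · M t`. -/
lemma F_le (hα1 : α < 1) (hβ : 0 < β) (hφ : QuasiconcaveOn01 φ)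
    {t : ℝ} (ht : t ∈ Ioo (0:ℝ) 1) :
    φ t * t ^ (β * α) ≤ t ^ β * M α β φ t := by
  have key : φ t * t ^ (β * (α - 1)) ≤ M α β φ t := by
    have hlim : Tendsto (fun s => φ t * s ^ (β * (α - 1))) (𝓝[>] t)
        (𝓝 (φ t * t ^ (β * (α - 1)))) := by
      apply Tendsto.mono_left _ nhdsWithin_le_nhds
      exact (continuousAt_const.mul
        (Real.continuousAt_rpow_const t _ (Or.inl ht.1.ne'))).tendsto
    refine le_of_tendsto hlim ?_
    filter_upwards [Ioo_mem_nhdsGT_of_mem (⟨le_refl t, ht.2⟩ : t ∈ Ico t 1)] with s hs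
    have hmono : φ t ≤ φ s :=
      hφ.2.2.2.1 ht ⟨ht.1.trans hs.1, hs.2⟩ hs.1.le
    have h1 : φ t * s ^ (β * (α - 1)) ≤ φ s * s ^ (β * (α - 1)) :=
      mul_le_mul_of_nonneg_right hmono (Real.rpow_nonneg (ht.1.trans hs.1).le _)
    exact h1.trans (le_M hα1 hβ hφ ht hs)
  calc φ t * t ^ (β * α) = t ^ β * (φ t * t ^ (β * (α - 1))) := by
        rw [show β * α = β + β * (α - 1) by ring, Real.rpow_add ht.1]; ring
  _ ≤ t ^ β * M α β φ t := mul_le_mul_of_nonneg_left key (Real.rpow_nonneg ht.1.le _)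

lemma F_strict (hα : 0 < α) (hβ : 0 < β) (hφ : QuasiconcaveOn01 φ)
    {s t : ℝ} (hs : s ∈ Ioo (0:ℝ) 1) (ht : t ∈ Ioo (0:ℝ) 1) (hst : s < t) :
    φ s * s ^ (β * α) < φ t * t ^ (β * α) := by
  have h1 : s ^ (β * α) < t ^ (β * α) :=
    Real.rpow_lt_rpow hs.1.le hst (by positivity)
  calc φ s * s ^ (β * α) < φ s * t ^ (β * α) :=
        mul_lt_mul_of_pos_left h1 (hφ.2.1 s hs)
  _ ≤ φ t * t ^ (β * α) :=
        mul_le_mul_of_nonneg_right (hφ.2.2.2.1 hs ht hst.le) (Real.rpow_nonneg ht.1.le _)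

lemma F_mono (hα : 0 < α) (hβ : 0 < β) (hφ : QuasiconcaveOn01 φ)
    {s t : ℝ} (hs : s ∈ Ioo (0:ℝ) 1) (ht : t ∈ Ioo (0:ℝ) 1) (hst : s ≤ t) :
    φ s * s ^ (β * α) ≤ φ t * t ^ (β * α) := by
  rcases eq_or_lt_of_le hst with rfl | h
  · exact le_rfl
  · exact (F_strict hα hβ hφ hs ht h).le

/-- Strict monotonicity of `u ↦ u^β · M u` on `(0,1)`. -/
lemma h_strict (hα : 0 < α) (hα1 : α < 1) (hβ : 0 < β) (hφ : QuasiconcaveOn01 φ)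
    {u1 u2 : ℝ} (h1 : u1 ∈ Ioo (0:ℝ) 1) (h2 : u2 ∈ Ioo (0:ℝ) 1) (h12 : u1 < u2) :
    u1 ^ β * M α β φ u1 < u2 ^ β * M α β φ u2 := by
  set m : ℝ := (u1 + u2) / 2 with hm_def
  have hm1 : u1 < m := by simp only [hm_def]; linarith
  have hm2 : m < u2 := by simp only [hm_def]; linarith
  have hm : m ∈ Ioo (0:ℝ) 1 := ⟨h1.1.trans hm1, hm2.trans h2.2⟩
  set C : ℝ := u2 ^ β * M α β φ u2 with hC_def
  have hCpos : 0 < C :=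
    mul_pos (Real.rpow_pos_of_pos h2.1 _) (M_pos hα1 hβ hφ h2)
  have hFu2_le : φ u2 * u2 ^ (β * α) ≤ C := F_le hα1 hβ hφ h2
  have hFu2_pos : 0 < φ u2 * u2 ^ (β * α) :=
    mul_pos (hφ.2.1 u2 h2) (Real.rpow_pos_of_pos h2.1 _)
  set D : ℝ := max (φ m * m ^ (β * α))
    (max ((u1 / m) ^ β * (φ u2 * u2 ^ (β * α))) ((u1 / u2) ^ β * C)) with hD_def
  have hpt : ∀ x ∈ (fun s => φ s * s ^ (β * (α - 1))) '' Ioo u1 1, u1 ^ β * x ≤ D := by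
    rintro x ⟨s, hs, rfl⟩
    have hs0 : 0 < s := h1.1.trans hs.1
    have hsIoo : s ∈ Ioo (0:ℝ) 1 := ⟨hs0, hs.2⟩
    have hgs : 0 ≤ φ s * s ^ (β * (α - 1)) := g_nonneg hφ hsIoo
    have hFs : s ^ β * (φ s * s ^ (β * (α - 1))) = φ s * s ^ (β * α) := by
      rw [show β * α = β + β * (α - 1) by ring, Real.rpow_add hs0]; ring
    rcases le_or_gt s m with hsm | hsm
    · -- s ≤ m : bound by F m
      have e1 : u1 ^ β * (φ s * s ^ (β * (α - 1))) ≤ s ^ β * (φ s * s ^ (β * (α - 1))) :=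
        mul_le_mul_of_nonneg_right (Real.rpow_le_rpow h1.1.le hs.1.le hβ.le) hgs
      have e2 : φ s * s ^ (β * α) ≤ φ m * m ^ (β * α) := F_mono hα hβ hφ hsIoo hm hsm
      exact le_max_of_le_left (by rw [hFs] at e1; exact e1.trans e2)
    · rcases le_or_gt s u2 with hsu2 | hsu2
      · -- m < s ≤ u2
        have hmβ : (0:ℝ) < m ^ β := Real.rpow_pos_of_pos hm.1 β
        have e0 : u1 ^ β = (u1 / m) ^ β * m ^ β := by
          rw [Real.div_rpow h1.1.le hm.1.le, div_mul_cancel₀ _ hmβ.ne']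
        have e1 : m ^ β * (φ s * s ^ (β * (α - 1))) ≤ s ^ β * (φ s * s ^ (β * (α - 1))) :=
          mul_le_mul_of_nonneg_right (Real.rpow_le_rpow hm.1.le hsm.le hβ.le) hgs
        have e2 : φ s * s ^ (β * α) ≤ φ u2 * u2 ^ (β * α) := F_mono hα hβ hφ hsIoo h2 hsu2
        have e3 : m ^ β * (φ s * s ^ (β * (α - 1))) ≤ φ u2 * u2 ^ (β * α) := by
          rw [hFs] at e1; exact e1.trans e2
        have : u1 ^ β * (φ s * s ^ (β * (α - 1)))
            ≤ (u1 / m) ^ β * (φ u2 * u2 ^ (β * α)) := by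
          rw [e0, mul_assoc]
          exact mul_le_mul_of_nonneg_left e3 (Real.rpow_nonneg (div_nonneg h1.1.le hm.1.le) β)
        exact le_max_of_le_right (le_max_of_le_left this)
      · -- u2 < s
        have hMle : φ s * s ^ (β * (α - 1)) ≤ M α β φ u2 :=
          le_M hα1 hβ hφ h2 ⟨hsu2, hs.2⟩
        have hu2β : (0:ℝ) < u2 ^ β := Real.rpow_pos_of_pos h2.1 β
        have e0 : u1 ^ β = (u1 / u2) ^ β * u2 ^ β := by
          rw [Real.div_rpow h1.1.le h2.1.le, div_mul_cancel₀ _ hu2β.ne']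
        have : u1 ^ β * (φ s * s ^ (β * (α - 1))) ≤ (u1 / u2) ^ β * C := by
          rw [e0, mul_assoc, hC_def]
          refine mul_le_mul_of_nonneg_left ?_ (Real.rpow_nonneg (div_nonneg h1.1.le h2.1.le) β)
          exact mul_le_mul_of_nonneg_left hMle hu2β.le
        exact le_max_of_le_right (le_max_of_le_right this)
  have hu1β : (0:ℝ) < u1 ^ β := Real.rpow_pos_of_pos h1.1 β
  have hMD : M α β φ u1 ≤ D / u1 ^ β := by
    refine csSup_le (ne_S h1.2) fun x hx => ?_
    rw [le_div_iff₀ hu1β, mul_comm]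
    exact hpt x hx
  have hleD : u1 ^ β * M α β φ u1 ≤ D := by
    calc u1 ^ β * M α β φ u1 ≤ u1 ^ β * (D / u1 ^ β) :=
          mul_le_mul_of_nonneg_left hMD hu1β.le
    _ = D := by field_simp
  have hDC : D < C := by
    rw [hD_def]
    apply max_lt
    · exact (F_strict hα hβ hφ hm h2 hm2).trans_le hFu2_le
    · apply max_lt
      · calc (u1 / m) ^ β * (φ u2 * u2 ^ (β * α))
            < 1 * (φ u2 * u2 ^ (β * α)) := by
              refine mul_lt_mul_of_pos_right ?_ hFu2_pos
              exact Real.rpow_lt_one (div_nonneg h1.1.le hm.1.le) ((div_lt_one hm.1).mpr hm1) hβ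
        _ = φ u2 * u2 ^ (β * α) := one_mul _
        _ ≤ C := hFu2_le
      · calc (u1 / u2) ^ β * C < 1 * C := by
              refine mul_lt_mul_of_pos_right ?_ hCpos
              exact Real.rpow_lt_one (div_nonneg h1.1.le h2.1.le) ((div_lt_one h2.1).mpr h12) hβ
        _ = C := one_mul _
  exact hleD.trans_lt hDC

lemma phi_le_phibar (hα : 0 < α) (hα1 : α < 1) (hβ : 0 < β) (hφ : QuasiconcaveOn01 φ)
    {t : ℝ} (ht : t ∈ Ioo (0:ℝ) 1) : φ t ≤ phibar α β φ t := by
  have h := F_le hα1 hβ hφ ht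
  have hpow : 0 < t ^ (β * α) := Real.rpow_pos_of_pos ht.1 _
  have key : t ^ (β * (1 - α) - β) * (φ t * t ^ (β * α))
      ≤ t ^ (β * (1 - α) - β) * (t ^ β * M α β φ t) :=
    mul_le_mul_of_nonneg_left h (Real.rpow_nonneg ht.1.le _)
  have e1 : t ^ (β * (1 - α) - β) * (φ t * t ^ (β * α)) = φ t := by
    rw [show β * (1 - α) - β = -(β * α) by ring, Real.rpow_neg ht.1.le]
    field_simp
  have e2 : t ^ (β * (1 - α) - β) * (t ^ β * M α β φ t)
      = t ^ (β * (1 - α)) * M α β φ t := by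
    rw [← mul_assoc, ← Real.rpow_add ht.1, sub_add_cancel]
  rw [phibar_eq, ← e2, ← e1]
  exact key

lemma phibar_pos (hα1 : α < 1) (hβ : 0 < β) (hφ : QuasiconcaveOn01 φ)
    {t : ℝ} (ht : t ∈ Ioo (0:ℝ) 1) : 0 < phibar α β φ t :=
  mul_pos (Real.rpow_pos_of_pos ht.1 _) (M_pos hα1 hβ hφ ht)

lemma phibar_zero (hα1 : α < 1) (hβ : 0 < β) : phibar α β φ 0 = 0 := by
  unfold phibar
  rw [Real.zero_rpow (by nlinarith), zero_mul]

lemma phibar_mono (hα : 0 < α) (hα1 : α < 1) (hβ : 0 < β) (hφ : QuasiconcaveOn01 φ) :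
    MonotoneOn (phibar α β φ) (Ioo (0:ℝ) 1) := by
  intro t1 h1 t2 h2 h12
  have hq : (0:ℝ) ≤ β * (1 - α) := by nlinarith
  have key : ∀ x ∈ (fun s => φ s * s ^ (β * (α - 1))) '' Ioo t1 1,
      t1 ^ (β * (1 - α)) * x ≤ phibar α β φ t2 := by
    rintro x ⟨s, hs, rfl⟩
    have hs0 : 0 < s := h1.1.trans hs.1
    have hsIoo : s ∈ Ioo (0:ℝ) 1 := ⟨hs0, hs.2⟩
    rcases le_or_gt s t2 with hs2 | hs2
    · have hone : t1 ^ (β * (1 - α)) * s ^ (β * (α - 1)) ≤ 1 := by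
        have h4 : s ^ (β * (α - 1)) ≤ t1 ^ (β * (α - 1)) :=
          Real.rpow_le_rpow_of_nonpos h1.1 hs.1.le (by nlinarith)
        calc t1 ^ (β * (1 - α)) * s ^ (β * (α - 1))
            ≤ t1 ^ (β * (1 - α)) * t1 ^ (β * (α - 1)) :=
              mul_le_mul_of_nonneg_left h4 (Real.rpow_nonneg h1.1.le _)
        _ = 1 := by
            rw [← Real.rpow_add h1.1, show β * (1 - α) + β * (α - 1) = 0 by ring,
              Real.rpow_zero]
      have e1 : t1 ^ (β * (1 - α)) * (φ s * s ^ (β * (α - 1))) ≤ φ s := by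
        calc t1 ^ (β * (1 - α)) * (φ s * s ^ (β * (α - 1)))
            = (t1 ^ (β * (1 - α)) * s ^ (β * (α - 1))) * φ s := by ring
        _ ≤ 1 * φ s := mul_le_mul_of_nonneg_right hone (hφ.2.2.1 s ⟨hs0.le, hs.2⟩)
        _ = φ s := one_mul _
      exact e1.trans ((hφ.2.2.2.1 hsIoo h2 hs2).trans (phi_le_phibar hα hα1 hβ hφ h2))
    · have hMle : φ s * s ^ (β * (α - 1)) ≤ M α β φ t2 :=
        le_M hα1 hβ hφ h2 ⟨hs2, hs.2⟩
      calc t1 ^ (β * (1 - α)) * (φ s * s ^ (β * (α - 1)))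
          ≤ t2 ^ (β * (1 - α)) * (φ s * s ^ (β * (α - 1))) :=
            mul_le_mul_of_nonneg_right (Real.rpow_le_rpow h1.1.le h12 hq)
              (g_nonneg hφ hsIoo)
      _ ≤ t2 ^ (β * (1 - α)) * M α β φ t2 :=
            mul_le_mul_of_nonneg_left hMle (Real.rpow_nonneg h2.1.le _)
      _ = phibar α β φ t2 := (phibar_eq t2).symm
  have hpow : (0:ℝ) < t1 ^ (β * (1 - α)) := Real.rpow_pos_of_pos h1.1 _
  have hMD : M α β φ t1 ≤ phibar α β φ t2 / t1 ^ (β * (1 - α)) := by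
    refine csSup_le (ne_S h1.2) fun x hx => ?_
    rw [le_div_iff₀ hpow, mul_comm]
    exact key x hx
  calc phibar α β φ t1 = t1 ^ (β * (1 - α)) * M α β φ t1 := phibar_eq t1
  _ ≤ t1 ^ (β * (1 - α)) * (phibar α β φ t2 / t1 ^ (β * (1 - α))) :=
      mul_le_mul_of_nonneg_left hMD hpow.le
  _ = phibar α β φ t2 := by field_simp

lemma psi_eq (hβ : 0 < β) {t : ℝ} (ht : t ∈ Ioo (0:ℝ) 1) :
    phibar α β φ (t ^ (1 / β)) * t ^ α = t * M α β φ (t ^ (1 / β)) := by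
  have hβ' : β ≠ 0 := hβ.ne'
  have h1 : (t ^ (1 / β)) ^ (β * (1 - α)) = t ^ (1 - α) := by
    rw [← Real.rpow_mul ht.1.le, show 1 / β * (β * (1 - α)) = 1 - α by field_simp]
  rw [phibar_eq, h1]
  rw [mul_right_comm, ← Real.rpow_add ht.1, show 1 - α + α = 1 by ring, Real.rpow_one]

lemma u_mem (hβ : 0 < β) {t : ℝ} (ht : t ∈ Ioo (0:ℝ) 1) :
    t ^ (1 / β) ∈ Ioo (0:ℝ) 1 :=
  ⟨Real.rpow_pos_of_pos ht.1 _, Real.rpow_lt_one ht.1.le ht.2 (by positivity)⟩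

lemma u_pow (hβ : 0 < β) {t : ℝ} (ht : 0 ≤ t) : (t ^ (1 / β)) ^ β = t := by
  rw [← Real.rpow_mul ht, one_div, inv_mul_cancel₀ hβ.ne', Real.rpow_one]

end Statement4Aux

open Statement4Aux

theorem statement4 (α β : ℝ) (hα : 0 < α) (hα1 : α < 1) (hβ : 0 < β)
    (hαβ : 1 ≤ α + 1 / β) (φ : ℝ → ℝ) (hφ : QuasiconcaveOn01 φ) :
    QuasiconcaveOn01 (phibar α β φ) ∧
    QuasiconcaveOn01 (fun t => phibar α β φ (t ^ (1/β)) * t ^ α) ∧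
    StrictMonoOn (fun t => phibar α β φ (t ^ (1/β)) * t ^ α) (Set.Ioo 0 1) := by
  have hq1 : β * (1 - α) ≤ 1 := by
    have h1 : 1 - α ≤ 1 / β := by linarith
    have h2 : β * (1 - α) ≤ β * (1 / β) := mul_le_mul_of_nonneg_left h1 hβ.le
    rwa [mul_one_div_cancel hβ.ne'] at h2
  have hstrict : StrictMonoOn (fun t => phibar α β φ (t ^ (1/β)) * t ^ α) (Set.Ioo 0 1) := by
    intro t1 h1 t2 h2 h12
    have hu1 := u_mem hβ h1
    have hu2 := u_mem hβ h2
    have hu12 : t1 ^ (1 / β) < t2 ^ (1 / β) :=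
      Real.rpow_lt_rpow h1.1.le h12 (by positivity)
    have key := h_strict hα hα1 hβ hφ hu1 hu2 hu12
    rw [u_pow hβ h1.1.le, u_pow hβ h2.1.le] at key
    calc phibar α β φ (t1 ^ (1/β)) * t1 ^ α = t1 * M α β φ (t1 ^ (1/β)) :=
          psi_eq hβ h1
    _ < t2 * M α β φ (t2 ^ (1/β)) := key
    _ = phibar α β φ (t2 ^ (1/β)) * t2 ^ α := (psi_eq hβ h2).symm
  have hpsi0 : phibar α β φ ((0:ℝ) ^ (1/β)) * (0:ℝ) ^ α = 0 := by
    rw [Real.zero_rpow (by positivity : (1:ℝ)/β ≠ 0), phibar_zero hα1 hβ, zero_mul]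
  refine ⟨⟨phibar_zero hα1 hβ, fun t ht => phibar_pos hα1 hβ hφ ht, ?_,
      phibar_mono hα hα1 hβ hφ, ?_⟩, ⟨hpsi0, ?_, ?_, hstrict.monotoneOn, ?_⟩, hstrict⟩
  · -- nonneg of phibar on Ico
    intro t ht
    rcases eq_or_lt_of_le ht.1 with rfl | h0
    · rw [phibar_zero hα1 hβ]
    · exact (phibar_pos hα1 hβ hφ ⟨h0, ht.2⟩).le
  · -- antitone of phibar t / t
    intro t1 h1 t2 h2 h12
    have e : ∀ t ∈ Ioo (0:ℝ) 1, phibar α β φ t / t = t ^ (β * (1 - α) - 1) * M α β φ t := by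
      intro t ht
      rw [phibar_eq, Real.rpow_sub ht.1, Real.rpow_one]
      ring
    simp only
    rw [e t1 h1, e t2 h2]
    refine mul_le_mul (Real.rpow_le_rpow_of_nonpos h1.1 h12 (by linarith))
      (M_anti hα1 hβ hφ h1 h2 h12) (M_pos hα1 hβ hφ h2).le
      (Real.rpow_nonneg h1.1.le _)
  · -- positivity of psi on Ioo
    intro t ht
    show 0 < phibar α β φ (t ^ (1/β)) * t ^ α
    rw [psi_eq hβ ht]
    exact mul_pos ht.1 (M_pos hα1 hβ hφ (u_mem hβ ht))
  · -- nonneg of psi on Ico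
    intro t ht
    rcases eq_or_lt_of_le ht.1 with rfl | h0
    · exact le_of_eq hpsi0.symm
    · show (0:ℝ) ≤ phibar α β φ (t ^ (1/β)) * t ^ α
      rw [psi_eq hβ ⟨h0, ht.2⟩]
      exact (mul_pos h0 (M_pos hα1 hβ hφ (u_mem hβ ⟨h0, ht.2⟩))).le
  · -- antitone of psi t / t
    intro t1 h1 t2 h2 h12
    have e : ∀ t ∈ Ioo (0:ℝ) 1,
        phibar α β φ (t ^ (1/β)) * t ^ α / t = M α β φ (t ^ (1/β)) := by
      intro t ht
      rw [psi_eq hβ ht, mul_div_cancel_left₀ _ ht.1.ne']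
    simp only
    rw [e t1 h1, e t2 h2]
    exact M_anti hα1 hβ hφ (u_mem hβ h1) (u_mem hβ h2)
      (Real.rpow_le_rpow h1.1.le h12 (by positivity))
end
end

section
/- Let u be a continuous strictly increasing bijection of (0,1) onto (0,1) that is quasiconcave (i.e., u(t)/t is nonincreasing on (0,1)) and satisfies lim_{t→0+} u(t)/t = ∞. Define b(s)=s for s∈[0,1], b(s)=1/(s·u^{−1}(1/s)) for s>1, and B(t) := ∫_0^t b(s) ds. Then B is a Young function (b is nondecreasing, right-continuous, positive on (0,∞), and b(s)→∞ as s→∞), and B(t) ≤ 1/u^{−1}(1/t) ≤ B(2t) for every t∈(1,∞); consequently u(y)/2 ≤ 1/B^{−1}(1/y) ≤ u(y) for every y∈(0,1), where B^{−1} is the inverse of B on [0,∞). In particular, the fundamental function t ↦ 1/B^{−1}(1/t) of the Orlicz space L^B(0,1) is equivalent to u on (0,1). -/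
open MeasureTheory Filter Set Real Topology
open scoped ENNReal

noncomputable section

/-- The density `b`: `b(s) = s` for `s ≤ 1` and `b(s) = 1/(s ⬝ u⁻¹(1/s))` for `s > 1`. -/
def bfun (uinv : ℝ → ℝ) (s : ℝ) : ℝ :=
  if s ≤ 1 then s else 1 / (s * uinv (1 / s))

/-- `B(t) = ∫₀ᵗ b(s) ds`. -/
def Bfun (uinv : ℝ → ℝ) (t : ℝ) : ℝ :=
  ∫ s in (0:ℝ)..t, bfun uinv s

/-- The (generalized) inverse of `B` on `[0,∞)`. -/
def geninv (B : ℝ → ℝ) (t : ℝ) : ℝ :=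
  sInf {s : ℝ | 0 ≤ s ∧ t ≤ B s}

section aux
variable {u uinv : ℝ → ℝ}

lemma inv_mem' {s : ℝ} (hs : 1 < s) : 1 / s ∈ Set.Ioo (0:ℝ) 1 :=
  ⟨by positivity, by rw [div_lt_one (by linarith)]; linarith⟩

lemma u_mem' (hu_onto : u '' Set.Ioo 0 1 = Set.Ioo 0 1) {x : ℝ} (hx : x ∈ Set.Ioo (0:ℝ) 1) :
    u x ∈ Set.Ioo (0:ℝ) 1 := hu_onto ▸ Set.mem_image_of_mem u hx

lemma u_ge (hu_mono : StrictMonoOn u (Set.Ioo 0 1))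
    (hu_onto : u '' Set.Ioo 0 1 = Set.Ioo 0 1)
    (hu_qc : AntitoneOn (fun t => u t / t) (Set.Ioo 0 1))
    {x : ℝ} (hx : x ∈ Set.Ioo (0:ℝ) 1) : x ≤ u x := by
  by_contra h
  push_neg at h
  set c := u x / x with hc
  have hux := u_mem' hu_onto hx
  have hc1 : c < 1 := by
    rw [hc, div_lt_one hx.1]; exact h
  have hc0 : 0 < c := div_pos hux.1 hx.1
  have key : ∀ z ∈ Set.Ioo (0:ℝ) 1, u z < c := by
    intro z hz
    rcases le_or_gt z x with hzx | hxz
    · calc u z ≤ u x := hu_mono.monotoneOn hz hx hzx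
        _ = c * x := by rw [hc, div_mul_cancel₀ _ hx.1.ne']
        _ < c := by nlinarith [hx.2]
    · have : u z / z ≤ c := hu_qc hx hz hxz.le
      have hz0 := hz.1
      calc u z = (u z / z) * z := by field_simp
        _ ≤ c * z := by nlinarith
        _ < c := by nlinarith [hz.2]
  have hv : (c + 1) / 2 ∈ Set.Ioo (0:ℝ) 1 := by constructor <;> nlinarith
  obtain ⟨z, hz, hzv⟩ := hu_onto ▸ hv
  have := key z hz
  rw [hzv] at this
  linarith

lemma uinv_le (hu_mono : StrictMonoOn u (Set.Ioo 0 1))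
    (hu_onto : u '' Set.Ioo 0 1 = Set.Ioo 0 1)
    (hu_qc : AntitoneOn (fun t => u t / t) (Set.Ioo 0 1))
    (huinv : ∀ t ∈ Set.Ioo (0:ℝ) 1, uinv t ∈ Set.Ioo (0:ℝ) 1 ∧ u (uinv t) = t)
    {t : ℝ} (ht : t ∈ Set.Ioo (0:ℝ) 1) : uinv t ≤ t := by
  obtain ⟨hm, he⟩ := huinv t ht
  calc uinv t ≤ u (uinv t) := u_ge hu_mono hu_onto hu_qc hm
    _ = t := he

lemma uinv_mono (hu_mono : StrictMonoOn u (Set.Ioo 0 1))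
    (huinv : ∀ t ∈ Set.Ioo (0:ℝ) 1, uinv t ∈ Set.Ioo (0:ℝ) 1 ∧ u (uinv t) = t)
    {t₁ t₂ : ℝ} (h1 : t₁ ∈ Set.Ioo (0:ℝ) 1) (h2 : t₂ ∈ Set.Ioo (0:ℝ) 1) (h : t₁ ≤ t₂) :
    uinv t₁ ≤ uinv t₂ := by
  obtain ⟨hm1, he1⟩ := huinv t₁ h1
  obtain ⟨hm2, he2⟩ := huinv t₂ h2
  by_contra hlt
  push_neg at hlt
  have := hu_mono hm2 hm1 hlt
  rw [he1, he2] at this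
  linarith

lemma uinv_ratio (hu_mono : StrictMonoOn u (Set.Ioo 0 1))
    (hu_qc : AntitoneOn (fun t => u t / t) (Set.Ioo 0 1))
    (huinv : ∀ t ∈ Set.Ioo (0:ℝ) 1, uinv t ∈ Set.Ioo (0:ℝ) 1 ∧ u (uinv t) = t)
    {t₁ t₂ : ℝ} (h1 : t₁ ∈ Set.Ioo (0:ℝ) 1) (h2 : t₂ ∈ Set.Ioo (0:ℝ) 1) (h : t₁ ≤ t₂) :
    uinv t₁ / t₁ ≤ uinv t₂ / t₂ := by
  obtain ⟨hm1, he1⟩ := huinv t₁ h1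
  obtain ⟨hm2, he2⟩ := huinv t₂ h2
  have hx12 : uinv t₁ ≤ uinv t₂ := uinv_mono hu_mono huinv h1 h2 h
  have hq := hu_qc hm1 hm2 hx12
  simp only [he1, he2] at hq
  rw [div_le_div_iff₀ h1.1 h2.1]
  rw [div_le_div_iff₀ hm2.1 hm1.1] at hq
  linarith

lemma bfun_le_eq {s : ℝ} (hs : s ≤ 1) : bfun uinv s = s := by
  rw [bfun, if_pos hs]

lemma bfun_gt_eq {s : ℝ} (hs : 1 < s) : bfun uinv s = 1 / (s * uinv (1/s)) := by
  rw [bfun, if_neg (by linarith)]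

lemma denom_pos (huinv : ∀ t ∈ Set.Ioo (0:ℝ) 1, uinv t ∈ Set.Ioo (0:ℝ) 1 ∧ u (uinv t) = t)
    {s : ℝ} (hs : 1 < s) : 0 < s * uinv (1 / s) := by
  have := (huinv _ (inv_mem' hs)).1.1
  positivity

lemma denom_le_one (uinv_le : ∀ {t : ℝ}, t ∈ Set.Ioo (0:ℝ) 1 → uinv t ≤ t)
    {s : ℝ} (hs : 1 < s) : s * uinv (1 / s) ≤ 1 := by
  have h1 := uinv_le (inv_mem' hs)
  have hs0 : (0:ℝ) < s := by linarith
  calc s * uinv (1/s) ≤ s * (1/s) := by nlinarith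
    _ = 1 := by field_simp

lemma bfun_ge_one (huinv : ∀ t ∈ Set.Ioo (0:ℝ) 1, uinv t ∈ Set.Ioo (0:ℝ) 1 ∧ u (uinv t) = t)
    (uinv_le : ∀ {t : ℝ}, t ∈ Set.Ioo (0:ℝ) 1 → uinv t ≤ t)
    {s : ℝ} (hs : 1 ≤ s) : 1 ≤ bfun uinv s := by
  rcases eq_or_lt_of_le hs with h | h
  · rw [← h, bfun_le_eq le_rfl]
  · rw [bfun_gt_eq h, le_div_iff₀ (denom_pos huinv h), one_mul]
    exact denom_le_one uinv_le h

lemma bfun_pos (huinv : ∀ t ∈ Set.Ioo (0:ℝ) 1, uinv t ∈ Set.Ioo (0:ℝ) 1 ∧ u (uinv t) = t)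
    (uinv_le : ∀ {t : ℝ}, t ∈ Set.Ioo (0:ℝ) 1 → uinv t ≤ t)
    {s : ℝ} (hs : 0 < s) : 0 < bfun uinv s := by
  rcases le_or_gt s 1 with h | h
  · rw [bfun_le_eq h]; exact hs
  · linarith [bfun_ge_one huinv uinv_le h.le]

lemma bfun_nonneg (huinv : ∀ t ∈ Set.Ioo (0:ℝ) 1, uinv t ∈ Set.Ioo (0:ℝ) 1 ∧ u (uinv t) = t)
    (uinv_le : ∀ {t : ℝ}, t ∈ Set.Ioo (0:ℝ) 1 → uinv t ≤ t)
    {s : ℝ} (hs : 0 ≤ s) : 0 ≤ bfun uinv s := by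
  rcases eq_or_lt_of_le hs with h | h
  · rw [← h, bfun_le_eq (by norm_num)]
  · exact (bfun_pos huinv uinv_le h).le

lemma bfun_monotone (huinv : ∀ t ∈ Set.Ioo (0:ℝ) 1, uinv t ∈ Set.Ioo (0:ℝ) 1 ∧ u (uinv t) = t)
    (uinv_le : ∀ {t : ℝ}, t ∈ Set.Ioo (0:ℝ) 1 → uinv t ≤ t)
    (uinv_ratio : ∀ {t₁ t₂ : ℝ}, t₁ ∈ Set.Ioo (0:ℝ) 1 → t₂ ∈ Set.Ioo (0:ℝ) 1 → t₁ ≤ t₂ →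
      uinv t₁ / t₁ ≤ uinv t₂ / t₂) :
    MonotoneOn (bfun uinv) (Set.Ici 0) := by
  intro s₁ hs₁ s₂ hs₂ h
  simp only [Set.mem_Ici] at hs₁ hs₂
  rcases le_or_gt s₂ 1 with h2 | h2
  · rw [bfun_le_eq (le_trans h h2), bfun_le_eq h2]; exact h
  · rcases le_or_gt s₁ 1 with h1 | h1
    · rw [bfun_le_eq h1]
      linarith [bfun_ge_one huinv uinv_le h2.le]
    · rw [bfun_gt_eq h1, bfun_gt_eq h2]
      have hd1 := denom_pos huinv h1
      have hd2 := denom_pos huinv h2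
      apply one_div_le_one_div_of_le hd2
      have hr := uinv_ratio (inv_mem' h2) (inv_mem' h1)
        (by apply one_div_le_one_div_of_le (by linarith) h)
      have h10 : (0:ℝ) < s₁ := by linarith
      have h20 : (0:ℝ) < s₂ := by linarith
      have e1 : uinv (1/s₁) / (1/s₁) = s₁ * uinv (1/s₁) := by field_simp
      have e2 : uinv (1/s₂) / (1/s₂) = s₂ * uinv (1/s₂) := by field_simp
      rw [e1, e2] at hr; exact hr

lemma lt_uinv_of (hu_mono : StrictMonoOn u (Set.Ioo 0 1))
    (huinv : ∀ t ∈ Set.Ioo (0:ℝ) 1, uinv t ∈ Set.Ioo (0:ℝ) 1 ∧ u (uinv t) = t)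
    {a' t' : ℝ} (ha' : a' ∈ Set.Ioo (0:ℝ) 1) (ht' : t' ∈ Set.Ioo (0:ℝ) 1)
    (h : u a' < t') : a' < uinv t' := by
  obtain ⟨hm, he⟩ := huinv t' ht'
  by_contra hle
  push_neg at hle
  have := hu_mono.monotoneOn hm ha' hle
  rw [he] at this
  linarith

lemma uinv_tendsto_left (hu_mono : StrictMonoOn u (Set.Ioo 0 1))
    (hu_onto : u '' Set.Ioo 0 1 = Set.Ioo 0 1)
    (huinv : ∀ t ∈ Set.Ioo (0:ℝ) 1, uinv t ∈ Set.Ioo (0:ℝ) 1 ∧ u (uinv t) = t)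
    (uinv_mono : ∀ {t₁ t₂ : ℝ}, t₁ ∈ Set.Ioo (0:ℝ) 1 → t₂ ∈ Set.Ioo (0:ℝ) 1 → t₁ ≤ t₂ →
      uinv t₁ ≤ uinv t₂)
    {t : ℝ} (ht : t ∈ Set.Ioo (0:ℝ) 1) :
    Filter.Tendsto uinv (nhdsWithin t (Set.Iic t)) (nhds (uinv t)) := by
  obtain ⟨hmem, heq⟩ := huinv t ht
  rw [tendsto_order]
  constructor
  · intro a ha
    set a' := max a (uinv t / 2) with ha'
    have ha'lt : a' < uinv t := max_lt ha (by linarith [hmem.1])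
    have ha'mem : a' ∈ Set.Ioo (0:ℝ) 1 :=
      ⟨lt_max_of_lt_right (by linarith [hmem.1]), lt_trans ha'lt hmem.2⟩
    have hua' : u a' < t := heq ▸ hu_mono ha'mem hmem ha'lt
    filter_upwards [Ioc_mem_nhdsLE_of_mem ⟨hua', le_refl t⟩] with t' ht'
    have ht'mem : t' ∈ Set.Ioo (0:ℝ) 1 :=
      ⟨lt_trans (u_mem' hu_onto ha'mem).1 ht'.1, lt_of_le_of_lt ht'.2 ht.2⟩
    exact lt_of_le_of_lt (le_max_left a _) (lt_uinv_of hu_mono huinv ha'mem ht'mem ht'.1)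
  · intro b hb
    filter_upwards [Ioc_mem_nhdsLE_of_mem ⟨ht.1, le_refl t⟩] with t' ht'
    have ht'mem : t' ∈ Set.Ioo (0:ℝ) 1 := ⟨ht'.1, lt_of_le_of_lt ht'.2 ht.2⟩
    exact lt_of_le_of_lt (uinv_mono ht'mem ht ht'.2) hb

lemma uinv_tendsto_one (hu_mono : StrictMonoOn u (Set.Ioo 0 1))
    (hu_onto : u '' Set.Ioo 0 1 = Set.Ioo 0 1)
    (huinv : ∀ t ∈ Set.Ioo (0:ℝ) 1, uinv t ∈ Set.Ioo (0:ℝ) 1 ∧ u (uinv t) = t) :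
    Filter.Tendsto uinv (nhdsWithin 1 (Set.Iio 1)) (nhds 1) := by
  rw [tendsto_order]
  constructor
  · intro a ha
    set a' := max a (1/2 : ℝ) with ha'
    have ha'mem : a' ∈ Set.Ioo (0:ℝ) 1 :=
      ⟨lt_max_of_lt_right (by norm_num), max_lt ha (by norm_num)⟩
    have hua' := u_mem' hu_onto ha'mem
    filter_upwards [Ioo_mem_nhdsLT_of_mem (show (1:ℝ) ∈ Set.Ioc (u a') 1 from ⟨hua'.2, le_refl 1⟩)]
      with t' ht'
    have ht'mem : t' ∈ Set.Ioo (0:ℝ) 1 := ⟨lt_trans hua'.1 ht'.1, ht'.2⟩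
    exact lt_of_le_of_lt (le_max_left a _) (lt_uinv_of hu_mono huinv ha'mem ht'mem ht'.1)
  · intro b hb
    filter_upwards [Ioo_mem_nhdsLT_of_mem (show (1:ℝ) ∈ Set.Ioc (0:ℝ) 1 from ⟨one_pos, le_refl 1⟩)]
      with t' ht'
    exact lt_trans (huinv t' ht').1.2 hb

lemma bfun_cwa (hu_mono : StrictMonoOn u (Set.Ioo 0 1))
    (hu_onto : u '' Set.Ioo 0 1 = Set.Ioo 0 1)
    (huinv : ∀ t ∈ Set.Ioo (0:ℝ) 1, uinv t ∈ Set.Ioo (0:ℝ) 1 ∧ u (uinv t) = t)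
    (uinv_mono : ∀ {t₁ t₂ : ℝ}, t₁ ∈ Set.Ioo (0:ℝ) 1 → t₂ ∈ Set.Ioo (0:ℝ) 1 → t₁ ≤ t₂ →
      uinv t₁ ≤ uinv t₂)
    {s : ℝ} (hs : 0 ≤ s) : ContinuousWithinAt (bfun uinv) (Set.Ici s) s := by
  rcases lt_trichotomy s 1 with h1 | h1 | h1
  · have : ContinuousWithinAt (fun x : ℝ => x) (Set.Ici s) s := continuousWithinAt_id
    apply this.congr_of_eventuallyEq
    · filter_upwards [mem_nhdsWithin_of_mem_nhds (Iio_mem_nhds h1)] with y hy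
      exact if_pos (le_of_lt hy)
    · exact if_pos h1.le
  · subst h1
    rw [← continuousWithinAt_Ioi_iff_Ici]
    have hb1 : bfun uinv 1 = 1 := if_pos le_rfl
    have hinv : Filter.Tendsto (fun s' : ℝ => 1 / s') (nhdsWithin 1 (Set.Ioi 1))
        (nhdsWithin 1 (Set.Iio 1)) := by
      apply tendsto_nhdsWithin_of_tendsto_nhds_of_eventually_within
      · have : Filter.Tendsto (fun s' : ℝ => 1 / s') (nhds 1) (nhds (1/1)) :=
          (continuousAt_const.div continuousAt_id one_ne_zero)
        simpa using this.mono_left nhdsWithin_le_nhds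
      · filter_upwards [self_mem_nhdsWithin] with s' hs'
        have : (1:ℝ) < s' := hs'
        exact mem_Iio.2 (by rw [div_lt_one (by linarith)]; linarith)
    have huc : Filter.Tendsto (fun s' : ℝ => uinv (1 / s')) (nhdsWithin 1 (Set.Ioi 1)) (nhds 1) :=
      (uinv_tendsto_one hu_mono hu_onto huinv).comp hinv
    have hid : Filter.Tendsto (fun s' : ℝ => s') (nhdsWithin 1 (Set.Ioi 1)) (nhds 1) :=
      tendsto_id.mono_left nhdsWithin_le_nhds
    have hden : Filter.Tendsto (fun s' : ℝ => s' * uinv (1 / s'))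
        (nhdsWithin 1 (Set.Ioi 1)) (nhds 1) := by
      simpa using hid.mul huc
    have htr : Filter.Tendsto (fun s' : ℝ => 1 / (s' * uinv (1 / s')))
        (nhdsWithin 1 (Set.Ioi 1)) (nhds ((1:ℝ)/1)) :=
      tendsto_const_nhds.div hden one_ne_zero
    rw [one_div_one] at htr
    rw [ContinuousWithinAt, hb1]
    apply htr.congr'
    filter_upwards [self_mem_nhdsWithin] with s' hs'
    exact (if_neg (not_le.2 hs')).symm
  · have hmem := inv_mem' h1
    have hinv : Filter.Tendsto (fun s' : ℝ => 1 / s') (nhdsWithin s (Set.Ici s))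
        (nhdsWithin (1/s) (Set.Iic (1/s))) := by
      apply tendsto_nhdsWithin_of_tendsto_nhds_of_eventually_within
      · exact (Filter.Tendsto.div tendsto_const_nhds tendsto_id
          (ne_of_gt (by linarith : (0:ℝ) < s))).mono_left nhdsWithin_le_nhds
      · filter_upwards [self_mem_nhdsWithin] with s' hs'
        have hss' : s ≤ s' := hs'
        exact mem_Iic.2 (by apply one_div_le_one_div_of_le (by linarith) hss')
    have huc : Filter.Tendsto (fun s' : ℝ => uinv (1 / s')) (nhdsWithin s (Set.Ici s))
        (nhds (uinv (1/s))) :=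
      (uinv_tendsto_left hu_mono hu_onto huinv @uinv_mono hmem).comp hinv
    have hid : Filter.Tendsto (fun s' : ℝ => s') (nhdsWithin s (Set.Ici s)) (nhds s) :=
      tendsto_id.mono_left nhdsWithin_le_nhds
    have hne : s * uinv (1/s) ≠ 0 := by
      have := (huinv _ hmem).1.1
      positivity
    have htr : Filter.Tendsto (fun s' : ℝ => 1 / (s' * uinv (1 / s')))
        (nhdsWithin s (Set.Ici s)) (nhds (1 / (s * uinv (1/s)))) :=
      tendsto_const_nhds.div (hid.mul huc) hne
    have hbs : bfun uinv s = 1 / (s * uinv (1/s)) := by rw [bfun, if_neg (not_le.2 h1)]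
    rw [ContinuousWithinAt, hbs]
    apply htr.congr'
    filter_upwards [mem_nhdsWithin_of_mem_nhds (Ioi_mem_nhds h1)] with s' hs'
    exact (if_neg (not_le.2 hs')).symm

lemma bfun_atTop
    (hu_lim : Filter.Tendsto (fun t => u t / t) (nhdsWithin 0 (Set.Ioi 0)) Filter.atTop)
    (huinv : ∀ t ∈ Set.Ioo (0:ℝ) 1, uinv t ∈ Set.Ioo (0:ℝ) 1 ∧ u (uinv t) = t)
    (uinv_le : ∀ {t : ℝ}, t ∈ Set.Ioo (0:ℝ) 1 → uinv t ≤ t) :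
    Filter.Tendsto (bfun uinv) Filter.atTop Filter.atTop := by
  rw [Filter.tendsto_atTop]
  intro M
  have h := hu_lim.eventually (Filter.eventually_ge_atTop M)
  obtain ⟨ε, hε, hsub⟩ := Metric.mem_nhdsWithin_iff.1 h
  filter_upwards [Filter.eventually_gt_atTop (max 1 (1/ε))] with s hs
  have hs1 : 1 < s := lt_of_le_of_lt (le_max_left _ _) hs
  have hsε : 1/s < ε := by
    rw [div_lt_iff₀ (by linarith)]
    have h2 : 1/ε < s := lt_of_le_of_lt (le_max_right _ _) hs
    rw [div_lt_iff₀ hε] at h2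
    linarith
  have hmem := inv_mem' hs1
  obtain ⟨hxm, hxe⟩ := huinv _ hmem
  have hxε : dist (uinv (1/s)) 0 < ε := by
    rw [Real.dist_eq, sub_zero, abs_of_pos hxm.1]
    exact lt_of_le_of_lt (uinv_le hmem) hsε
  have hM := hsub ⟨Metric.mem_ball.2 hxε, hxm.1⟩
  simp only [Set.mem_setOf_eq, hxe] at hM
  have hb : bfun uinv s = (1/s) / uinv (1/s) := by
    rw [bfun, if_neg (not_le.2 hs1)]
    rw [div_div]
  rw [hb]
  exact hM

end aux

theorem statement5 (u uinv : ℝ → ℝ)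
    (hu_cont : ContinuousOn u (Set.Ioo 0 1))
    (hu_mono : StrictMonoOn u (Set.Ioo 0 1))
    (hu_onto : u '' Set.Ioo 0 1 = Set.Ioo 0 1)
    (hu_qc : AntitoneOn (fun t => u t / t) (Set.Ioo 0 1))
    (hu_lim : Filter.Tendsto (fun t => u t / t) (nhdsWithin 0 (Set.Ioi 0)) Filter.atTop)
    (huinv : ∀ t ∈ Set.Ioo (0:ℝ) 1, uinv t ∈ Set.Ioo (0:ℝ) 1 ∧ u (uinv t) = t)
    (huinv' : ∀ t ∈ Set.Ioo (0:ℝ) 1, uinv (u t) = t) :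
    IsYoungWith (Bfun uinv) (bfun uinv) ∧
    (∀ t, 1 < t →
      Bfun uinv t ≤ 1 / uinv (1 / t) ∧ 1 / uinv (1 / t) ≤ Bfun uinv (2 * t)) ∧
    (∀ y ∈ Set.Ioo (0:ℝ) 1,
      u y / 2 ≤ 1 / geninv (Bfun uinv) (1 / y) ∧ 1 / geninv (Bfun uinv) (1 / y) ≤ u y) := by
  have hUL : ∀ {t : ℝ}, t ∈ Set.Ioo (0:ℝ) 1 → uinv t ≤ t :=
    fun ht => uinv_le hu_mono hu_onto hu_qc huinv ht
  have hUM : ∀ {t₁ t₂ : ℝ}, t₁ ∈ Set.Ioo (0:ℝ) 1 → t₂ ∈ Set.Ioo (0:ℝ) 1 → t₁ ≤ t₂ →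
      uinv t₁ ≤ uinv t₂ := fun h1 h2 h => uinv_mono hu_mono huinv h1 h2 h
  have hUR : ∀ {t₁ t₂ : ℝ}, t₁ ∈ Set.Ioo (0:ℝ) 1 → t₂ ∈ Set.Ioo (0:ℝ) 1 → t₁ ≤ t₂ →
      uinv t₁ / t₁ ≤ uinv t₂ / t₂ := fun h1 h2 h => uinv_ratio hu_mono hu_qc huinv h1 h2 h
  have hbmono : MonotoneOn (bfun uinv) (Set.Ici 0) := bfun_monotone huinv @hUL @hUR
  have hbnn : ∀ {s : ℝ}, 0 ≤ s → 0 ≤ bfun uinv s := fun hs => bfun_nonneg huinv @hUL hs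
  have hInt : ∀ a c : ℝ, 0 ≤ a → 0 ≤ c → IntervalIntegrable (bfun uinv) volume a c := by
    intro a c ha hc
    apply MonotoneOn.intervalIntegrable
    apply hbmono.mono
    intro x hx
    rcases Set.mem_uIcc.1 hx with ⟨h, _⟩ | ⟨h, _⟩
    · exact le_trans ha h
    · exact le_trans hc h
  -- the two-sided estimate
  have key : ∀ t, 1 < t →
      Bfun uinv t ≤ 1 / uinv (1 / t) ∧ 1 / uinv (1 / t) ≤ Bfun uinv (2 * t) := by
    intro t ht
    have ht0 : (0:ℝ) < t := by linarith
    have hbt1 : 1 ≤ bfun uinv t := bfun_ge_one huinv @hUL ht.le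
    have hd : 0 < uinv (1/t) := (huinv _ (inv_mem' ht)).1.1
    have htb : t * bfun uinv t = 1 / uinv (1/t) := by
      rw [bfun_gt_eq ht]
      field_simp
    constructor
    · have hsplit : Bfun uinv t =
          (∫ s in (0:ℝ)..1, bfun uinv s) + ∫ s in (1:ℝ)..t, bfun uinv s := by
        rw [Bfun, ← intervalIntegral.integral_add_adjacent_intervals
          (hInt 0 1 le_rfl one_pos.le) (hInt 1 t one_pos.le ht0.le)]
      have hB01 : (∫ s in (0:ℝ)..1, bfun uinv s) = 1/2 := by
        rw [intervalIntegral.integral_congr (g := fun s => s) ?_, integral_id]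
        · norm_num
        · intro x hx
          rw [Set.uIcc_of_le (by norm_num : (0:ℝ) ≤ 1)] at hx
          exact bfun_le_eq hx.2
      have hup : (∫ s in (1:ℝ)..t, bfun uinv s) ≤ (t - 1) * bfun uinv t := by
        have hmo := intervalIntegral.integral_mono_on (μ := volume) ht.le
          (hInt 1 t one_pos.le ht0.le) intervalIntegrable_const
          (fun x hx => hbmono (Set.mem_Ici.2 (by linarith [hx.1]))
            (Set.mem_Ici.2 ht0.le) hx.2)
        rwa [intervalIntegral.integral_const, smul_eq_mul] at hmo
      rw [hsplit, hB01, ← htb]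
      nlinarith
    · have hsplit2 : Bfun uinv (2*t) =
          (∫ s in (0:ℝ)..t, bfun uinv s) + ∫ s in t..(2*t), bfun uinv s := by
        rw [Bfun, ← intervalIntegral.integral_add_adjacent_intervals
          (hInt 0 t le_rfl ht0.le) (hInt t (2*t) ht0.le (by linarith))]
      have h0t : 0 ≤ ∫ s in (0:ℝ)..t, bfun uinv s :=
        intervalIntegral.integral_nonneg ht0.le (fun x hx => hbnn hx.1)
      have hlow : t * bfun uinv t ≤ ∫ s in t..(2*t), bfun uinv s := by
        have hmo := intervalIntegral.integral_mono_on (μ := volume)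
          (by linarith : t ≤ 2*t) intervalIntegrable_const
          (hInt t (2*t) ht0.le (by linarith))
          (fun x hx => hbmono (Set.mem_Ici.2 ht0.le)
            (Set.mem_Ici.2 (le_trans ht0.le hx.1)) hx.1)
        rwa [intervalIntegral.integral_const, smul_eq_mul,
          show 2*t - t = t by ring] at hmo
      rw [hsplit2, ← htb]
      linarith
  -- strict monotonicity of B at points above 1
  have hBlt : ∀ s t' : ℝ, 0 ≤ s → s < t' → 1 < t' → Bfun uinv s < Bfun uinv t' := by
    intro s t' hs hst h1t
    set c := max s 1 with hc
    have hc1 : 1 ≤ c := le_max_right _ _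
    have hcs : s ≤ c := le_max_left _ _
    have hct : c < t' := max_lt hst h1t
    have h1 : (∫ x in (0:ℝ)..s, bfun uinv x) + ∫ x in s..t', bfun uinv x
        = ∫ x in (0:ℝ)..t', bfun uinv x :=
      intervalIntegral.integral_add_adjacent_intervals (hInt 0 s le_rfl hs)
        (hInt s t' hs (by linarith))
    have h2 : (∫ x in s..c, bfun uinv x) + ∫ x in c..t', bfun uinv x
        = ∫ x in s..t', bfun uinv x :=
      intervalIntegral.integral_add_adjacent_intervals (hInt s c hs (by linarith))
        (hInt c t' (by linarith) (by linarith))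
    have h3 : 0 ≤ ∫ x in s..c, bfun uinv x :=
      intervalIntegral.integral_nonneg hcs (fun x hx => hbnn (le_trans hs hx.1))
    have h4 : (t' - c) * 1 ≤ ∫ x in c..t', bfun uinv x := by
      have hmo := intervalIntegral.integral_mono_on (μ := volume) hct.le
        intervalIntegrable_const (hInt c t' (by linarith) (by linarith))
        (fun x hx => bfun_ge_one huinv @hUL (le_trans hc1 hx.1))
      rwa [intervalIntegral.integral_const, smul_eq_mul] at hmo
    have : Bfun uinv s + ((∫ x in s..c, bfun uinv x) + ∫ x in c..t', bfun uinv x)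
        = Bfun uinv t' := by rw [h2, Bfun, Bfun, h1]
    nlinarith
  refine ⟨⟨bfun_le_eq (by norm_num), fun s hs => bfun_pos huinv @hUL hs, hbmono,
    fun s hs => bfun_cwa hu_mono hu_onto huinv @hUM hs,
    bfun_atTop hu_lim huinv @hUL, fun t _ => rfl⟩, key, ?_⟩
  intro y hy
  have huy := u_mem' hu_onto hy
  set t₀ := 1 / u y with ht₀
  have ht₀1 : 1 < t₀ := by
    rw [ht₀, lt_div_iff₀ huy.1]; linarith [huy.2]
  have hinv_t₀ : uinv (1/t₀) = y := by rw [ht₀, one_div_one_div, huinv' y hy]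
  obtain ⟨hBle, hBge⟩ := key t₀ ht₀1
  rw [hinv_t₀] at hBle hBge
  have hmem2 : (2*t₀ : ℝ) ∈ {s : ℝ | 0 ≤ s ∧ 1/y ≤ Bfun uinv s} := ⟨by linarith, hBge⟩
  have hbdd : BddBelow {s : ℝ | 0 ≤ s ∧ 1/y ≤ Bfun uinv s} := ⟨0, fun s hs => hs.1⟩
  have hgle : geninv (Bfun uinv) (1/y) ≤ 2*t₀ := csInf_le hbdd hmem2
  have hgge : t₀ ≤ geninv (Bfun uinv) (1/y) := by
    apply le_csInf ⟨2*t₀, hmem2⟩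
    intro s hs
    by_contra hlt
    push_neg at hlt
    have hlt2 := hBlt s t₀ hs.1 hlt ht₀1
    have := hs.2
    linarith
  have hg0 : 0 < geninv (Bfun uinv) (1/y) := lt_of_lt_of_le (by linarith) hgge
  have ht₀uy : t₀ * u y = 1 := by rw [ht₀, one_div, inv_mul_cancel₀ huy.1.ne']
  constructor
  · rw [div_le_div_iff₀ (by norm_num : (0:ℝ) < 2) hg0]
    nlinarith [huy.1]
  · rw [div_le_iff₀ hg0]
    nlinarith [huy.1]
end
end

section
/- Let u be a continuous strictly increasing bijection of (0,1) onto (0,1) that is quasiconcave (i.e., u(t)/t is nonincreasing on (0,1)) and satisfies lim_{t→0+} u(t)/t = ∞. Define b(s)=s for s∈[0,1], b(s)=1/(s·u^{−1}(1/s)) for s>1, B(t) := ∫_0^t b(s) ds, and let B̃(t) := sup_{s>0}(st − B(s)) be the complementary Young function of B. Then (1/2)·t·u(1/t) ≤ B̃^{−1}(t) ≤ 2·t·u(1/t) for every t∈(1,∞), where B̃^{−1} is the (generalized) inverse of B̃. -/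
open MeasureTheory Filter Set Real Topology
open scoped ENNReal

noncomputable section

/-- The complementary Young function `Ã(t) = sup_{s>0} (st - A(s))`. -/
def conjYoung (A : ℝ → ℝ) (t : ℝ) : ℝ :=
  sSup ((fun s => s * t - A s) '' Set.Ioi 0)

theorem statement6 (u uinv : ℝ → ℝ)
    (hu_cont : ContinuousOn u (Set.Ioo 0 1))
    (hu_mono : StrictMonoOn u (Set.Ioo 0 1))
    (hu_onto : u '' Set.Ioo 0 1 = Set.Ioo 0 1)
    (hu_qc : AntitoneOn (fun t => u t / t) (Set.Ioo 0 1))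
    (hu_lim : Filter.Tendsto (fun t => u t / t) (nhdsWithin 0 (Set.Ioi 0)) Filter.atTop)
    (huinv : ∀ t ∈ Set.Ioo (0:ℝ) 1, uinv t ∈ Set.Ioo (0:ℝ) 1 ∧ u (uinv t) = t)
    (huinv' : ∀ t ∈ Set.Ioo (0:ℝ) 1, uinv (u t) = t) :
    ∀ t, 1 < t →
      (1/2) * (t * u (1 / t)) ≤ geninv (conjYoung (Bfun uinv)) t ∧
      geninv (conjYoung (Bfun uinv)) t ≤ 2 * (t * u (1 / t)) := by
  -- u maps Ioo 0 1 into itself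
  have humem : ∀ y ∈ Set.Ioo (0:ℝ) 1, u y ∈ Set.Ioo (0:ℝ) 1 := by
    intro y hy; rw [← hu_onto]; exact mem_image_of_mem u hy
  -- u y ≥ y on (0,1)
  have huge : ∀ y ∈ Set.Ioo (0:ℝ) 1, y ≤ u y := by
    intro y hy
    by_contra h
    push_neg at h
    have huy := humem y hy
    have hc0 : 0 < u y / y := div_pos huy.1 hy.1
    have hc1 : u y / y < 1 := (div_lt_one hy.1).mpr h
    set v := (max (u y / y) (u y) + 1) / 2 with hv
    have hmax1 : max (u y / y) (u y) < 1 := max_lt hc1 huy.2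
    have hmax0 : 0 < max (u y / y) (u y) := lt_max_of_lt_left hc0
    have hv1 : v < 1 := by rw [hv]; linarith
    have hvgt : max (u y / y) (u y) < v := by rw [hv]; linarith
    have hv0 : 0 < v := lt_trans hmax0 hvgt
    have hvmem : v ∈ u '' Set.Ioo 0 1 := by rw [hu_onto]; exact ⟨hv0, hv1⟩
    obtain ⟨z, hz, hzv⟩ := hvmem
    have hyz : y < z := by
      by_contra hzy
      push_neg at hzy
      have h1 : u z ≤ u y := (hu_mono.le_iff_le hz hy).mpr hzy
      have h2 : u y ≤ max (u y / y) (u y) := le_max_right _ _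
      rw [hzv] at h1
      linarith
    have hq : u z / z ≤ u y / y := hu_qc hy hz hyz.le
    have h3 : u z ≤ (u y / y) * z := (div_le_iff₀ hz.1).mp hq
    have h4 : (u y / y) * z < u y / y := mul_lt_of_lt_one_right hc0 hz.2
    have h5 : u y / y ≤ max (u y / y) (u y) := le_max_left _ _
    rw [hzv] at h3
    linarith
  -- value of b above 1
  have hIoo : ∀ s : ℝ, 1 < s → (1/s : ℝ) ∈ Set.Ioo (0:ℝ) 1 := by
    intro s hs
    constructor
    · positivity
    · rw [div_lt_one (by linarith)]; linarith
  have hbval : ∀ s : ℝ, 1 < s → bfun uinv s = u (uinv (1/s)) / (uinv (1/s)) := by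
    intro s hs
    have h1 := huinv (1/s) (hIoo s hs)
    unfold bfun
    rw [if_neg (not_le.mpr hs), h1.2, ← div_div]
  -- monotonicity of b on [0,∞)
  have hbge1 : ∀ s : ℝ, 1 < s → 1 ≤ bfun uinv s := by
    intro s hs
    rw [hbval s hs]
    have h1 := huinv (1/s) (hIoo s hs)
    exact (one_le_div h1.1.1).mpr (huge _ h1.1)
  have hbmono : MonotoneOn (bfun uinv) (Set.Ici 0) := by
    intro s hs s' hs' hss
    by_cases h1 : s' ≤ 1
    · unfold bfun
      rw [if_pos (le_trans hss h1), if_pos h1]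
      exact hss
    · push_neg at h1
      by_cases h2 : s ≤ 1
      · have : bfun uinv s = s := if_pos h2
        rw [this]
        exact le_trans h2 (hbge1 s' h1)
      · push_neg at h2
        rw [hbval s h2, hbval s' h1]
        have hy := huinv (1/s) (hIoo s h2)
        have hy' := huinv (1/s') (hIoo s' h1)
        have hle : (1/s' : ℝ) ≤ 1/s :=
          one_div_le_one_div_of_le (by linarith) hss
        have hyy : uinv (1/s') ≤ uinv (1/s) := by
          have := (hu_mono.le_iff_le hy'.1 hy.1)
          rw [hy'.2, hy.2] at this
          exact this.mp hle
        exact hu_qc hy'.1 hy.1 hyy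
  have hbnonneg : ∀ σ : ℝ, 0 ≤ σ → 0 ≤ bfun uinv σ := by
    intro σ hσ
    have h0 : bfun uinv 0 = 0 := by unfold bfun; simp
    calc (0:ℝ) = bfun uinv 0 := h0.symm
      _ ≤ bfun uinv σ := hbmono (le_refl (0:ℝ)) hσ hσ
  -- integrability of b on intervals in [0,∞)
  have hint : ∀ a c : ℝ, 0 ≤ a → a ≤ c → IntervalIntegrable (bfun uinv) volume a c := by
    intro a c ha hac
    apply MonotoneOn.intervalIntegrable
    apply hbmono.mono
    rw [Set.uIcc_of_le hac]
    intro z hz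
    exact le_trans ha hz.1
  have hBsplit : ∀ a s : ℝ, 0 ≤ a → a ≤ s →
      Bfun uinv s = Bfun uinv a + ∫ σ in a..s, bfun uinv σ := by
    intro a s ha has
    unfold Bfun
    rw [intervalIntegral.integral_add_adjacent_intervals (hint 0 a le_rfl ha) (hint a s ha has)]
  have hBnonneg : ∀ s : ℝ, 0 ≤ s → 0 ≤ Bfun uinv s := by
    intro s hs
    exact intervalIntegral.integral_nonneg hs (fun σ hσ => hbnonneg σ hσ.1)
  have hBlow : ∀ a s : ℝ, 0 ≤ a → a ≤ s → (s - a) * bfun uinv a ≤ Bfun uinv s := by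
    intro a s ha has
    rw [hBsplit a s ha has]
    have h1 : (s - a) * bfun uinv a = ∫ _σ in a..s, bfun uinv a := by
      rw [intervalIntegral.integral_const, smul_eq_mul]
    have h2 : (∫ _σ in a..s, bfun uinv a) ≤ ∫ σ in a..s, bfun uinv σ := by
      apply intervalIntegral.integral_mono_on has intervalIntegrable_const (hint a s ha has)
      intro σ hσ
      exact hbmono ha (le_trans ha hσ.1) hσ.1
    have h3 := hBnonneg a ha
    linarith [h1 ▸ h2]
  have hB1 : Bfun uinv 1 = 1/2 := by
    unfold Bfun
    rw [intervalIntegral.integral_congr (g := fun σ : ℝ => σ)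
      (by
        intro σ hσ
        rw [Set.uIcc_of_le (by norm_num : (0:ℝ) ≤ 1)] at hσ
        exact if_pos hσ.2)]
    rw [integral_id]
    norm_num
  have hBupp : ∀ s : ℝ, 1 ≤ s → Bfun uinv s ≤ 1/2 + (s - 1) * bfun uinv s := by
    intro s hs
    rw [hBsplit 1 s (by norm_num) hs, hB1]
    have h1 : (∫ σ in (1:ℝ)..s, bfun uinv σ) ≤ ∫ _σ in (1:ℝ)..s, bfun uinv s := by
      apply intervalIntegral.integral_mono_on hs (hint 1 s (by norm_num) hs)
        intervalIntegrable_const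
      intro σ hσ
      exact hbmono (by linarith [hσ.1] : (0:ℝ) ≤ σ) (by linarith : (0:ℝ) ≤ s) hσ.2
    rw [intervalIntegral.integral_const, smul_eq_mul] at h1
    linarith
  -- main argument
  intro t ht
  have ht0 : (0:ℝ) < t := by linarith
  set x := 1/t with hxdef
  have hx : x ∈ Set.Ioo (0:ℝ) 1 := hIoo t ht
  have hux := humem x hx
  have hux0 : 0 < u x := hux.1
  have hux1 : u x < 1 := hux.2
  set s₀ := 1 / u x with hs₀def
  have hs₀1 : 1 < s₀ := (one_lt_div hux0).mpr hux1
  have hs₀0 : 0 < s₀ := by linarith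
  have hbs₀ : bfun uinv s₀ = t * u x := by
    rw [hbval s₀ hs₀1]
    have h1 : (1:ℝ)/s₀ = u x := by rw [hs₀def, one_div_one_div]
    rw [h1, huinv' x hx]
    rw [hxdef]
    field_simp
  have htux1 : 1 ≤ t * u x := by
    have := huge x hx
    have h2 : t * x = 1 := by rw [hxdef]; field_simp
    nlinarith
  have hs₀b : s₀ * bfun uinv s₀ = t := by
    rw [hbs₀, hs₀def]
    field_simp
  -- B(s₀) ≤ t
  have hBs₀ : Bfun uinv s₀ ≤ t := by
    have h1 := hBupp s₀ hs₀1.le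
    have h2 : (s₀ - 1) * bfun uinv s₀ = s₀ * bfun uinv s₀ - bfun uinv s₀ := by ring
    rw [h2, hs₀b, hbs₀] at h1
    linarith
  -- key estimate : ∀ σ > 0, σ * τ₀ - B σ ≤ t/2 with τ₀ = (1/2)*(t*u x)
  set τ₀ := (1/2) * (t * u x) with hτ₀def
  have hτ₀0 : 0 < τ₀ := by rw [hτ₀def]; positivity
  have hs₀τ₀ : s₀ * τ₀ = t / 2 := by
    rw [hs₀def, hτ₀def]; field_simp
  have hkey : ∀ σ : ℝ, 0 < σ → σ * τ₀ - Bfun uinv σ ≤ t/2 := by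
    intro σ hσ
    rcases le_or_gt σ s₀ with h | h
    · have h1 : σ * τ₀ ≤ s₀ * τ₀ := mul_le_mul_of_nonneg_right h hτ₀0.le
      have h2 := hBnonneg σ hσ.le
      linarith [hs₀τ₀]
    · have h1 := hBlow s₀ σ hs₀0.le h.le
      rw [hbs₀] at h1
      have h2 : t * u x = 2 * τ₀ := by rw [hτ₀def]; ring
      rw [h2] at h1
      nlinarith [hs₀τ₀]
  -- select σ₁ with b σ₁ ≥ 2t+1, to get boundedness
  have hev : ∀ᶠ y in nhdsWithin (0:ℝ) (Set.Ioi 0), 2*t+1 ≤ u y / y :=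
    hu_lim.eventually_ge_atTop _
  rw [eventually_nhdsWithin_iff, Metric.eventually_nhds_iff] at hev
  obtain ⟨δ, hδ0, hδ⟩ := hev
  set y₀ := min (δ/2) (1/2) with hy₀def
  have hy₀0 : 0 < y₀ := by rw [hy₀def]; positivity
  have hy₀1 : y₀ < 1 := lt_of_le_of_lt (min_le_right _ _) (by norm_num)
  have hy₀δ : dist y₀ (0:ℝ) < δ := by
    rw [Real.dist_eq, sub_zero, abs_of_pos hy₀0]
    calc y₀ ≤ δ/2 := min_le_left _ _
      _ < δ := by linarith
  have hy₀mem : y₀ ∈ Set.Ioo (0:ℝ) 1 := ⟨hy₀0, hy₀1⟩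
  have huy₀ := humem y₀ hy₀mem
  have hy₀big : 2*t+1 ≤ u y₀ / y₀ := hδ hy₀δ hy₀0
  set σ₁ := 1 / u y₀ with hσ₁def
  have hσ₁1 : 1 < σ₁ := (one_lt_div huy₀.1).mpr huy₀.2
  have hσ₁0 : 0 < σ₁ := by linarith
  have hbσ₁ : bfun uinv σ₁ = u y₀ / y₀ := by
    rw [hbval σ₁ hσ₁1]
    have h1 : (1:ℝ)/σ₁ = u y₀ := by rw [hσ₁def, one_div_one_div]
    rw [h1, huinv' y₀ hy₀mem]
  set τ := 2 * (t * u x) with hτdef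
  have hτ0 : 0 < τ := by rw [hτdef]; positivity
  have hτle : τ ≤ 2*t + 1 := by nlinarith
  have hbdd : BddAbove ((fun s => s * τ - Bfun uinv s) '' Set.Ioi 0) := by
    refine ⟨2 * σ₁ * τ, ?_⟩
    rintro v ⟨s, hs, rfl⟩
    simp only
    rcases le_or_gt s (2*σ₁) with h | h
    · have h1 := hBnonneg s (le_of_lt hs)
      nlinarith
    · have h1 := hBlow σ₁ s hσ₁0.le (by linarith)
      rw [hbσ₁] at h1
      have h2 : (s - σ₁) * τ ≤ (s - σ₁) * (u y₀ / y₀) := by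
        apply mul_le_mul_of_nonneg_left (le_trans hτle hy₀big) (by linarith)
      nlinarith
  -- τ is in the geninv set
  have hconjτ : t ≤ conjYoung (Bfun uinv) τ := by
    have hmem : s₀ * τ - Bfun uinv s₀ ∈ (fun s => s * τ - Bfun uinv s) '' Set.Ioi 0 :=
      ⟨s₀, hs₀0, rfl⟩
    have h1 : s₀ * τ = 2 * t := by
      rw [hs₀def, hτdef]; field_simp
    have h2 : t ≤ s₀ * τ - Bfun uinv s₀ := by rw [h1]; linarith
    exact le_trans h2 (le_csSup hbdd hmem)
  have hmemτ : τ ∈ {s : ℝ | 0 ≤ s ∧ t ≤ conjYoung (Bfun uinv) s} := ⟨hτ0.le, hconjτ⟩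
  constructor
  · -- lower bound
    apply le_csInf ⟨τ, hmemτ⟩
    intro s hs
    by_contra hcon
    push_neg at hcon
    have hs0 : 0 ≤ s := hs.1
    have hne : ((fun σ => σ * s - Bfun uinv σ) '' Set.Ioi 0).Nonempty :=
      ⟨1 * s - Bfun uinv 1, 1, by norm_num, rfl⟩
    have hub : conjYoung (Bfun uinv) s ≤ t/2 := by
      apply csSup_le hne
      rintro v ⟨σ, hσ, rfl⟩
      simp only
      have h1 : σ * s ≤ σ * τ₀ := mul_le_mul_of_nonneg_left hcon.le (le_of_lt hσ)
      have h2 := hkey σ hσ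
      linarith
    have := hs.2
    linarith
  · -- upper bound
    apply csInf_le
    · refine ⟨0, ?_⟩
      rintro s ⟨h0, _⟩
      exact h0
    · exact hmemτ

end
end

section
/- Let 0<α<1, β>0 with α+1/β≥1, and let φ be a quasiconcave function on [0,1). For t∈(0,1) define Φ(t) := sup{ sup_{0<s<1} (φ(s)/s) ∫_0^s ( ∫_{r^β}^1 y^{α−1} χ_E(y) dy ) dr : E ⊆ (0,1) measurable with |E| = t }. Then there exist constants c₁,c₂>0, depending only on α and β, such that c₁ · t · sup_{t<s<1} φ(s^{1/β}) s^{α−1} ≤ Φ(t) ≤ c₂ · t · sup_{t<s<1} φ(s^{1/β}) s^{α−1} for every t∈(0,1/2). (Φ is the fundamental function of the largest rearrangement-invariant space X(0,1) with H_α^β : X(0,1) → M_φ(0,1) bounded.) -/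
open MeasureTheory Filter Set Real Topology
open scoped ENNReal

noncomputable section

/-- The Marcinkiewicz norm `sup_{0<s<1} (φ(s)/s) ∫₀ˢ (H_α^β χ_E)(r) dr` of `H_α^β χ_E`,
where `(H_α^β f)(r) = ∫_{r^β}^1 y^{α-1} f(y) dy`. -/
def marcQ (α β : ℝ) (φ : ℝ → ℝ) (E : Set ℝ) : ℝ :=
  sSup ((fun s => (φ s / s) *
    ∫ r in Set.Ioo (0:ℝ) s, ∫ y in Set.Ioo (r ^ β) 1, y ^ (α - 1) * E.indicator 1 y) ''
      Set.Ioo (0:ℝ) 1)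

/-- `Φ(t)`: the supremum of the Marcinkiewicz norms of `H_α^β χ_E` over all measurable
`E ⊆ (0,1)` with `|E| = t`; this is the fundamental function of the optimal
rearrangement-invariant domain space. -/
def PhiFun (α β : ℝ) (φ : ℝ → ℝ) (t : ℝ) : ℝ :=
  sSup {v : ℝ | ∃ E : Set ℝ, MeasurableSet E ∧ E ⊆ Set.Ioo 0 1 ∧
    volume E = ENNReal.ofReal t ∧ v = marcQ α β φ E}

namespace S8

lemma meas_rpow (c : ℝ) : Measurable fun x : ℝ => x ^ c :=
  measurable_of_continuousOn_compl_singleton 0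
    (ContinuousOn.rpow_const continuousOn_id fun _ hx => Or.inl hx)

lemma kIntIoc {α : ℝ} (hα : 0 < α) : IntegrableOn (fun y : ℝ => y ^ (α - 1)) (Ioc 0 1) volume := by
  have h := intervalIntegral.intervalIntegrable_rpow' (r := α - 1) (by linarith) (a := 0) (b := 1)
  rwa [intervalIntegrable_iff, uIoc_of_le (by norm_num : (0:ℝ) ≤ 1)] at h

lemma kVal {α : ℝ} (hα : 0 < α) {c : ℝ} (hc : 0 ≤ c) :
    ∫ y in Ioc 0 c, y ^ (α - 1) = c ^ α / α := by
  rw [← intervalIntegral.integral_of_le hc]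
  rw [integral_rpow (Or.inl (by linarith))]
  rw [Real.zero_rpow (by linarith : α - 1 + 1 ≠ 0)]
  norm_num

/-- `G α E u = ∫_{(u,1)∩E} y^{α-1} dy`. -/
def G (α : ℝ) (E : Set ℝ) (u : ℝ) : ℝ := ∫ y in Ioo u 1 ∩ E, y ^ (α - 1)

variable {α β : ℝ} {E : Set ℝ}

lemma kIntSub (hα : 0 < α) {A : Set ℝ} (hA : A ⊆ Ioc 0 1) :
    IntegrableOn (fun y : ℝ => y ^ (α - 1)) A volume :=
  (kIntIoc hα).mono_set hA

lemma inner_eq (hE : MeasurableSet E) (r : ℝ) :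
    ∫ y in Ioo (r ^ β) 1, y ^ (α - 1) * E.indicator 1 y = G α E (r ^ β) := by
  have : (fun y : ℝ => y ^ (α - 1) * E.indicator 1 y)
      = fun y : ℝ => E.indicator (fun y => y ^ (α - 1)) y := by
    funext y; by_cases h : y ∈ E <;> simp [h]
  rw [this, setIntegral_indicator hE]; rfl

lemma G_nonneg (hE : MeasurableSet E) (hEs : E ⊆ Ioo 0 1) (u : ℝ) : 0 ≤ G α E u := by
  refine setIntegral_nonneg (measurableSet_Ioo.inter hE) fun y hy => ?_
  exact Real.rpow_nonneg (hEs hy.2).1.le _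

lemma G_le (hα : 0 < α) (hE : MeasurableSet E) (hEs : E ⊆ Ioo 0 1) (u : ℝ) :
    G α E u ≤ 1 / α := by
  have h1 : G α E u ≤ ∫ y in Ioc 0 1, y ^ (α - 1) := by
    refine setIntegral_mono_set (kIntIoc hα) ?_ ?_
    · filter_upwards [self_mem_ae_restrict measurableSet_Ioc] with y hy
      exact Real.rpow_nonneg hy.1.le _
    · exact HasSubset.Subset.eventuallyLE fun y hy =>
        ⟨(hEs hy.2).1, (hEs hy.2).2.le⟩
  rwa [kVal hα (by norm_num), Real.one_rpow] at h1

lemma G_antitone (hα : 0 < α) (hE : MeasurableSet E) (hEs : E ⊆ Ioo 0 1) :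
    Antitone (G α E) := by
  intro u₁ u₂ h
  refine setIntegral_mono_set (kIntSub hα ?_) ?_ ?_
  · exact fun y hy => ⟨(hEs hy.2).1, (hEs hy.2).2.le⟩
  · filter_upwards [self_mem_ae_restrict (measurableSet_Ioo.inter hE)] with y hy
    exact Real.rpow_nonneg (hEs hy.2).1.le _
  · exact HasSubset.Subset.eventuallyLE fun y hy => ⟨⟨lt_of_le_of_lt h hy.1.1, hy.1.2⟩, hy.2⟩

lemma Grpow_meas (hα : 0 < α) (hE : MeasurableSet E) (hEs : E ⊆ Ioo 0 1) :
    Measurable fun r : ℝ => G α E (r ^ β) :=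
  ((G_antitone hα hE hEs).measurable).comp (meas_rpow β)

lemma Grpow_int (hα : 0 < α) (hE : MeasurableSet E) (hEs : E ⊆ Ioo 0 1) {s : ℝ} :
    IntegrableOn (fun r : ℝ => G α E (r ^ β)) (Ioo 0 s) volume := by
  refine Integrable.mono' (g := fun _ => 1 / α)
    (integrableOn_const measure_Ioo_lt_top.ne)
    ((Grpow_meas hα hE hEs).aestronglyMeasurable) ?_
  filter_upwards with r
  rw [Real.norm_eq_abs, abs_of_nonneg (G_nonneg hE hEs _)]
  exact G_le hα hE hEs _

lemma min_int (hα : 0 < α) (hE : MeasurableSet E) (hEs : E ⊆ Ioo 0 1) {s : ℝ}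
    (hs0 : 0 < s) (hs1 : s ≤ 1) :
    IntegrableOn (fun y : ℝ => y ^ (α - 1) * min s (y ^ (1/β))) E volume := by
  refine Integrable.mono' (g := fun y => y ^ (α - 1))
    (kIntSub hα fun y hy => ⟨(hEs hy).1, (hEs hy).2.le⟩)
    (((meas_rpow (α - 1)).mul (measurable_const.min (meas_rpow (1/β)))).aestronglyMeasurable) ?_
  filter_upwards [self_mem_ae_restrict hE] with y hy
  have hy0 : 0 < y := (hEs hy).1
  have hm0 : 0 ≤ min s (y ^ (1/β)) := le_min hs0.le (Real.rpow_nonneg hy0.le _)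
  have hm1 : min s (y ^ (1/β)) ≤ 1 := le_trans (min_le_left _ _) hs1
  rw [Real.norm_eq_abs, abs_of_nonneg (mul_nonneg (Real.rpow_nonneg hy0.le _) hm0)]
  calc y ^ (α - 1) * min s (y ^ (1/β)) ≤ y ^ (α - 1) * 1 :=
        mul_le_mul_of_nonneg_left hm1 (Real.rpow_nonneg hy0.le _)
    _ = y ^ (α - 1) := mul_one _

lemma fubini (hα : 0 < α) (hβ : 0 < β) (hE : MeasurableSet E) (hEs : E ⊆ Ioo 0 1)
    {s : ℝ} (hs0 : 0 < s) (hs1 : s ≤ 1) :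
    ∫ r in Ioo 0 s, G α E (r ^ β) = ∫ y in E, y ^ (α - 1) * min s (y ^ (1/β)) := by
  set κ : ℝ → ℝ≥0∞ := fun y => ENNReal.ofReal (y ^ (α - 1)) with hκ
  have hκm : Measurable κ := (meas_rpow (α - 1)).ennreal_ofReal
  -- Step 1: LHS as lintegral
  have h1 : ∫ r in Ioo 0 s, G α E (r ^ β)
      = (∫⁻ r in Ioo 0 s, ENNReal.ofReal (G α E (r ^ β))).toReal := by
    rw [integral_eq_lintegral_of_nonneg_ae
      (Eventually.of_forall fun r => G_nonneg hE hEs _)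
      (Grpow_meas hα hE hEs).aestronglyMeasurable]
  -- Step 2: ofReal G = inner lintegral
  have h2 : ∀ r : ℝ, ENNReal.ofReal (G α E (r ^ β))
      = ∫⁻ y in Ioo (r ^ β) 1 ∩ E, κ y := by
    intro r
    refine ofReal_integral_eq_lintegral_ofReal
      (kIntSub hα fun y hy => ⟨(hEs hy.2).1, (hEs hy.2).2.le⟩) ?_
    filter_upwards [self_mem_ae_restrict (measurableSet_Ioo.inter hE)] with y hy
    exact Real.rpow_nonneg (hEs hy.2).1.le _
  -- the two-variable function
  set F : ℝ → ℝ → ℝ≥0∞ := fun r y =>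
    (Ioo (0:ℝ) s).indicator 1 r * (E.indicator κ y * (Ioi (r ^ β)).indicator 1 y) with hF
  have hFmeas : Measurable (Function.uncurry F) := by
    have m1 : Measurable fun p : ℝ × ℝ => (Ioo (0:ℝ) s).indicator (1 : ℝ → ℝ≥0∞) p.1 :=
      (measurable_one.indicator measurableSet_Ioo).comp measurable_fst
    have m2 : Measurable fun p : ℝ × ℝ => E.indicator κ p.2 :=
      (hκm.indicator hE).comp measurable_snd
    have m3 : Measurable fun p : ℝ × ℝ => (Ioi (p.1 ^ β)).indicator (1 : ℝ → ℝ≥0∞) p.2 := by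
      have heq : (fun p : ℝ × ℝ => (Ioi (p.1 ^ β)).indicator (1 : ℝ → ℝ≥0∞) p.2)
          = {q : ℝ × ℝ | q.1 ^ β < q.2}.indicator 1 := by
        funext p
        by_cases h : p.1 ^ β < p.2 <;>
          simp [Set.indicator_apply, h, Set.mem_Ioi]
      rw [heq]
      exact measurable_one.indicator
        (measurableSet_lt ((meas_rpow β).comp measurable_fst) measurable_snd)
    exact m1.mul (m2.mul m3)
  -- LHS lintegral = iterated lintegral of F
  have h3 : ∫⁻ r in Ioo 0 s, ENNReal.ofReal (G α E (r ^ β)) = ∫⁻ r, ∫⁻ y, F r y := by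
    rw [← lintegral_indicator measurableSet_Ioo]
    refine lintegral_congr fun r => ?_
    by_cases hr : r ∈ Ioo (0:ℝ) s
    · rw [Set.indicator_of_mem hr, h2 r, hF]
      have hset : Ioo (r ^ β) 1 ∩ E = E ∩ Ioi (r ^ β) := by
        ext y
        constructor
        · rintro ⟨hy1, hy2⟩; exact ⟨hy2, hy1.1⟩
        · rintro ⟨hy1, hy2⟩; exact ⟨⟨hy2, (hEs hy1).2⟩, hy1⟩
      rw [hset]
      rw [← lintegral_indicator (hE.inter measurableSet_Ioi)]
      refine lintegral_congr fun y => ?_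
      simp only [Set.indicator_of_mem hr, Pi.one_apply, one_mul]
      by_cases hy : y ∈ E <;> by_cases hy2 : y ∈ Ioi (r ^ β) <;>
        simp [Set.indicator_apply, hy, hy2]
    · rw [Set.indicator_of_notMem hr, hF]
      simp only [Set.indicator_of_notMem hr, zero_mul, lintegral_zero]
  -- swap
  have h4 : ∫⁻ r, ∫⁻ y, F r y = ∫⁻ y, ∫⁻ r, F r y :=
    lintegral_lintegral_swap hFmeas.aemeasurable
  -- compute inner integral in r
  have h5 : ∀ y : ℝ, ∫⁻ r, F r y
      = E.indicator (fun y => κ y * ENNReal.ofReal (min s (y ^ (1/β)))) y := by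
    intro y
    by_cases hy : y ∈ E
    · have hy0 : 0 < y := (hEs hy).1
      have hy1 : y < 1 := (hEs hy).2
      rw [Set.indicator_of_mem hy]
      have hFy : ∀ r, F r y = E.indicator κ y * (Ioo (0:ℝ) s ∩ {r : ℝ | r ^ β < y}).indicator 1 r := by
        intro r
        have : (Ioi (r ^ β)).indicator (1 : ℝ → ℝ≥0∞) y = ({r : ℝ | r ^ β < y}).indicator 1 r := by
          by_cases h : r ^ β < y <;> simp [Set.indicator_apply, h, Set.mem_Ioi]
        rw [hF]
        simp only [this]
        by_cases h1 : r ∈ Ioo (0:ℝ) s <;> by_cases h2 : r ∈ {r : ℝ | r ^ β < y} <;>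
          simp [Set.indicator_apply, h1, h2, mul_comm]
      simp only [hFy]
      rw [lintegral_const_mul (E.indicator κ y)
        (f := fun r => (Ioo (0:ℝ) s ∩ {r : ℝ | r ^ β < y}).indicator 1 r)
        (measurable_one.indicator
          (measurableSet_Ioo.inter (measurableSet_lt (meas_rpow β) measurable_const)))]
      have hseteq : Ioo (0:ℝ) s ∩ {r : ℝ | r ^ β < y} = Ioo 0 (min s (y ^ (1/β))) := by
        ext r
        simp only [Set.mem_inter_iff, Set.mem_Ioo, Set.mem_setOf_eq, lt_min_iff]
        constructor
        · rintro ⟨⟨h0, hs⟩, hb⟩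
          refine ⟨h0, hs, ?_⟩
          rw [one_div, Real.lt_rpow_inv_iff_of_pos h0.le hy0.le hβ]
          exact hb
        · rintro ⟨h0, hs, hb⟩
          refine ⟨⟨h0, hs⟩, ?_⟩
          rw [one_div] at hb
          rwa [Real.lt_rpow_inv_iff_of_pos h0.le hy0.le hβ] at hb
      rw [hseteq, lintegral_indicator_one measurableSet_Ioo, Real.volume_Ioo, sub_zero]
      rw [Set.indicator_of_mem hy]
    · have hFy : ∀ r, F r y = 0 := by
        intro r
        rw [hF]
        simp [Set.indicator_of_notMem hy]
      simp only [hFy, lintegral_zero, Set.indicator_of_notMem hy]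
  -- assemble
  rw [h1, h3, h4]
  have h6 : ∫⁻ y, ∫⁻ r, F r y
      = ∫⁻ y in E, κ y * ENNReal.ofReal (min s (y ^ (1/β))) := by
    rw [← lintegral_indicator hE]
    exact lintegral_congr fun y => h5 y
  rw [h6]
  have h7 : ∫⁻ y in E, κ y * ENNReal.ofReal (min s (y ^ (1/β)))
      = ENNReal.ofReal (∫ y in E, y ^ (α - 1) * min s (y ^ (1/β))) := by
    rw [ofReal_integral_eq_lintegral_ofReal (min_int hα hE hEs hs0 hs1) ?_]
    · refine lintegral_congr_ae ?_
      filter_upwards [self_mem_ae_restrict hE] with y hy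
      rw [ENNReal.ofReal_mul (Real.rpow_nonneg (hEs hy).1.le _)]
    · filter_upwards [self_mem_ae_restrict hE] with y hy
      exact mul_nonneg (Real.rpow_nonneg (hEs hy).1.le _)
        (le_min hs0.le (Real.rpow_nonneg (hEs hy).1.le _))
  rw [h7, ENNReal.toReal_ofReal]
  exact setIntegral_nonneg hE fun y hy => mul_nonneg (Real.rpow_nonneg (hEs hy).1.le _)
    (le_min hs0.le (Real.rpow_nonneg (hEs hy).1.le _))

end S8

namespace S8

lemma rpow_mem {β x : ℝ} (hβ : 0 < β) (hx : x ∈ Ioo (0:ℝ) 1) : x ^ (1/β) ∈ Ioo (0:ℝ) 1 :=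
  ⟨Real.rpow_pos_of_pos hx.1 _, Real.rpow_lt_one hx.1.le hx.2 (by positivity)⟩

lemma phi_le {φ : ℝ → ℝ} (hφ : QuasiconcaveOn01 φ) {u : ℝ} (hu : u ∈ Ioo (0:ℝ) 1) :
    φ u ≤ 2 * φ (1/2) := by
  obtain ⟨h0, hpos, hnn, hmono, hanti⟩ := hφ
  have hhalf : (1/2 : ℝ) ∈ Ioo (0:ℝ) 1 := by norm_num
  rcases le_or_gt u (1/2) with h | h
  · have h1 := hmono hu hhalf h
    have h2 : 0 < φ (1/2) := hpos _ hhalf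
    linarith
  · have h1 : φ u / u ≤ φ (1/2) / (1/2) := hanti hhalf hu h.le
    have h2 : φ (1/2) / (1/2) = 2 * φ (1/2) := by ring
    have h3 : φ u ≤ 2 * φ (1/2) * u := (div_le_iff₀ hu.1).mp (h1.trans_eq h2)
    have h4 : 0 < φ (1/2) := hpos _ hhalf
    nlinarith [hu.2]

lemma psi_le {α β : ℝ} (hβ : 0 < β) {φ : ℝ → ℝ} (hφ : QuasiconcaveOn01 φ)
    {s y : ℝ} (hs : s ∈ Ioo (0:ℝ) 1) (hy : y ∈ Ioo (0:ℝ) 1) :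
    φ s / s * (y ^ (α - 1) * min s (y ^ (1/β))) ≤ φ (y ^ (1/β)) * y ^ (α - 1) := by
  obtain ⟨h0, hpos, hnn, hmono, hanti⟩ := hφ
  have hu : y ^ (1/β) ∈ Ioo (0:ℝ) 1 := rpow_mem hβ hy
  have hk : (0:ℝ) ≤ y ^ (α - 1) := Real.rpow_nonneg hy.1.le _
  rcases le_total s (y ^ (1/β)) with h | h
  · rw [min_eq_left h]
    have e1 : φ s / s * (y ^ (α - 1) * s) = φ s * y ^ (α - 1) := by
      field_simp [hs.1.ne']
    rw [e1]
    exact mul_le_mul_of_nonneg_right (hmono hs hu h) hk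
  · rw [min_eq_right h]
    have h1 : φ s / s ≤ φ (y ^ (1/β)) / (y ^ (1/β)) := hanti hu hs h
    calc φ s / s * (y ^ (α - 1) * y ^ (1/β))
        ≤ φ (y ^ (1/β)) / (y ^ (1/β)) * (y ^ (α - 1) * y ^ (1/β)) :=
          mul_le_mul_of_nonneg_right h1
            (mul_nonneg hk (Real.rpow_nonneg hy.1.le _))
      _ = φ (y ^ (1/β)) * y ^ (α - 1) := by
          rw [mul_comm (y ^ (α - 1)) (y ^ (1/β)), ← mul_assoc, div_mul_cancel₀ _ hu.1.ne']

end S8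

theorem statement8 (α β : ℝ) (hα : 0 < α) (hα1 : α < 1) (hβ : 0 < β)
    (hαβ : 1 ≤ α + 1 / β) :
    ∃ c₁ c₂ : ℝ, 0 < c₁ ∧ 0 < c₂ ∧
      ∀ φ : ℝ → ℝ, QuasiconcaveOn01 φ →
        ∀ t ∈ Set.Ioo (0:ℝ) (1/2),
          c₁ * (t * sSup ((fun s => φ (s ^ (1/β)) * s ^ (α - 1)) '' Set.Ioo t 1))
              ≤ PhiFun α β φ t ∧
          PhiFun α β φ t
              ≤ c₂ * (t * sSup ((fun s => φ (s ^ (1/β)) * s ^ (α - 1)) '' Set.Ioo t 1)) := by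
  have hc₁ : (0:ℝ) < 2 ^ (α-1) * (1/2:ℝ) ^ (1/β) := by positivity
  have hc₂ : (0:ℝ) < 1 + 2 ^ (1-α) / α := by positivity
  refine ⟨2 ^ (α-1) * (1/2:ℝ) ^ (1/β), 1 + 2 ^ (1-α) / α, hc₁, hc₂, ?_⟩
  intro φ hφ t ht
  obtain ⟨ht0, ht2⟩ := ht
  obtain ⟨hφ0, hφpos, hφnn, hφmono, hφanti⟩ := hφ
  set f : ℝ → ℝ := fun s => φ (s ^ (1/β)) * s ^ (α - 1) with hfdef
  set S : ℝ := sSup (f '' Ioo t 1) with hSdef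
  have h2t : 2*t ∈ Ioo t 1 := ⟨by linarith, by linarith⟩
  have hmem01 : ∀ {y : ℝ}, y ∈ Ioo t 1 → y ∈ Ioo (0:ℝ) 1 :=
    fun hy => ⟨lt_trans ht0 hy.1, hy.2⟩
  have hf_nonneg : ∀ y ∈ Ioo t 1, 0 ≤ f y := by
    intro y hy
    exact mul_nonneg (hφpos _ (S8.rpow_mem hβ (hmem01 hy))).le
      (Real.rpow_nonneg (lt_trans ht0 hy.1).le _)
  have hbdd : BddAbove (f '' Ioo t 1) := by
    refine ⟨2 * φ (1/2) * t ^ (α-1), ?_⟩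
    rintro v ⟨y, hy, rfl⟩
    have hy0 : 0 < y := lt_trans ht0 hy.1
    refine mul_le_mul (S8.phi_le ⟨hφ0, hφpos, hφnn, hφmono, hφanti⟩ (S8.rpow_mem hβ (hmem01 hy)))
      (Real.rpow_le_rpow_of_nonpos ht0 hy.1.le (by linarith))
      (Real.rpow_nonneg hy0.le _) ?_
    have := hφpos (1/2) (by norm_num)
    linarith
  have hS_ge : ∀ y ∈ Ioo t 1, f y ≤ S := fun y hy => le_csSup hbdd ⟨y, hy, rfl⟩
  have hS0 : 0 ≤ S := le_trans (hf_nonneg _ h2t) (hS_ge _ h2t)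
  have htexp : t ^ (α-1) = 2 ^ (1-α) * (2*t) ^ (α-1) := by
    rw [Real.mul_rpow (by norm_num) ht0.le, ← mul_assoc, ← Real.rpow_add two_pos]
    norm_num
  have hkey : φ (t ^ (1/β)) * t ^ (α-1) ≤ 2 ^ (1-α) * S := by
    have hm : φ (t ^ (1/β)) ≤ φ ((2*t) ^ (1/β)) := by
      refine hφmono (S8.rpow_mem hβ ⟨ht0, by linarith⟩) (S8.rpow_mem hβ (hmem01 h2t)) ?_
      exact Real.rpow_le_rpow ht0.le (by linarith) (by positivity)
    calc φ (t ^ (1/β)) * t ^ (α-1)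
        = φ (t ^ (1/β)) * (2 ^ (1-α) * (2*t) ^ (α-1)) := by rw [← htexp]
      _ ≤ φ ((2*t) ^ (1/β)) * (2 ^ (1-α) * (2*t) ^ (α-1)) := by
          refine mul_le_mul_of_nonneg_right hm (by positivity)
      _ = 2 ^ (1-α) * f (2*t) := by rw [hfdef]; ring
      _ ≤ 2 ^ (1-α) * S := by
          refine mul_le_mul_of_nonneg_left (hS_ge _ h2t) (by positivity)
  -- key upper bound on each element of the marcQ sup
  have hElemBd : ∀ E : Set ℝ, MeasurableSet E → E ⊆ Ioo 0 1 → volume E = ENNReal.ofReal t →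
      ∀ s ∈ Ioo (0:ℝ) 1,
      (φ s / s) * ∫ r in Ioo (0:ℝ) s, ∫ y in Ioo (r ^ β) 1, y ^ (α - 1) * E.indicator 1 y
        ≤ (1 + 2 ^ (1-α) / α) * (t * S) := by
    intro E hE hEs hvol s hs
    have hinner : (∫ r in Ioo (0:ℝ) s, ∫ y in Ioo (r ^ β) 1, y ^ (α - 1) * E.indicator 1 y)
        = ∫ r in Ioo (0:ℝ) s, S8.G α E (r ^ β) :=
      integral_congr_ae (Eventually.of_forall fun r => S8.inner_eq hE r)
    rw [hinner, S8.fubini hα hβ hE hEs hs.1 hs.2.le, ← integral_const_mul]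
    have hc0 : 0 ≤ φ s / s := div_nonneg (hφpos s hs).le hs.1.le
    have hdisj : Disjoint (E ∩ Ioc 0 t) (E ∩ Ioo t 1) := by
      rw [Set.disjoint_left]
      rintro y ⟨_, hy1⟩ ⟨_, hy2⟩
      exact absurd hy2.1 (not_lt.2 hy1.2)
    have hint : ∀ A : Set ℝ, MeasurableSet A → A ⊆ Ioo 0 1 →
        IntegrableOn (fun y => φ s / s * (y ^ (α - 1) * min s (y ^ (1/β)))) A volume := by
      intro A hAm hA
      exact (S8.min_int hα hAm hA hs.1 hs.2.le).const_mul _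
    have hsub1 : E ∩ Ioc 0 t ⊆ Ioo 0 1 := fun y hy => hEs hy.1
    have hsub2 : E ∩ Ioo t 1 ⊆ Ioo 0 1 := fun y hy => hEs hy.1
    have hdec : E = (E ∩ Ioc 0 t) ∪ (E ∩ Ioo t 1) := by
      ext y
      constructor
      · intro hy
        rcases le_or_gt y t with h | h
        · exact Or.inl ⟨hy, (hEs hy).1, h⟩
        · exact Or.inr ⟨hy, h, (hEs hy).2⟩
      · rintro (⟨hy, _⟩ | ⟨hy, _⟩) <;> exact hy
    have hsplit : ∫ y in E, φ s / s * (y ^ (α - 1) * min s (y ^ (1/β)))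
        = (∫ y in E ∩ Ioc 0 t, φ s / s * (y ^ (α - 1) * min s (y ^ (1/β))))
          + ∫ y in E ∩ Ioo t 1, φ s / s * (y ^ (α - 1) * min s (y ^ (1/β))) := by
      conv_lhs => rw [hdec]
      exact setIntegral_union hdisj (hE.inter measurableSet_Ioo)
        (hint _ (hE.inter measurableSet_Ioc) hsub1) (hint _ (hE.inter measurableSet_Ioo) hsub2)
    rw [hsplit]
    have hB1 : (∫ y in E ∩ Ioc 0 t, φ s / s * (y ^ (α - 1) * min s (y ^ (1/β))))
        ≤ 2 ^ (1-α) / α * (t * S) := by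
      have hstep1 : (∫ y in E ∩ Ioc 0 t, φ s / s * (y ^ (α - 1) * min s (y ^ (1/β))))
          ≤ ∫ y in E ∩ Ioc 0 t, φ (t ^ (1/β)) * y ^ (α - 1) := by
        refine setIntegral_mono_on (hint _ (hE.inter measurableSet_Ioc) hsub1)
          ((S8.kIntSub hα fun y hy => ⟨(hsub1 hy).1, (hsub1 hy).2.le⟩).const_mul _)
          (hE.inter measurableSet_Ioc) ?_
        intro y hy
        have hy01 : y ∈ Ioo (0:ℝ) 1 := hsub1 hy
        refine le_trans (S8.psi_le hβ ⟨hφ0, hφpos, hφnn, hφmono, hφanti⟩ hs hy01) ?_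
        refine mul_le_mul_of_nonneg_right ?_ (Real.rpow_nonneg hy01.1.le _)
        refine hφmono (S8.rpow_mem hβ hy01) (S8.rpow_mem hβ ⟨ht0, by linarith⟩) ?_
        exact Real.rpow_le_rpow hy01.1.le hy.2.2 (by positivity)
      have hstep2 : (∫ y in E ∩ Ioc 0 t, φ (t ^ (1/β)) * y ^ (α - 1))
          ≤ φ (t ^ (1/β)) * (t ^ α / α) := by
        rw [integral_const_mul]
        refine mul_le_mul_of_nonneg_left ?_ (hφpos _ (S8.rpow_mem hβ ⟨ht0, by linarith⟩)).le
        have h3 : (∫ y in E ∩ Ioc 0 t, y ^ (α-1)) ≤ ∫ y in Ioc (0:ℝ) t, y ^ (α-1) := by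
          refine setIntegral_mono_set (S8.kIntSub hα (Set.Ioc_subset_Ioc_right (by linarith))) ?_ ?_
          · filter_upwards [self_mem_ae_restrict measurableSet_Ioc] with y hy
            exact Real.rpow_nonneg hy.1.le _
          · exact HasSubset.Subset.eventuallyLE inter_subset_right
        rwa [S8.kVal hα ht0.le] at h3
      have hstep3 : φ (t ^ (1/β)) * (t ^ α / α) ≤ 2 ^ (1-α) / α * (t * S) := by
        have htα : t ^ α = t * t ^ (α-1) := by
          rw [show α = 1 + (α-1) by ring]
          rw [Real.rpow_add ht0, Real.rpow_one]
          ring_nf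
        have h4 : φ (t ^ (1/β)) * t ^ (α-1) * t ≤ 2 ^ (1-α) * S * t :=
          mul_le_mul_of_nonneg_right hkey ht0.le
        calc φ (t ^ (1/β)) * (t ^ α / α) = φ (t ^ (1/β)) * t ^ (α-1) * t / α := by
              rw [htα]; ring
          _ ≤ 2 ^ (1-α) * S * t / α := (div_le_div_iff_of_pos_right hα).mpr h4
          _ = 2 ^ (1-α) / α * (t * S) := by ring
      linarith
    have hB2 : (∫ y in E ∩ Ioo t 1, φ s / s * (y ^ (α - 1) * min s (y ^ (1/β)))) ≤ t * S := by
      have hμ : volume (E ∩ Ioo t 1) < ⊤ :=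
        lt_of_le_of_lt (measure_mono inter_subset_left) (hvol ▸ ENNReal.ofReal_lt_top)
      have hstep1 : (∫ y in E ∩ Ioo t 1, φ s / s * (y ^ (α - 1) * min s (y ^ (1/β))))
          ≤ ∫ _ in E ∩ Ioo t 1, S := by
        refine setIntegral_mono_on (hint _ (hE.inter measurableSet_Ioo) hsub2)
          (integrableOn_const hμ.ne) (hE.inter measurableSet_Ioo) ?_
        intro y hy
        refine le_trans (S8.psi_le hβ ⟨hφ0, hφpos, hφnn, hφmono, hφanti⟩ hs (hsub2 hy)) ?_
        exact hS_ge y hy.2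
      have hstep2 : (∫ _ in E ∩ Ioo t 1, S) ≤ t * S := by
        rw [setIntegral_const, smul_eq_mul, measureReal_def]
        refine mul_le_mul_of_nonneg_right ?_ hS0
        refine ENNReal.toReal_le_of_le_ofReal ht0.le ?_
        exact hvol ▸ measure_mono inter_subset_left
      linarith
    linarith [hB1, hB2]
  -- consequences of hElemBd
  have hmarcQ_le : ∀ E : Set ℝ, MeasurableSet E → E ⊆ Ioo 0 1 → volume E = ENNReal.ofReal t →
      marcQ α β φ E ≤ (1 + 2 ^ (1-α) / α) * (t * S) := by
    intro E hE hEs hvol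
    refine Real.sSup_le ?_ (by positivity)
    rintro v ⟨s, hs, rfl⟩
    exact hElemBd E hE hEs hvol s hs
  have hPhi_le : PhiFun α β φ t ≤ (1 + 2 ^ (1-α) / α) * (t * S) := by
    refine Real.sSup_le ?_ (by positivity)
    rintro v ⟨E, hE, hEs, hvol, rfl⟩
    exact hmarcQ_le E hE hEs hvol
  have hPhiBdd : BddAbove {v : ℝ | ∃ E : Set ℝ, MeasurableSet E ∧ E ⊆ Set.Ioo 0 1 ∧
      volume E = ENNReal.ofReal t ∧ v = marcQ α β φ E} := by
    refine ⟨(1 + 2 ^ (1-α) / α) * (t * S), ?_⟩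
    rintro v ⟨E, hE, hEs, hvol, rfl⟩
    exact hmarcQ_le E hE hEs hvol
  -- lower bound claim for u ∈ [2t, 1)
  have hClaim : ∀ u : ℝ, 2*t ≤ u → u < 1 → (1/2:ℝ) ^ (1/β) * (t * f u) ≤ PhiFun α β φ t := by
    intro u h2tu hu1
    have hu0 : 0 < u := lt_of_lt_of_le (by linarith) h2tu
    have hutpos : 0 < u - t := by linarith
    set E : Set ℝ := Ioo (u - t) u with hEdef
    have hE : MeasurableSet E := measurableSet_Ioo
    have hEs : E ⊆ Ioo 0 1 := fun y hy => ⟨lt_trans hutpos hy.1, lt_trans hy.2 hu1⟩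
    have hvol : volume E = ENNReal.ofReal t := by
      rw [hEdef, Real.volume_Ioo]
      congr 1
      ring
    have hs : u ^ (1/β) ∈ Ioo (0:ℝ) 1 := S8.rpow_mem hβ ⟨hu0, hu1⟩
    set s : ℝ := u ^ (1/β) with hsdef
    set w : ℝ := (u - t) ^ (1/β) with hwdef
    have hw0 : 0 ≤ w := Real.rpow_nonneg hutpos.le _
    have hws : w ≤ s := Real.rpow_le_rpow hutpos.le (by linarith) (by positivity)
    have hA : (0:ℝ) ≤ t * u ^ (α-1) := mul_nonneg ht0.le (Real.rpow_nonneg hu0.le _)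
    have hGconst : ∀ r ∈ Ioo (0:ℝ) w, t * u ^ (α-1) ≤ S8.G α E (r ^ β) := by
      intro r hr
      have hwβ : w ^ β = u - t := by
        rw [hwdef, ← Real.rpow_mul hutpos.le, one_div_mul_cancel hβ.ne', Real.rpow_one]
      have hrb : r ^ β < u - t := by
        have h1 : r ^ β < w ^ β := Real.rpow_lt_rpow hr.1.le hr.2 hβ
        rwa [hwβ] at h1
      have hEsubIoo : E ⊆ Ioo (r ^ β) 1 := fun y hy =>
        ⟨lt_trans hrb hy.1, lt_trans hy.2 hu1⟩
      have hGeq : S8.G α E (r ^ β) = ∫ y in E, y ^ (α-1) := by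
        rw [S8.G, Set.inter_eq_self_of_subset_right hEsubIoo]
      rw [hGeq]
      have hμE : volume E < ⊤ := hvol ▸ ENNReal.ofReal_lt_top
      calc t * u ^ (α-1) = (volume E).toReal * u ^ (α-1) := by
            rw [hvol, ENNReal.toReal_ofReal ht0.le]
        _ = ∫ _ in E, u ^ (α-1) := by rw [setIntegral_const, smul_eq_mul, measureReal_def]
        _ ≤ ∫ y in E, y ^ (α-1) := by
            refine setIntegral_mono_on (integrableOn_const hμE.ne)
              (S8.kIntSub hα fun y hy => ⟨(hEs hy).1, (hEs hy).2.le⟩) hE ?_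
            intro y hy
            exact Real.rpow_le_rpow_of_nonpos (lt_trans hutpos hy.1) hy.2.le (by linarith)
    have hJ : w * (t * u ^ (α-1)) ≤ ∫ r in Ioo (0:ℝ) s, S8.G α E (r ^ β) := by
      have hstep1 : (∫ r in Ioo (0:ℝ) w, S8.G α E (r ^ β))
          ≤ ∫ r in Ioo (0:ℝ) s, S8.G α E (r ^ β) := by
        refine setIntegral_mono_set (S8.Grpow_int hα hE hEs)
          (Eventually.of_forall fun r => S8.G_nonneg hE hEs _) ?_
        exact HasSubset.Subset.eventuallyLE (Set.Ioo_subset_Ioo_right hws)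
      have hstep2 : w * (t * u ^ (α-1)) ≤ ∫ r in Ioo (0:ℝ) w, S8.G α E (r ^ β) := by
        calc w * (t * u ^ (α-1))
            = (volume (Ioo (0:ℝ) w)).toReal * (t * u ^ (α-1)) := by
              rw [Real.volume_Ioo, sub_zero, ENNReal.toReal_ofReal hw0]
          _ = ∫ _ in Ioo (0:ℝ) w, (t * u ^ (α-1)) := by rw [setIntegral_const, smul_eq_mul, measureReal_def]
          _ ≤ ∫ r in Ioo (0:ℝ) w, S8.G α E (r ^ β) := by
              refine setIntegral_mono_on
                (integrableOn_const measure_Ioo_lt_top.ne)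
                (S8.Grpow_int hα hE hEs) measurableSet_Ioo hGconst
      linarith
    have hφs : 0 < φ s := hφpos s hs
    have hcs : 0 ≤ φ s / s := div_nonneg hφs.le hs.1.le
    have hval : (1/2:ℝ) ^ (1/β) * (t * f u)
        ≤ (φ s / s) * ∫ r in Ioo (0:ℝ) s, ∫ y in Ioo (r ^ β) 1, y ^ (α-1) * E.indicator 1 y := by
      have hinner : (∫ r in Ioo (0:ℝ) s, ∫ y in Ioo (r ^ β) 1, y ^ (α-1) * E.indicator 1 y)
          = ∫ r in Ioo (0:ℝ) s, S8.G α E (r ^ β) :=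
        integral_congr_ae (Eventually.of_forall fun r => S8.inner_eq hE r)
      rw [hinner]
      have hw2 : (1/2:ℝ) ^ (1/β) * s ≤ w := by
        have hut2 : (u/2 : ℝ) ≤ u - t := by linarith
        calc (1/2:ℝ) ^ (1/β) * s = (1/2 * u) ^ (1/β) := by
              rw [Real.mul_rpow (by norm_num) hu0.le]
          _ ≤ w := by
              rw [hwdef]
              exact Real.rpow_le_rpow (by positivity) (by linarith) (by positivity)
      calc (1/2:ℝ) ^ (1/β) * (t * f u)
          = (φ s / s) * ((1/2:ℝ) ^ (1/β) * s * (t * u ^ (α-1))) := by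
            rw [hfdef]
            field_simp [hs.1.ne']
            ring
        _ ≤ (φ s / s) * (w * (t * u ^ (α-1))) := by
            refine mul_le_mul_of_nonneg_left (mul_le_mul_of_nonneg_right hw2 hA) hcs
        _ ≤ (φ s / s) * ∫ r in Ioo (0:ℝ) s, S8.G α E (r ^ β) :=
            mul_le_mul_of_nonneg_left hJ hcs
    have hMbdd : BddAbove ((fun s => (φ s / s) *
        ∫ r in Set.Ioo (0:ℝ) s, ∫ y in Set.Ioo (r ^ β) 1, y ^ (α - 1) * E.indicator 1 y) ''
          Set.Ioo (0:ℝ) 1) := by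
      refine ⟨(1 + 2 ^ (1-α) / α) * (t * S), ?_⟩
      rintro v ⟨s', hs', rfl⟩
      exact hElemBd E hE hEs hvol s' hs'
    calc (1/2:ℝ) ^ (1/β) * (t * f u)
        ≤ (φ s / s) * ∫ r in Ioo (0:ℝ) s, ∫ y in Ioo (r ^ β) 1, y ^ (α-1) * E.indicator 1 y :=
          hval
      _ ≤ marcQ α β φ E := le_csSup hMbdd ⟨s, hs, rfl⟩
      _ ≤ PhiFun α β φ t := le_csSup hPhiBdd ⟨E, hE, hEs, hvol, rfl⟩
  -- assemble the lower bound
  have hstep : ∀ v ∈ f '' Ioo t 1,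
      2 ^ (α-1) * (1/2:ℝ) ^ (1/β) * (t * v) ≤ PhiFun α β φ t := by
    rintro v ⟨s₀, hs₀, rfl⟩
    have hs₀0 : 0 < s₀ := lt_trans ht0 hs₀.1
    rcases le_or_gt (2*t) s₀ with h | h
    · have h1 := hClaim s₀ h hs₀.2
      have h21 : (2:ℝ) ^ (α-1) ≤ 1 :=
        Real.rpow_le_one_of_one_le_of_nonpos one_le_two (by linarith)
      have h2 : 2 ^ (α-1) * (1/2:ℝ) ^ (1/β) * (t * f s₀) ≤ (1/2:ℝ) ^ (1/β) * (t * f s₀) := by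
        have hnn : (0:ℝ) ≤ (1/2:ℝ) ^ (1/β) * (t * f s₀) := by
          have := hf_nonneg _ hs₀
          positivity
        nlinarith [Real.rpow_nonneg (by norm_num : (0:ℝ) ≤ 1/2) (1/β),
          mul_nonneg ht0.le (hf_nonneg _ hs₀)]
      linarith
    · have hfle : f s₀ ≤ 2 ^ (1-α) * f (2*t) := by
        have m1 : φ (s₀ ^ (1/β)) ≤ φ ((2*t) ^ (1/β)) := by
          refine hφmono (S8.rpow_mem hβ (hmem01 hs₀)) (S8.rpow_mem hβ (hmem01 h2t)) ?_
          exact Real.rpow_le_rpow hs₀0.le h.le (by positivity)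
        have m2 : s₀ ^ (α-1) ≤ t ^ (α-1) :=
          Real.rpow_le_rpow_of_nonpos ht0 hs₀.1.le (by linarith)
        calc f s₀ = φ (s₀ ^ (1/β)) * s₀ ^ (α-1) := by rw [hfdef]
          _ ≤ φ ((2*t) ^ (1/β)) * t ^ (α-1) := by
              refine mul_le_mul m1 m2 (Real.rpow_nonneg hs₀0.le _)
                (hφpos _ (S8.rpow_mem hβ (hmem01 h2t))).le
          _ = 2 ^ (1-α) * f (2*t) := by
              rw [htexp, hfdef]; ring
      have h1 := hClaim (2*t) le_rfl (by linarith)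
      have e2 : (2:ℝ) ^ (α-1) * (2:ℝ) ^ (1-α) = 1 := by
        rw [← Real.rpow_add two_pos]
        norm_num
      calc 2 ^ (α-1) * (1/2:ℝ) ^ (1/β) * (t * f s₀)
          ≤ 2 ^ (α-1) * (1/2:ℝ) ^ (1/β) * (t * (2 ^ (1-α) * f (2*t))) := by
            refine mul_le_mul_of_nonneg_left (mul_le_mul_of_nonneg_left hfle ht0.le) ?_
            positivity
        _ = (2 ^ (α-1) * 2 ^ (1-α)) * ((1/2:ℝ) ^ (1/β) * (t * f (2*t))) := by ring
        _ = (1/2:ℝ) ^ (1/β) * (t * f (2*t)) := by rw [e2, one_mul]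
        _ ≤ PhiFun α β φ t := h1
  have hc1t : (0:ℝ) < 2 ^ (α-1) * (1/2:ℝ) ^ (1/β) * t := mul_pos hc₁ ht0
  have hSle : S ≤ PhiFun α β φ t / (2 ^ (α-1) * (1/2:ℝ) ^ (1/β) * t) := by
    refine csSup_le ⟨f (2*t), ⟨2*t, h2t, rfl⟩⟩ ?_
    intro v hv
    rw [le_div_iff₀ hc1t]
    calc v * (2 ^ (α-1) * (1/2:ℝ) ^ (1/β) * t)
        = 2 ^ (α-1) * (1/2:ℝ) ^ (1/β) * (t * v) := by ring
      _ ≤ PhiFun α β φ t := hstep v hv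
  constructor
  · have h5 := (le_div_iff₀ hc1t).mp hSle
    calc 2 ^ (α-1) * (1/2:ℝ) ^ (1/β) * (t * S)
        = S * (2 ^ (α-1) * (1/2:ℝ) ^ (1/β) * t) := by ring
      _ ≤ PhiFun α β φ t := h5
  · exact hPhi_le
end
end

section
/- Let 0<α<1, β>0 with α+1/β≥1, and let φ be a quasiconcave function on [0,1). Define ψ(t) := t · sup_{t<s<1} φ(s^{1/β}) s^{α−1} for t∈(0,1), ψ(0)=0. Then ψ is quasiconcave on [0,1), ψ(t) ≥ t^{α} φ(t^{1/β}) for all t∈(0,1), and ψ is (up to equality, not merely equivalence) the smallest such function: if η is any quasiconcave function on [0,1) with η(t) ≥ t^{α} φ(t^{1/β}) for all t∈(0,1), then ψ(t) ≤ η(t) for all t∈(0,1). -/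
open MeasureTheory Filter Set Real Topology
open scoped ENNReal

noncomputable section

/-- `ψ(t) = t ⬝ sup_{t<s<1} φ(s^{1/β}) s^{α-1}` (with `ψ(0) = 0`). -/
def psiFun (α β : ℝ) (φ : ℝ → ℝ) (t : ℝ) : ℝ :=
  t * sSup ((fun s => φ (s ^ (1/β)) * s ^ (α - 1)) '' Set.Ioo t 1)

lemma aux_root_mem {β t : ℝ} (hβ : 0 < β) (ht : t ∈ Set.Ioo (0:ℝ) 1) :
    t ^ (1/β) ∈ Set.Ioo (0:ℝ) 1 :=
  ⟨Real.rpow_pos_of_pos ht.1 _, Real.rpow_lt_one ht.1.le ht.2 (by positivity)⟩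

lemma aux_g_pos {α β : ℝ} {φ : ℝ → ℝ} (hφ : QuasiconcaveOn01 φ) (hβ : 0 < β)
    {s : ℝ} (hs : s ∈ Set.Ioo (0:ℝ) 1) : 0 < φ (s ^ (1/β)) * s ^ (α - 1) :=
  mul_pos (hφ.2.1 _ (aux_root_mem hβ hs)) (Real.rpow_pos_of_pos hs.1 _)

lemma aux_rpow_split {α s : ℝ} (hs : 0 < s) :
    s * (φs * s ^ (α - 1)) = s ^ α * φs := by
  rw [show α = α - 1 + 1 by ring, Real.rpow_add_one hs.ne']
  ring

lemma aux_bdd {α β : ℝ} {φ : ℝ → ℝ} (hφ : QuasiconcaveOn01 φ) (hβ : 0 < β)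
    {t : ℝ} (ht : t ∈ Set.Ioo (0:ℝ) 1) (hα1 : α < 1) :
    BddAbove ((fun s => φ (s ^ (1/β)) * s ^ (α - 1)) '' Set.Ioo t 1) := by
  have hu := aux_root_mem hβ ht
  have huφ : 0 ≤ φ (t ^ (1/β)) := hφ.2.2.1 _ ⟨hu.1.le, hu.2⟩
  refine ⟨(φ (t ^ (1/β)) / t ^ (1/β)) * t ^ (α - 1), ?_⟩
  rintro x ⟨s, hs, rfl⟩
  have hs0 : 0 < s := lt_trans ht.1 hs.1
  have hv : s ^ (1/β) ∈ Set.Ioo (0:ℝ) 1 := aux_root_mem hβ ⟨hs0, hs.2⟩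
  have h1 : φ (s ^ (1/β)) ≤ φ (t ^ (1/β)) / t ^ (1/β) := by
    have h2 : φ (s ^ (1/β)) / s ^ (1/β) ≤ φ (t ^ (1/β)) / t ^ (1/β) :=
      hφ.2.2.2.2 hu hv (Real.rpow_le_rpow ht.1.le hs.1.le (by positivity))
    calc φ (s ^ (1/β)) = φ (s ^ (1/β)) / s ^ (1/β) * s ^ (1/β) := by
          field_simp
      _ ≤ φ (t ^ (1/β)) / t ^ (1/β) * 1 :=
          mul_le_mul h2 hv.2.le hv.1.le (div_nonneg huφ hu.1.le)
      _ = _ := mul_one _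
  have h3 : s ^ (α - 1) ≤ t ^ (α - 1) :=
    Real.rpow_le_rpow_of_nonpos ht.1 hs.1.le (by linarith)
  exact mul_le_mul h1 h3 (Real.rpow_pos_of_pos hs0 _).le (div_nonneg huφ hu.1.le)

lemma aux_key {α β : ℝ} (hα1 : α < 1) (hβ : 0 < β) {φ : ℝ → ℝ} (hφ : QuasiconcaveOn01 φ)
    {t : ℝ} (ht : t ∈ Set.Ioo (0:ℝ) 1) :
    t ^ (α - 1) * φ (t ^ (1/β)) ≤
      sSup ((fun s => φ (s ^ (1/β)) * s ^ (α - 1)) '' Set.Ioo t 1) := by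
  have hbdd := aux_bdd hφ hβ ht hα1
  have hcont : Tendsto (fun s : ℝ => s ^ (α - 1) * φ (t ^ (1/β))) (𝓝[>] t)
      (𝓝 (t ^ (α - 1) * φ (t ^ (1/β)))) := by
    apply Tendsto.mono_left _ nhdsWithin_le_nhds
    exact (Real.continuousAt_rpow_const t (α - 1) (Or.inl ht.1.ne')).mul continuousAt_const
  refine le_of_tendsto hcont ?_
  filter_upwards [Ioo_mem_nhdsGT_of_mem ⟨le_refl t, ht.2⟩] with s hs
  have hs0 : 0 < s := lt_trans ht.1 hs.1
  have h1 : s ^ (α - 1) * φ (t ^ (1/β)) ≤ φ (s ^ (1/β)) * s ^ (α - 1) := by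
    rw [mul_comm]
    exact mul_le_mul_of_nonneg_right
      (hφ.2.2.2.1 (aux_root_mem hβ ht) (aux_root_mem hβ ⟨hs0, hs.2⟩)
        (Real.rpow_le_rpow ht.1.le hs.1.le (by positivity)))
      (Real.rpow_pos_of_pos hs0 _).le
  exact h1.trans (le_csSup hbdd ⟨s, hs, rfl⟩)

theorem statement9 (α β : ℝ) (hα : 0 < α) (hα1 : α < 1) (hβ : 0 < β)
    (hαβ : 1 ≤ α + 1 / β) (φ : ℝ → ℝ) (hφ : QuasiconcaveOn01 φ) :
    QuasiconcaveOn01 (psiFun α β φ) ∧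
    (∀ t ∈ Set.Ioo (0:ℝ) 1, t ^ α * φ (t ^ (1/β)) ≤ psiFun α β φ t) ∧
    (∀ η : ℝ → ℝ, QuasiconcaveOn01 η →
      (∀ t ∈ Set.Ioo (0:ℝ) 1, t ^ α * φ (t ^ (1/β)) ≤ η t) →
      ∀ t ∈ Set.Ioo (0:ℝ) 1, psiFun α β φ t ≤ η t) := by
  set g : ℝ → ℝ := fun s => φ (s ^ (1/β)) * s ^ (α - 1) with hg
  -- part 2: lower bound
  have hlow : ∀ t ∈ Set.Ioo (0:ℝ) 1, t ^ α * φ (t ^ (1/β)) ≤ psiFun α β φ t := by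
    intro t ht
    have := mul_le_mul_of_nonneg_left (aux_key hα1 hβ hφ ht) ht.1.le
    calc t ^ α * φ (t ^ (1/β)) = t * (t ^ (α - 1) * φ (t ^ (1/β))) := by
          rw [show α = α - 1 + 1 by ring, Real.rpow_add_one ht.1.ne']; ring
      _ ≤ psiFun α β φ t := this
  -- positivity of ψ on (0,1)
  have hpos : ∀ t ∈ Set.Ioo (0:ℝ) 1, 0 < psiFun α β φ t := by
    intro t ht
    refine lt_of_lt_of_le ?_ (hlow t ht)
    have := aux_root_mem hβ ht
    exact mul_pos (Real.rpow_pos_of_pos ht.1 _) (hφ.2.1 _ this)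
  -- monotonicity of ψ
  have hmono : MonotoneOn (psiFun α β φ) (Set.Ioo (0:ℝ) 1) := by
    intro t1 ht1 t2 ht2 h12
    have hne : (g '' Set.Ioo t1 1).Nonempty := (Set.nonempty_Ioo.mpr ht1.2).image _
    rw [psiFun, show t1 * sSup ((fun s => φ (s ^ (1/β)) * s ^ (α - 1)) '' Set.Ioo t1 1)
        = t1 * sSup (g '' Set.Ioo t1 1) from rfl,
      ← le_div_iff₀' ht1.1]
    refine csSup_le hne ?_
    rintro x ⟨s, hs, rfl⟩
    rw [le_div_iff₀' ht1.1]
    have hs0 : 0 < s := lt_trans ht1.1 hs.1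
    have hgs : 0 < g s := aux_g_pos hφ hβ ⟨hs0, hs.2⟩
    rcases le_or_gt s t2 with hcase | hcase
    · have h1 : t1 * g s ≤ s * g s := mul_le_mul_of_nonneg_right hs.1.le hgs.le
      have h2 : s * g s = s ^ α * φ (s ^ (1/β)) := by
        rw [show α = α - 1 + 1 by ring, Real.rpow_add_one hs0.ne']; ring
      have h3 : s ^ α * φ (s ^ (1/β)) ≤ t2 ^ α * φ (t2 ^ (1/β)) := by
        have hmφ : φ (s ^ (1/β)) ≤ φ (t2 ^ (1/β)) :=
          hφ.2.2.2.1 (aux_root_mem hβ ⟨hs0, hs.2⟩) (aux_root_mem hβ ht2)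
            (Real.rpow_le_rpow hs0.le hcase (by positivity))
        have huφ : 0 ≤ φ (s ^ (1/β)) := by
          have := aux_root_mem hβ (⟨hs0, hs.2⟩ : s ∈ Set.Ioo (0:ℝ) 1)
          exact hφ.2.2.1 _ ⟨this.1.le, this.2⟩
        exact mul_le_mul (Real.rpow_le_rpow hs0.le hcase hα.le) hmφ huφ
          (Real.rpow_pos_of_pos ht2.1 _).le
      calc t1 * g s ≤ s * g s := h1
        _ = s ^ α * φ (s ^ (1/β)) := h2
        _ ≤ t2 ^ α * φ (t2 ^ (1/β)) := h3
        _ ≤ psiFun α β φ t2 := hlow t2 ht2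
    · have h1 : t1 * g s ≤ t2 * g s := mul_le_mul_of_nonneg_right h12 hgs.le
      have h2 : g s ≤ sSup (g '' Set.Ioo t2 1) :=
        le_csSup (aux_bdd hφ hβ ht2 hα1) ⟨s, ⟨hcase, hs.2⟩, rfl⟩
      calc t1 * g s ≤ t2 * g s := h1
        _ ≤ t2 * sSup (g '' Set.Ioo t2 1) := mul_le_mul_of_nonneg_left h2 ht2.1.le
        _ = psiFun α β φ t2 := rfl
  -- antitone of ψ(t)/t
  have hanti : AntitoneOn (fun t => psiFun α β φ t / t) (Set.Ioo (0:ℝ) 1) := by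
    intro t1 ht1 t2 ht2 h12
    have e1 : psiFun α β φ t1 / t1 = sSup (g '' Set.Ioo t1 1) := by
      rw [psiFun, mul_div_cancel_left₀ _ ht1.1.ne']
    have e2 : psiFun α β φ t2 / t2 = sSup (g '' Set.Ioo t2 1) := by
      rw [psiFun, mul_div_cancel_left₀ _ ht2.1.ne']
    show psiFun α β φ t2 / t2 ≤ psiFun α β φ t1 / t1
    rw [e1, e2]
    exact csSup_le_csSup (aux_bdd hφ hβ ht1 hα1) ((Set.nonempty_Ioo.mpr ht2.2).image _)
      (Set.image_mono (Set.Ioo_subset_Ioo h12 le_rfl))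
  refine ⟨⟨by simp [psiFun], hpos, ?_, hmono, hanti⟩, hlow, ?_⟩
  · rintro t ⟨ht0, ht1'⟩
    rcases eq_or_lt_of_le ht0 with h | h
    · simp [psiFun, ← h]
    · exact (hpos t ⟨h, ht1'⟩).le
  · -- minimality
    intro η hη hηlow t ht
    have hne : (g '' Set.Ioo t 1).Nonempty := (Set.nonempty_Ioo.mpr ht.2).image _
    rw [psiFun, ← le_div_iff₀' ht.1]
    refine csSup_le hne ?_
    rintro x ⟨s, hs, rfl⟩
    rw [le_div_iff₀' ht.1]
    have hs0 : 0 < s := lt_trans ht.1 hs.1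
    have hsI : s ∈ Set.Ioo (0:ℝ) 1 := ⟨hs0, hs.2⟩
    have h1 : η t / t ≥ η s / s := hη.2.2.2.2 ht hsI hs.1.le
    have h2 : s * g s ≤ η s := by
      have := hηlow s hsI
      calc s * g s = s ^ α * φ (s ^ (1/β)) := by
            rw [show α = α - 1 + 1 by ring, Real.rpow_add_one hs0.ne']; simp [hg]; ring
        _ ≤ η s := this
    have h3 : g s ≤ η s / s := (le_div_iff₀ hs0).mpr (by linarith [h2] <;> ring_nf)
    calc t * g s ≤ t * (η s / s) := mul_le_mul_of_nonneg_left h3 ht.1.le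
      _ ≤ t * (η t / t) := mul_le_mul_of_nonneg_left h1 ht.1.le
      _ = η t := by rw [mul_comm, div_mul_cancel₀ _ ht.1.ne']
end
end

section
/- Let 0<α<1, β>0 with α+1/β≥1, and let W be a Young function. Then there exist constants c₁,c₂>0 such that for every a∈(0,2^{−1/β}): c₁ · a · ‖t^{α−1} χ_{(a^β,1)}(t)‖_{L^W(0,1)} ≤ ‖ t^{α−1} ∫_0^{t^{1/β}} χ_{(0,a)}(s) ds ‖_{L^W(0,1)} ≤ c₂ · a · ‖t^{α−1} χ_{(a^β,1)}(t)‖_{L^W(0,1)}, where the middle quantity is the Luxemburg norm of the function t ↦ t^{α−1}·min{t^{1/β}, a}. -/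
open MeasureTheory Filter Set Real Topology
open scoped ENNReal

noncomputable section

/-- Translation estimate for set lintegrals. -/
private lemma lint_shift (c : ℝ) (H : ℝ → ℝ≥0∞) :
    ∫⁻ t in Set.Ioo 0 c, H (t + c) ≤ ∫⁻ s in Set.Ioo c (2*c), H s := by
  have hmeas : Measurable fun x : ℝ => x + (-c) := measurable_add_const _
  have hpre : (fun x : ℝ => x + (-c)) ⁻¹' Set.Ioo 0 c = Set.Ioo c (2*c) := by
    ext x
    simp only [Set.mem_preimage, Set.mem_Ioo]
    constructor <;> rintro ⟨h1, h2⟩ <;> constructor <;> linarith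
  have hmap : Measure.map (fun x : ℝ => x + (-c)) (volume.restrict (Set.Ioo c (2*c)))
      = volume.restrict (Set.Ioo 0 c) := by
    rw [← hpre, ← Measure.restrict_map hmeas measurableSet_Ioo,
      map_add_right_eq_self volume (-c)]
  calc ∫⁻ t in Set.Ioo 0 c, H (t + c)
      = ∫⁻ t, H (t + c)
        ∂(Measure.map (fun x : ℝ => x + (-c)) (volume.restrict (Set.Ioo c (2*c)))) := by
        rw [hmap]
    _ ≤ ∫⁻ x, H ((x + (-c)) + c) ∂(volume.restrict (Set.Ioo c (2*c))) :=
        lintegral_map_le _ (fun x : ℝ => x + (-c))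
    _ = ∫⁻ x in Set.Ioo c (2*c), H x := by simp

/-- Basic facts about a Young function. -/
private lemma young_facts {W w : ℝ → ℝ} (h : IsYoungWith W w) :
    W 0 = 0 ∧ (∀ x y, 0 ≤ x → x ≤ y → W x ≤ W y) ∧
    (∀ x, 0 ≤ x → W (x / 2) ≤ W x / 2) := by
  obtain ⟨hw0, hwpos, hwmono, -, -, hWint⟩ := h
  have hwnn : ∀ s, 0 ≤ s → 0 ≤ w s := by
    intro s hs
    rcases eq_or_lt_of_le hs with h | h
    · simp [← h, hw0]
    · exact (hwpos s h).le
  have hint : ∀ x y : ℝ, 0 ≤ x → x ≤ y → IntervalIntegrable w volume x y := by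
    intro x y hx hxy
    apply (hwmono.mono ?_).intervalIntegrable
    rw [Set.uIcc_of_le hxy]
    exact fun z hz => Set.mem_Ici.2 (le_trans hx hz.1)
  have hW0 : W 0 = 0 := by simpa using hWint 0 le_rfl
  have hmono : ∀ x y, 0 ≤ x → x ≤ y → W x ≤ W y := by
    intro x y hx hxy
    rw [hWint x hx, hWint y (hx.trans hxy),
      ← intervalIntegral.integral_add_adjacent_intervals (hint 0 x le_rfl hx)
        (hint x y hx hxy)]
    have h2 : 0 ≤ ∫ s in x..y, w s :=
      intervalIntegral.integral_nonneg hxy (fun u hu => hwnn u (hx.trans hu.1))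
    linarith
  refine ⟨hW0, hmono, ?_⟩
  intro x hx
  have hx2 : (0:ℝ) ≤ x/2 := by linarith
  have hx2' : x/2 ≤ x := by linarith
  have h1 := intervalIntegral.integral_comp_add_right (a := (0:ℝ)) (b := x/2) (f := w) (x/2)
  rw [zero_add, add_halves] at h1
  have hi2 := (hint (x/2) x hx2 hx2').comp_add_right (x/2)
  rw [sub_self, sub_half] at hi2
  have key : (∫ s in (0:ℝ)..(x/2), w s) ≤ ∫ s in (x/2)..x, w s := by
    rw [← h1]
    refine intervalIntegral.integral_mono_on hx2 (hint 0 (x/2) le_rfl hx2) hi2 ?_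
    intro u hu
    exact hwmono (Set.mem_Ici.2 hu.1) (Set.mem_Ici.2 (by linarith [hu.1])) (by linarith)
  have hsum : W x = (∫ s in (0:ℝ)..(x/2), w s) + ∫ s in (x/2)..x, w s := by
    rw [hWint x hx,
      ← intervalIntegral.integral_add_adjacent_intervals (hint 0 (x/2) le_rfl hx2)
        (hint (x/2) x hx2 hx2')]
  rw [hWint (x/2) hx2]
  linarith

theorem statement10 (α β : ℝ) (hα : 0 < α) (hα1 : α < 1) (hβ : 0 < β)
    (hαβ : 1 ≤ α + 1 / β) (W : ℝ → ℝ) (hW : IsYoung W) :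
    ∃ c₁ c₂ : ℝ, 0 < c₁ ∧ 0 < c₂ ∧
      ∀ a ∈ Set.Ioo (0:ℝ) ((2:ℝ) ^ (-(1/β))),
        c₁ * (a * luxNorm W (Set.Ioo 0 1)
            ((Set.Ioo (a ^ β) 1).indicator fun t => t ^ (α - 1)))
          ≤ luxNorm W (Set.Ioo 0 1)
            (fun t => t ^ (α - 1) *
              ∫ s in Set.Ioo (0:ℝ) (t ^ (1/β)), (Set.Ioo (0:ℝ) a).indicator 1 s) ∧
        luxNorm W (Set.Ioo 0 1)
            (fun t => t ^ (α - 1) *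
              ∫ s in Set.Ioo (0:ℝ) (t ^ (1/β)), (Set.Ioo (0:ℝ) a).indicator 1 s)
          ≤ c₂ * (a * luxNorm W (Set.Ioo 0 1)
            ((Set.Ioo (a ^ β) 1).indicator fun t => t ^ (α - 1))) := by
  obtain ⟨w, hYoung⟩ := hW
  obtain ⟨hW0, hWmono, hWhalf⟩ := young_facts hYoung
  have hWnn : ∀ x, 0 ≤ x → 0 ≤ W x := fun x hx => hW0 ▸ hWmono 0 x le_rfl hx
  set κ : ℝ := (2:ℝ) ^ (1 - α) with hκdef
  have hκpos : 0 < κ := rpow_pos_of_pos (by norm_num) _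
  have hκ1 : 1 ≤ κ := Real.one_le_rpow (by norm_num) (by linarith)
  refine ⟨1, 2*κ, one_pos, by positivity, ?_⟩
  rintro a ⟨ha0, ha2⟩
  set c : ℝ := a ^ β with hcdef
  have hcpos : 0 < c := rpow_pos_of_pos ha0 β
  have hchalf : c < 1/2 := by
    rw [hcdef]
    calc a ^ β < ((2:ℝ) ^ (-(1/β))) ^ β := Real.rpow_lt_rpow ha0.le ha2 hβ
      _ = (2:ℝ) ^ ((-(1/β)) * β) := (Real.rpow_mul (by norm_num) _ _).symm
      _ = (2:ℝ) ^ (-1 : ℝ) := by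
          congr 1
          field_simp
      _ = 1/2 := by
          rw [Real.rpow_neg_one]
          norm_num
  have hc1 : c < 1 := by linarith
  have h2c1 : 2*c < 1 := by linarith
  -- the key pointwise descriptions
  have hroot : (a ^ β) ^ (1/β) = a := by
    rw [← Real.rpow_mul ha0.le, mul_one_div_cancel hβ.ne', Real.rpow_one]
  have hmin_lt : ∀ t, 0 < t → t < c → t ^ (1/β) < a := by
    intro t ht htc
    have := Real.rpow_lt_rpow ht.le htc (by positivity : (0:ℝ) < 1/β)
    rwa [hcdef, hroot] at this
  have hmin_gt : ∀ t, c < t → a < t ^ (1/β) := by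
    intro t htc
    have := Real.rpow_lt_rpow hcpos.le htc (by positivity : (0:ℝ) < 1/β)
    rwa [hcdef, hroot] at this
  set F : ℝ → ℝ := fun t => t ^ (α - 1) * min (t ^ (1/β)) a with hFdef
  set G : ℝ → ℝ := (Set.Ioo c 1).indicator (fun t => t ^ (α - 1)) with hGdef
  set f : ℝ → ℝ := fun t => t ^ (α - 1) *
      ∫ s in Set.Ioo (0:ℝ) (t ^ (1/β)), (Set.Ioo (0:ℝ) a).indicator 1 s with hfdef
  have hfF : ∀ t ∈ Set.Ioo (0:ℝ) 1, f t = F t := by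
    intro t ht
    have htpos : (0:ℝ) < t := ht.1
    have hu : (0:ℝ) < t ^ (1/β) := rpow_pos_of_pos htpos _
    have hι : (∫ s in Set.Ioo (0:ℝ) (t ^ (1/β)), (Set.Ioo (0:ℝ) a).indicator 1 s)
        = min (t ^ (1/β)) a := by
      rw [MeasureTheory.setIntegral_indicator measurableSet_Ioo]
      rw [Set.Ioo_inter_Ioo]
      simp only [max_self, Pi.one_apply]
      rw [MeasureTheory.setIntegral_const]
      rw [Real.volume_real_Ioo_of_le (le_min hu.le ha0.le)]
      simp
    rw [hfdef, hFdef]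
    simp only
    rw [hι]
  have hGnn : ∀ t, 0 ≤ G t := by
    intro t
    rw [hGdef]
    apply Set.indicator_nonneg
    intro x hx
    exact Real.rpow_nonneg (le_of_lt (lt_trans hcpos hx.1)) _
  have hFnn : ∀ t ∈ Set.Ioo (0:ℝ) 1, 0 ≤ F t := by
    intro t ht
    have : (0:ℝ) ≤ t := ht.1.le
    exact mul_nonneg (Real.rpow_nonneg this _)
      (le_min (Real.rpow_nonneg this _) ha0.le)
  -- (i)
  have haG_le : ∀ t ∈ Set.Ioo (0:ℝ) 1, a * G t ≤ F t := by
    intro t ht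
    rcases lt_or_ge c t with h | h
    · have hmem : t ∈ Set.Ioo c 1 := ⟨h, ht.2⟩
      rw [hGdef, Set.indicator_of_mem hmem]
      rw [hFdef]
      simp only
      rw [min_eq_right (hmin_gt t h).le, mul_comm]
    · have hmem : t ∉ Set.Ioo c 1 := fun hmem => absurd hmem.1 (not_lt.2 h)
      rw [hGdef, Set.indicator_of_notMem hmem, mul_zero]
      exact hFnn t ht
  -- (ii)
  have hF_le : ∀ t ∈ Set.Ioo (0:ℝ) c, F t ≤ κ * (a * G (t + c)) := by
    intro t ht
    have htpos : 0 < t := ht.1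
    have htc : t < c := ht.2
    have hmem : t + c ∈ Set.Ioo c 1 := ⟨by linarith, by linarith⟩
    have hGval : G (t + c) = (t + c) ^ (α - 1) := by
      rw [hGdef, Set.indicator_of_mem hmem]
    have hFval : F t = t ^ (α - 1 + 1/β) := by
      rw [hFdef]
      simp only
      rw [min_eq_left (hmin_lt t htpos htc).le, Real.rpow_add htpos]
    have hγ : (0:ℝ) ≤ α - 1 + 1/β := by linarith
    have h1 : t ^ (α - 1 + 1/β) ≤ c ^ (α - 1 + 1/β) :=
      Real.rpow_le_rpow htpos.le htc.le hγ
    have h2 : c ^ (α - 1 + 1/β) = a * c ^ (α - 1) := by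
      rw [hcdef, ← Real.rpow_mul ha0.le]
      have : β * (α - 1 + 1/β) = β * (α - 1) + 1 := by field_simp
      rw [this, Real.rpow_add ha0, Real.rpow_one, Real.rpow_mul ha0.le, mul_comm]
    have h3 : c ^ (α - 1) ≤ κ * (t + c) ^ (α - 1) := by
      have hb : (2*c) ^ (α - 1 : ℝ) ≤ (t + c) ^ (α - 1 : ℝ) :=
        Real.rpow_le_rpow_of_nonpos (by linarith) (by linarith) (by linarith)
      have hb2 : ((2:ℝ)*c) ^ (α - 1 : ℝ) = (2:ℝ) ^ (α - 1 : ℝ) * c ^ (α - 1 : ℝ) :=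
        Real.mul_rpow (by norm_num) hcpos.le
      have hκκ : κ * (2:ℝ) ^ (α - 1 : ℝ) = 1 := by
        rw [hκdef, ← Real.rpow_add (by norm_num : (0:ℝ) < 2)]
        norm_num
      calc c ^ (α - 1 : ℝ) = κ * ((2:ℝ) ^ (α - 1 : ℝ) * c ^ (α - 1 : ℝ)) := by
            rw [← mul_assoc, hκκ, one_mul]
        _ = κ * ((2*c) ^ (α - 1 : ℝ)) := by rw [hb2]
        _ ≤ κ * (t + c) ^ (α - 1 : ℝ) := by
            exact mul_le_mul_of_nonneg_left hb hκpos.le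
    calc F t = t ^ (α - 1 + 1/β) := hFval
      _ ≤ c ^ (α - 1 + 1/β) := h1
      _ = a * c ^ (α - 1) := h2
      _ ≤ a * (κ * (t + c) ^ (α - 1)) := mul_le_mul_of_nonneg_left h3 ha0.le
      _ = κ * (a * G (t + c)) := by rw [hGval]; ring
  -- the sets defining the Luxemburg norms
  set Pf : Set ℝ := {lam | 0 < lam ∧
      (∫⁻ t in Set.Ioo (0:ℝ) 1, ENNReal.ofReal (W (|F t| / lam))) ≤ 1} with hPfdef
  set Pg : Set ℝ := {lam | 0 < lam ∧
      (∫⁻ t in Set.Ioo (0:ℝ) 1, ENNReal.ofReal (W (|G t| / lam))) ≤ 1} with hPgdef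
  have hbddf : BddBelow Pf := ⟨0, fun x hx => hx.1.le⟩
  have hbddg : BddBelow Pg := ⟨0, fun x hx => hx.1.le⟩
  have hNf : luxNorm W (Set.Ioo 0 1) f = sInf Pf := by
    unfold luxNorm
    congr 1
    ext lam
    refine and_congr_right fun _ => ?_
    have : (∫⁻ t in Set.Ioo (0:ℝ) 1, ENNReal.ofReal (W (|f t| / lam)))
        = ∫⁻ t in Set.Ioo (0:ℝ) 1, ENNReal.ofReal (W (|F t| / lam)) := by
      refine setLIntegral_congr_fun measurableSet_Ioo (fun t ht => ?_)
      rw [hfF t ht]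
    rw [this]
  have hNg : luxNorm W (Set.Ioo 0 1) G = sInf Pg := rfl
  -- lower bound ingredient
  have hfg : ∀ lam ∈ Pf, lam / a ∈ Pg := by
    rintro lam ⟨hlam, hIf⟩
    refine ⟨div_pos hlam ha0, le_trans ?_ hIf⟩
    apply lintegral_mono_ae
    rw [ae_restrict_iff' measurableSet_Ioo]
    refine ae_of_all _ fun t ht => ?_
    apply ENNReal.ofReal_le_ofReal
    have h1 : |G t| / (lam / a) = (a * G t) / lam := by
      rw [abs_of_nonneg (hGnn t), div_div_eq_mul_div, mul_comm]
    rw [h1, abs_of_nonneg (hFnn t ht)]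
    apply hWmono
    · exact div_nonneg (mul_nonneg ha0.le (hGnn t)) hlam.le
    · gcongr
      exact haG_le t ht
  -- upper bound ingredient
  have hgf : ∀ mu ∈ Pg, 2 * κ * a * mu ∈ Pf := by
    rintro mu ⟨hmu, hIg⟩
    set lam : ℝ := 2 * κ * a * mu with hlamdef
    have hlam : 0 < lam := by positivity
    refine ⟨hlam, ?_⟩
    set J : ℝ → ℝ≥0∞ := fun s => ENNReal.ofReal (W (κ * (a * G s) / lam)) with hJdef
    have hJval : ∀ s, J s = ENNReal.ofReal (W (G s / mu / 2)) := by
      intro s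
      have harg : κ * (a * G s) / lam = G s / mu / 2 := by
        rw [hlamdef]
        field_simp [hκpos.ne', ha0.ne', hmu.ne']
      simp only [hJdef]
      rw [harg]
    have hJbound : ∀ s, J s ≤ ENNReal.ofReal (1/2) * ENNReal.ofReal (W (G s / mu)) := by
      intro s
      rw [hJval s, ← ENNReal.ofReal_mul (by norm_num : (0:ℝ) ≤ 1/2)]
      apply ENNReal.ofReal_le_ofReal
      have := hWhalf (G s / mu) (div_nonneg (hGnn s) hmu.le)
      linarith
    have hJint : (∫⁻ s in Set.Ioo c 1, J s) ≤ ENNReal.ofReal (1/2) := by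
      calc (∫⁻ s in Set.Ioo c 1, J s)
          ≤ ∫⁻ s in Set.Ioo c 1, ENNReal.ofReal (1/2) * ENNReal.ofReal (W (G s / mu)) :=
            lintegral_mono fun s => hJbound s
        _ = ENNReal.ofReal (1/2) * ∫⁻ s in Set.Ioo c 1, ENNReal.ofReal (W (G s / mu)) :=
            lintegral_const_mul' _ _ ENNReal.ofReal_ne_top
        _ ≤ ENNReal.ofReal (1/2) * ∫⁻ s in Set.Ioo (0:ℝ) 1, ENNReal.ofReal (W (G s / mu)) := by
            gcongr
        _ ≤ ENNReal.ofReal (1/2) * 1 := by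
            gcongr
            calc (∫⁻ s in Set.Ioo (0:ℝ) 1, ENNReal.ofReal (W (G s / mu)))
                = ∫⁻ s in Set.Ioo (0:ℝ) 1, ENNReal.ofReal (W (|G s| / mu)) := by
                  apply lintegral_congr fun s => ?_
                  rw [abs_of_nonneg (hGnn s)]
              _ ≤ 1 := hIg
        _ = ENNReal.ofReal (1/2) := mul_one _
    -- split the integral
    have hsplit : Set.Ioo (0:ℝ) 1 = Set.Ioo 0 c ∪ Set.Ico c 1 := by
      ext x
      simp only [Set.mem_Ioo, Set.mem_union, Set.mem_Ico]
      constructor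
      · rintro ⟨h1, h2⟩
        rcases lt_or_ge x c with h | h
        · exact Or.inl ⟨h1, h⟩
        · exact Or.inr ⟨h, h2⟩
      · rintro (⟨h1, h2⟩ | ⟨h1, h2⟩)
        · exact ⟨h1, h2.trans hc1⟩
        · exact ⟨lt_of_lt_of_le hcpos h1, h2⟩
    have hdisj : Disjoint (Set.Ioo (0:ℝ) c) (Set.Ico c 1) :=
      Set.disjoint_left.mpr fun x hx hx' => absurd hx.2 (not_lt.2 hx'.1)
    have hterm2 : (∫⁻ t in Set.Ico c 1, ENNReal.ofReal (W (|F t| / lam)))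
        ≤ ∫⁻ s in Set.Ioo c 1, J s := by
      rw [← setLIntegral_congr (Ioo_ae_eq_Ico (μ := volume) (a := c) (b := 1))]
      apply lintegral_mono_ae
      rw [ae_restrict_iff' measurableSet_Ioo]
      refine ae_of_all _ fun t ht => ?_
      have ht01 : t ∈ Set.Ioo (0:ℝ) 1 := ⟨lt_trans hcpos ht.1, ht.2⟩
      rw [hJdef]
      apply ENNReal.ofReal_le_ofReal
      rw [abs_of_nonneg (hFnn t ht01)]
      apply hWmono
      · exact div_nonneg (hFnn t ht01) hlam.le
      · gcongr
        calc F t = 1 * (a * G t) := by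
              rw [hGdef, Set.indicator_of_mem ht, hFdef]
              simp only
              rw [min_eq_right (hmin_gt t ht.1).le]
              ring
          _ ≤ κ * (a * G t) :=
              mul_le_mul_of_nonneg_right hκ1 (mul_nonneg ha0.le (hGnn t))
    have hterm1 : (∫⁻ t in Set.Ioo (0:ℝ) c, ENNReal.ofReal (W (|F t| / lam)))
        ≤ ∫⁻ s in Set.Ioo c 1, J s := by
      calc (∫⁻ t in Set.Ioo (0:ℝ) c, ENNReal.ofReal (W (|F t| / lam)))
          ≤ ∫⁻ t in Set.Ioo (0:ℝ) c, J (t + c) := by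
            apply lintegral_mono_ae
            rw [ae_restrict_iff' measurableSet_Ioo]
            refine ae_of_all _ fun t ht => ?_
            have ht01 : t ∈ Set.Ioo (0:ℝ) 1 := ⟨ht.1, lt_trans ht.2 hc1⟩
            rw [hJdef]
            apply ENNReal.ofReal_le_ofReal
            rw [abs_of_nonneg (hFnn t ht01)]
            apply hWmono
            · exact div_nonneg (hFnn t ht01) hlam.le
            · gcongr
              exact hF_le t ht
        _ ≤ ∫⁻ s in Set.Ioo c (2*c), J s := lint_shift c J
        _ ≤ ∫⁻ s in Set.Ioo c 1, J s :=
            lintegral_mono_set (Set.Ioo_subset_Ioo_right h2c1.le)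
    calc (∫⁻ t in Set.Ioo (0:ℝ) 1, ENNReal.ofReal (W (|F t| / lam)))
        = (∫⁻ t in Set.Ioo (0:ℝ) c, ENNReal.ofReal (W (|F t| / lam)))
          + ∫⁻ t in Set.Ico c 1, ENNReal.ofReal (W (|F t| / lam)) := by
          rw [hsplit, lintegral_union measurableSet_Ico hdisj]
      _ ≤ (∫⁻ s in Set.Ioo c 1, J s) + ∫⁻ s in Set.Ioo c 1, J s := add_le_add hterm1 hterm2
      _ ≤ ENNReal.ofReal (1/2) + ENNReal.ofReal (1/2) := add_le_add hJint hJint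
      _ = 1 := by
          rw [← ENNReal.ofReal_add (by norm_num) (by norm_num)]
          norm_num
  -- assemble
  rw [hNf, hNg]
  have hsInfg_nonneg : 0 ≤ sInf Pg := by
    rcases Set.eq_empty_or_nonempty Pg with h | h
    · rw [h, Real.sInf_empty]
    · exact le_csInf h fun x hx => hx.1.le
  constructor
  · -- lower bound, c₁ = 1
    rw [one_mul]
    rcases Set.eq_empty_or_nonempty Pf with h | h
    · have hge : Pg = ∅ := by
        by_contra hne
        obtain ⟨mu, hmu⟩ := Set.nonempty_iff_ne_empty.2 hne
        exact absurd (hgf mu hmu) (by rw [h]; exact Set.notMem_empty _)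
      rw [h, hge, Real.sInf_empty, mul_zero]
    · refine le_csInf h fun lam hlam => ?_
      have h1 : sInf Pg ≤ lam / a := csInf_le hbddg (hfg lam hlam)
      calc a * sInf Pg ≤ a * (lam / a) := mul_le_mul_of_nonneg_left h1 ha0.le
        _ = lam := by field_simp
  · -- upper bound, c₂ = 2κ
    rcases Set.eq_empty_or_nonempty Pg with h | h
    · have hfe : Pf = ∅ := by
        by_contra hne
        obtain ⟨lam, hlam⟩ := Set.nonempty_iff_ne_empty.2 hne
        exact absurd (hfg lam hlam) (by rw [h]; exact Set.notMem_empty _)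
      rw [h, hfe, Real.sInf_empty, mul_zero, mul_zero]
    · have hC : (0:ℝ) < 2 * κ * a := by positivity
      have h1 : sInf Pf / (2 * κ * a) ≤ sInf Pg := by
        refine le_csInf h fun mu hmu => ?_
        rw [div_le_iff₀ hC]
        calc sInf Pf ≤ 2 * κ * a * mu := csInf_le hbddf (hgf mu hmu)
          _ = mu * (2 * κ * a) := by ring
      rw [div_le_iff₀ hC] at h1
      calc sInf Pf ≤ sInf Pg * (2 * κ * a) := h1
        _ = 2 * κ * (a * sInf Pg) := by ring
end
end

section
/- Suppose f and g are real-valued functions that are differentiable (with finite derivatives) on some interval (a,∞), that g'(x)>0 on (a,∞), and that g(x)→∞ as x→∞. Then liminf_{x→∞} f'(x)/g'(x) ≤ liminf_{x→∞} f(x)/g(x) (an inequality in the extended real numbers). -/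
open Filter Topology

/-- A one-sided L'Hôpital-type inequality for lower limits (in the extended reals):
if `f` and `g` are differentiable on a neighborhood `(a,∞)` of infinity, `g' > 0` there and
`g → ∞`, then `liminf f'/g' ≤ liminf f/g`. -/
theorem statement14 (f g f' g' : ℝ → ℝ) (a : ℝ)
    (hf : ∀ x ∈ Set.Ioi a, HasDerivAt f (f' x) x)
    (hg : ∀ x ∈ Set.Ioi a, HasDerivAt g (g' x) x)
    (hg' : ∀ x ∈ Set.Ioi a, 0 < g' x)
    (hgtop : Filter.Tendsto g Filter.atTop Filter.atTop) :
    Filter.liminf (fun x => ((f' x / g' x : ℝ) : EReal)) Filter.atTop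
      ≤ Filter.liminf (fun x => ((f x / g x : ℝ) : EReal)) Filter.atTop := by
  have key : ∀ m : ℝ, (m : EReal) < Filter.liminf (fun x => ((f' x / g' x : ℝ) : EReal)) Filter.atTop →
      (m : EReal) ≤ Filter.liminf (fun x => ((f x / g x : ℝ) : EReal)) Filter.atTop := by
    intro m hm
    have hev : ∀ᶠ x in atTop, (m : EReal) < ((f' x / g' x : ℝ) : EReal) :=
      Filter.eventually_lt_of_lt_liminf hm
    have hev' : ∀ᶠ x in atTop, m < f' x / g' x := by
      filter_upwards [hev] with x hx using by exact_mod_cast hx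
    obtain ⟨b, hb⟩ := (hev'.and (eventually_gt_atTop a)).exists_forall_of_atTop
    set c := b + 1 with hc
    have hbc : b < c := by simp [hc]
    -- h = f - m • g is monotone on Ici c
    set h : ℝ → ℝ := fun x => f x - m * g x with hh
    have hd : ∀ x ∈ Set.Ioi a, HasDerivAt h (f' x - m * g' x) x := fun x hx =>
      (hf x hx).sub ((hg x hx).const_mul m)
    have hmono : MonotoneOn h (Set.Ici c) := by
      apply monotoneOn_of_deriv_nonneg (convex_Ici c)
      · intro x hx
        have hxa : x ∈ Set.Ioi a := (hb x (le_of_lt (lt_of_lt_of_le hbc hx))).2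
        exact (hd x hxa).continuousAt.continuousWithinAt
      · intro x hx
        rw [interior_Ici] at hx
        have hxa : x ∈ Set.Ioi a := (hb x (le_of_lt (lt_trans hbc hx))).2
        exact (hd x hxa).differentiableAt.differentiableWithinAt
      · intro x hx
        rw [interior_Ici] at hx
        have hxb : b ≤ x := le_of_lt (lt_trans hbc hx)
        have hxa : x ∈ Set.Ioi a := (hb x hxb).2
        rw [(hd x hxa).deriv]
        have h1 : m < f' x / g' x := (hb x hxb).1
        have h2 : 0 < g' x := hg' x hxa
        have := (lt_div_iff₀ h2).mp h1
        linarith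
    -- eventually f x / g x ≥ m + h c / g x
    have hge : ∀ᶠ x in atTop, m + h c / g x ≤ f x / g x := by
      filter_upwards [eventually_ge_atTop c, hgtop.eventually_gt_atTop 0] with x hx hgx
      have hhx : h c ≤ h x := hmono (le_refl c) hx hx
      have : m * g x + h c ≤ f x := by simp only [hh] at hhx ⊢; linarith
      calc m + h c / g x = (m * g x + h c) / g x := by
            field_simp
        _ ≤ f x / g x := by gcongr
    have hlim : Filter.Tendsto (fun x => ((m + h c / g x : ℝ) : EReal)) atTop (nhds (m : EReal)) := by
      have : Filter.Tendsto (fun x => m + h c / g x) atTop (nhds m) := by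
        have := Filter.Tendsto.div_atTop (tendsto_const_nhds (x := h c)) hgtop
        simpa using this.const_add m
      exact (continuous_coe_real_ereal.tendsto m).comp this
    calc (m : EReal) = Filter.liminf (fun x => ((m + h c / g x : ℝ) : EReal)) atTop :=
          (hlim.liminf_eq).symm
      _ ≤ Filter.liminf (fun x => ((f x / g x : ℝ) : EReal)) atTop := by
          exact Filter.liminf_le_liminf
            (by filter_upwards [hge] with x hx using by exact_mod_cast hx)
  refine le_of_forall_lt fun d hd => ?_
  obtain ⟨m, hdm, hml⟩ := EReal.exists_between_coe_real hd
  exact lt_of_lt_of_le hdm (key m hml)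
end
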